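/- arXiv:math/0509070 — 6 statements merged into one kernel-verified Lean document; each statement's English description precedes it below -/
import Mathlib

section
/- Let a, b > 0, let ϑ₂ : [0,a] → [0,b] be continuous and non-increasing, and let G := {(s,t) : 0 ≤ s ≤ a, 0 ≤ t ≤ ϑ₂(s)}. Let f : G × ℝⁿ × ℝⁿ × ℝⁿ → ℝⁿ be continuous and satisfy |f(σ,τ,x₁,p₁,q₁) − f(σ,τ,x₂,p₂,q₂)| ≤ L(|x₁−x₂| + |p₁−p₂| + |q₁−q₂|) for all arguments, where |·| is the Euclidean norm. Let x₁ ∈ C¹([0,a];ℝⁿ) and x₂ ∈ C¹([0,b];ℝⁿ) satisfy x₁(0) = x₂(0) =: x₀. Then there exists a unique continuous function x : G → ℝⁿ possessing continuous first partial derivatives x_s, x_t on G such that x(s,t) = x₁(s) + x₂(t) − x₀ + ∫₀ˢ ∫₀ᵗ f(σ,τ, x(σ,τ), x_σ(σ,τ), x_τ(σ,τ)) dτ dσ for all (s,t) ∈ G. -/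
open MeasureTheory Set intervalIntegral

section GDHelpers
variable {E : Type*} [NormedAddCommGroup E] [NormedSpace ℝ E] [CompleteSpace E]

/-- clamp to `[0,a]` -/
noncomputable def gdClamp (a s : ℝ) : ℝ := max 0 (min s a)

lemma gdClamp_mem {a : ℝ} (ha : 0 ≤ a) (s : ℝ) : gdClamp a s ∈ Icc 0 a :=
  ⟨le_max_left _ _, max_le ha (min_le_right _ _)⟩

lemma gdClamp_eq {a s : ℝ} (hs : s ∈ Icc 0 a) : gdClamp a s = s := by
  simp only [gdClamp, min_eq_left hs.2, max_eq_right hs.1]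

lemma gdClamp_continuous (a : ℝ) : Continuous (gdClamp a) :=
  continuous_const.max (continuous_id.min continuous_const)

lemma gd_cont_inner (g : ℝ × ℝ → E) (hg : Continuous g) (c : ℝ) :
    Continuous fun σ : ℝ => ∫ τ in (0:ℝ)..c, g (σ, τ) := by
  apply intervalIntegral.continuous_parametric_intervalIntegral_of_continuous (μ := volume)
    (f := fun (σ : ℝ) τ => g (σ, τ)) ?_ continuous_const
  exact hg.comp (continuous_fst.prodMk continuous_snd)

lemma gd_cont_I2 (g : ℝ × ℝ → E) (hg : Continuous g) (e₁ e₂ : ℝ × ℝ → ℝ)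
    (h₁ : Continuous e₁) (h₂ : Continuous e₂) :
    Continuous fun p : ℝ × ℝ => ∫ τ in (0:ℝ)..(e₂ p), g (e₁ p, τ) := by
  apply intervalIntegral.continuous_parametric_intervalIntegral_of_continuous (μ := volume)
    (f := fun (p : ℝ × ℝ) τ => g (e₁ p, τ)) ?_ h₂
  exact hg.comp ((h₁.comp continuous_fst).prodMk continuous_snd)

lemma gd_cont_I1 (g : ℝ × ℝ → E) (hg : Continuous g) (e₁ e₂ : ℝ × ℝ → ℝ)
    (h₁ : Continuous e₁) (h₂ : Continuous e₂) :
    Continuous fun p : ℝ × ℝ => ∫ σ in (0:ℝ)..(e₁ p), g (σ, e₂ p) := by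
  apply intervalIntegral.continuous_parametric_intervalIntegral_of_continuous (μ := volume)
    (f := fun (p : ℝ × ℝ) σ => g (σ, e₂ p)) ?_ h₁
  exact hg.comp (continuous_snd.prodMk (h₂.comp continuous_fst))

lemma gd_cont_J (g : ℝ × ℝ → E) (hg : Continuous g) (e₁ e₂ : ℝ × ℝ → ℝ)
    (h₁ : Continuous e₁) (h₂ : Continuous e₂) :
    Continuous fun p : ℝ × ℝ => ∫ σ in (0:ℝ)..(e₁ p), ∫ τ in (0:ℝ)..(e₂ p), g (σ, τ) := by
  apply intervalIntegral.continuous_parametric_intervalIntegral_of_continuous (μ := volume)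
    (f := fun (p : ℝ × ℝ) σ => ∫ τ in (0:ℝ)..(e₂ p), g (σ, τ)) ?_ h₁
  apply intervalIntegral.continuous_parametric_intervalIntegral_of_continuous (μ := volume)
    (f := fun (q : (ℝ × ℝ) × ℝ) τ => g (q.2, τ)) ?_ ?_
  · exact hg.comp (continuous_fst.snd.prodMk continuous_snd)
  · exact h₂.comp continuous_fst

lemma gd_ftc (g : ℝ → E) (hg : Continuous g) (x : ℝ) :
    HasDerivAt (fun s => ∫ σ in (0:ℝ)..s, g σ) (g x) x :=
  intervalIntegral.integral_hasDerivAt_right (hg.intervalIntegrable 0 x)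
    (hg.stronglyMeasurableAtFilter _ _) hg.continuousAt

lemma gd_exp_int {lam t : ℝ} (hlam : 0 < lam) :
    ∫ τ in (0:ℝ)..t, Real.exp (lam * τ) = (Real.exp (lam * t) - 1) / lam := by
  rw [intervalIntegral.integral_comp_mul_left (fun x => Real.exp x) (ne_of_gt hlam)]
  rw [integral_exp]; rw [mul_zero, Real.exp_zero, smul_eq_mul]; field_simp

lemma gd_key_bound {g : ℝ → E} (hg : Continuous g) {C lam t : ℝ} (ht : 0 ≤ t) (hC : 0 ≤ C)
    (hlam : 0 < lam) (hb : ∀ τ ∈ Icc 0 t, ‖g τ‖ ≤ C * Real.exp (lam * τ)) :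
    ‖∫ τ in (0:ℝ)..t, g τ‖ ≤ C * Real.exp (lam * t) / lam := by
  have hInt : IntervalIntegrable (fun τ => C * Real.exp (lam * τ)) volume 0 t :=
    (continuous_const.mul (Real.continuous_exp.comp (continuous_const.mul
        continuous_id))).intervalIntegrable _ _
  have hnn : (0:ℝ) ≤ ∫ τ in (0:ℝ)..t, C * Real.exp (lam * τ) := by
    apply intervalIntegral.integral_nonneg ht
    intro τ _; positivity
  have h1 : ‖∫ τ in (0:ℝ)..t, g τ‖ ≤ ∫ τ in (0:ℝ)..t, C * Real.exp (lam * τ) := by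
    have := intervalIntegral.norm_integral_le_abs_of_norm_le (μ := volume) (f := g)
      (g := fun τ => C * Real.exp (lam * τ)) (a := 0) (b := t) ?_ hInt
    · rwa [abs_of_nonneg hnn] at this
    · filter_upwards [ae_restrict_mem measurableSet_uIoc] with τ hτ
      rw [uIoc_of_le ht] at hτ
      exact hb τ ⟨hτ.1.le, hτ.2⟩
  rw [intervalIntegral.integral_const_mul, gd_exp_int hlam] at h1
  refine h1.trans ?_
  rw [mul_div_assoc]
  gcongr
  linarith

lemma gd_swap (g : ℝ × ℝ → E) (hg : Continuous g) {s t : ℝ} (hs : 0 ≤ s) (ht : 0 ≤ t) :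
    ∫ σ in (0:ℝ)..s, ∫ τ in (0:ℝ)..t, g (σ, τ)
      = ∫ τ in (0:ℝ)..t, ∫ σ in (0:ℝ)..s, g (σ, τ) := by
  rw [intervalIntegral.integral_of_le hs, intervalIntegral.integral_of_le ht]
  simp_rw [intervalIntegral.integral_of_le hs, intervalIntegral.integral_of_le ht]
  apply MeasureTheory.integral_integral_swap
  rw [Measure.prod_restrict]
  have : IntegrableOn (Function.uncurry fun σ τ => g (σ, τ)) (Ioc 0 s ×ˢ Ioc 0 t)
      (volume.prod volume) := by
    have h2 : IntegrableOn (Function.uncurry fun σ τ => g (σ, τ)) (Icc 0 s ×ˢ Icc 0 t)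
        (volume.prod volume) := by
      rw [← Measure.volume_eq_prod]
      apply ContinuousOn.integrableOn_compact (isCompact_Icc.prod isCompact_Icc)
      exact (hg.comp (by exact continuous_id)).continuousOn
    exact h2.mono_set (prod_mono Ioc_subset_Icc_self Ioc_subset_Icc_self)
  exact this

end GDHelpers


section GDExists
variable {E : Type*} [NormedAddCommGroup E] [NormedSpace ℝ E] [CompleteSpace E]

noncomputable def gdJ (a b : ℝ) (g : ℝ × ℝ → E) (p : ℝ × ℝ) : E :=
  ∫ σ in (0:ℝ)..(gdClamp a p.1), ∫ τ in (0:ℝ)..(gdClamp b p.2), g (σ, τ)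

noncomputable def gdI2 (b : ℝ) (g : ℝ × ℝ → E) (p : ℝ × ℝ) : E :=
  ∫ τ in (0:ℝ)..(gdClamp b p.2), g (p.1, τ)

noncomputable def gdI1 (a : ℝ) (g : ℝ × ℝ → E) (p : ℝ × ℝ) : E :=
  ∫ σ in (0:ℝ)..(gdClamp a p.1), g (σ, p.2)

lemma gd_norm_le_const {g : ℝ → E} {M c cmax : ℝ} (hM : 0 ≤ M) (hc : c ∈ Icc 0 cmax)
    (hb : ∀ τ, ‖g τ‖ ≤ M) : ‖∫ τ in (0:ℝ)..c, g τ‖ ≤ M * cmax := by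
  calc ‖∫ τ in (0:ℝ)..c, g τ‖ ≤ M * |c - 0| :=
        intervalIntegral.norm_integral_le_of_norm_le_const fun x _ => hb x
    _ ≤ M * cmax := by
        rw [sub_zero, abs_of_nonneg hc.1]; exact mul_le_mul_of_nonneg_left hc.2 hM

lemma gdJ_sub (a b : ℝ) (g₁ g₂ : ℝ × ℝ → E) (h₁ : Continuous g₁) (h₂ : Continuous g₂)
    (p : ℝ × ℝ) : gdJ a b g₁ p - gdJ a b g₂ p = gdJ a b (g₁ - g₂) p := by
  simp only [gdJ]
  have h1 : Continuous fun σ : ℝ => ∫ τ in (0:ℝ)..(gdClamp b p.2), g₁ (σ, τ) :=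
    gd_cont_inner g₁ h₁ _
  have h2 : Continuous fun σ : ℝ => ∫ τ in (0:ℝ)..(gdClamp b p.2), g₂ (σ, τ) :=
    gd_cont_inner g₂ h₂ _
  rw [show (∫ σ in (0:ℝ)..(gdClamp a p.1), ∫ τ in (0:ℝ)..(gdClamp b p.2), g₁ (σ, τ)) -
      (∫ σ in (0:ℝ)..(gdClamp a p.1), ∫ τ in (0:ℝ)..(gdClamp b p.2), g₂ (σ, τ))
      = ∫ σ in (0:ℝ)..(gdClamp a p.1), ((∫ τ in (0:ℝ)..(gdClamp b p.2), g₁ (σ, τ)) -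
        (∫ τ in (0:ℝ)..(gdClamp b p.2), g₂ (σ, τ)))
    from (intervalIntegral.integral_sub (h1.intervalIntegrable _ _)
      (h2.intervalIntegrable _ _)).symm]
  apply intervalIntegral.integral_congr
  intro σ _
  have hc1 : Continuous fun τ : ℝ => g₁ (σ, τ) := h₁.comp (continuous_const.prodMk continuous_id)
  have hc2 : Continuous fun τ : ℝ => g₂ (σ, τ) := h₂.comp (continuous_const.prodMk continuous_id)
  simp only [Pi.sub_apply]
  exact (intervalIntegral.integral_sub (hc1.intervalIntegrable _ _)
    (hc2.intervalIntegrable _ _)).symm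

lemma gdI2_sub (b : ℝ) (g₁ g₂ : ℝ × ℝ → E) (h₁ : Continuous g₁) (h₂ : Continuous g₂)
    (p : ℝ × ℝ) : gdI2 b g₁ p - gdI2 b g₂ p = gdI2 b (g₁ - g₂) p := by
  simp only [gdI2]
  have hc1 : Continuous fun τ : ℝ => g₁ (p.1, τ) := h₁.comp (continuous_const.prodMk continuous_id)
  have hc2 : Continuous fun τ : ℝ => g₂ (p.1, τ) := h₂.comp (continuous_const.prodMk continuous_id)
  simp only [Pi.sub_apply]
  exact (intervalIntegral.integral_sub (hc1.intervalIntegrable _ _)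
    (hc2.intervalIntegrable _ _)).symm

lemma gdI1_sub (a : ℝ) (g₁ g₂ : ℝ × ℝ → E) (h₁ : Continuous g₁) (h₂ : Continuous g₂)
    (p : ℝ × ℝ) : gdI1 a g₁ p - gdI1 a g₂ p = gdI1 a (g₁ - g₂) p := by
  simp only [gdI1]
  have hc1 : Continuous fun σ : ℝ => g₁ (σ, p.2) := h₁.comp (continuous_id.prodMk continuous_const)
  have hc2 : Continuous fun σ : ℝ => g₂ (σ, p.2) := h₂.comp (continuous_id.prodMk continuous_const)
  simp only [Pi.sub_apply]
  exact (intervalIntegral.integral_sub (hc1.intervalIntegrable _ _)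
    (hc2.intervalIntegrable _ _)).symm

lemma gd_arith {L' lam : ℝ} (hL' : 0 < L') (hlam1 : 1 ≤ lam) (hlam6 : 6 * L' ≤ lam) :
    L' * (1 / (lam * lam) + 2 / lam) ≤ 2⁻¹ := by
  have hlampos : 0 < lam := lt_of_lt_of_le one_pos hlam1
  have hpos : 0 < lam * lam := mul_pos hlampos hlampos
  have h2 : L' * (1 / (lam * lam) + 2 / lam) * (lam * lam) = L' * (1 + 2 * lam) := by
    field_simp
  have h3 : L' * (1 / (lam * lam) + 2 / lam) * (lam * lam) ≤ 2⁻¹ * (lam * lam) := by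
    rw [h2]; nlinarith
  exact le_of_mul_le_mul_right h3 hpos

lemma gd_heq {epv L' lam D : ℝ} (he : 0 < epv) (hlam : 0 < lam) :
    (epv)⁻¹ * (L' * (D * epv / lam / lam + D * epv / lam + D * epv / lam))
      = L' * (1 / (lam * lam) + 2 / lam) * D := by
  field_simp
  ring

set_option maxHeartbeats 1000000 in
lemma gd_single_sub (g h : ℝ → E) (hg : Continuous g) (hh : Continuous h) (c : ℝ) :
    (∫ τ in (0:ℝ)..c, g τ) - (∫ τ in (0:ℝ)..c, h τ) = ∫ τ in (0:ℝ)..c, (g τ - h τ) :=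
  (intervalIntegral.integral_sub (hg.intervalIntegrable _ _) (hh.intervalIntegrable _ _)).symm

lemma gd_double_sub (W V : ℝ × ℝ → E) (hW : Continuous W) (hV : Continuous V) (s t : ℝ) :
    (∫ σ in (0:ℝ)..s, ∫ τ in (0:ℝ)..t, W (σ, τ)) -
      (∫ σ in (0:ℝ)..s, ∫ τ in (0:ℝ)..t, V (σ, τ))
      = ∫ σ in (0:ℝ)..s, ∫ τ in (0:ℝ)..t, (W (σ, τ) - V (σ, τ)) := by
  have h1 : Continuous fun σ : ℝ => ∫ τ in (0:ℝ)..t, W (σ, τ) := gd_cont_inner W hW _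
  have h2 : Continuous fun σ : ℝ => ∫ τ in (0:ℝ)..t, V (σ, τ) := gd_cont_inner V hV _
  rw [show (∫ σ in (0:ℝ)..s, ∫ τ in (0:ℝ)..t, W (σ, τ)) -
      (∫ σ in (0:ℝ)..s, ∫ τ in (0:ℝ)..t, V (σ, τ))
      = ∫ σ in (0:ℝ)..s, ((∫ τ in (0:ℝ)..t, W (σ, τ)) - (∫ τ in (0:ℝ)..t, V (σ, τ)))
    from (intervalIntegral.integral_sub (h1.intervalIntegrable _ _)
      (h2.intervalIntegrable _ _)).symm]
  apply intervalIntegral.integral_congr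
  intro σ _
  exact gd_single_sub (fun τ => W (σ, τ))
    (fun τ => V (σ, τ)) (hW.comp (continuous_const.prodMk continuous_id))
    (hV.comp (continuous_const.prodMk continuous_id)) t

lemma gd_volterra_exists (a b : ℝ) (ha : 0 < a) (hb : 0 < b)
    (L' : ℝ) (hL' : 0 < L')
    (Φ : ℝ × ℝ → E → E → E → E)
    (hΦc : Continuous fun q : (ℝ × ℝ) × E × E × E => Φ q.1 q.2.1 q.2.2.1 q.2.2.2)
    (hΦl : ∀ (p : ℝ × ℝ) (u₁ v₁ w₁ u₂ v₂ w₂ : E),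
      ‖Φ p u₁ v₁ w₁ - Φ p u₂ v₂ w₂‖ ≤ L' * (‖u₁ - u₂‖ + ‖v₁ - v₂‖ + ‖w₁ - w₂‖))
    (C0 : ℝ) (hΦ0 : ∀ p, ‖Φ p 0 0 0‖ ≤ C0)
    (c d₁ d₂ : ℝ × ℝ → E) (hc : Continuous c) (hd₁ : Continuous d₁) (hd₂ : Continuous d₂)
    (Cc : ℝ) (hcb : ∀ p, ‖c p‖ ≤ Cc) (hd₁b : ∀ p, ‖d₁ p‖ ≤ Cc) (hd₂b : ∀ p, ‖d₂ p‖ ≤ Cc) :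
    ∃ u : ℝ × ℝ → E, Continuous u ∧
      ∀ p, u p = Φ p (c p + gdJ a b u p) (d₁ p + gdI2 b u p) (d₂ p + gdI1 a u p) := by
  set lam : ℝ := max (6 * L') 1 with hlamdef
  have hlam1 : (1:ℝ) ≤ lam := le_max_right _ _
  have hlam6 : 6 * L' ≤ lam := le_max_left _ _
  have hlampos : 0 < lam := lt_of_lt_of_le one_pos hlam1
  set e : ℝ × ℝ → ℝ := fun p => Real.exp (lam * (gdClamp a p.1 + gdClamp b p.2)) with hedef
  have he_cont : Continuous e := Real.continuous_exp.comp (continuous_const.mul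
    (((gdClamp_continuous a).comp continuous_fst).add ((gdClamp_continuous b).comp continuous_snd)))
  have he_pos : ∀ p, 0 < e p := fun p => Real.exp_pos _
  have he_ge1 : ∀ p, 1 ≤ e p := by
    intro p
    rw [hedef, ← Real.exp_zero]
    apply Real.exp_le_exp.2
    have h1 := (gdClamp_mem ha.le p.1).1
    have h2 := (gdClamp_mem hb.le p.2).1
    positivity
  have he_le : ∀ p, e p ≤ Real.exp (lam * (a + b)) := by
    intro p
    apply Real.exp_le_exp.2
    have h1 := (gdClamp_mem ha.le p.1).2
    have h2 := (gdClamp_mem hb.le p.2).2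
    have : gdClamp a p.1 + gdClamp b p.2 ≤ a + b := add_le_add h1 h2
    nlinarith
  -- the conjugated function
  set uof : BoundedContinuousFunction (ℝ × ℝ) E → ℝ × ℝ → E :=
    fun w p => e p • w p with huofdef
  have huof_cont : ∀ w, Continuous (uof w) := fun w => he_cont.smul w.continuous
  have huof_bd : ∀ w p, ‖uof w p‖ ≤ Real.exp (lam * (a + b)) * ‖w‖ := by
    intro w p
    rw [huofdef]
    simp only [norm_smul, Real.norm_eq_abs, abs_of_pos (he_pos p)]
    exact mul_le_mul (he_le p) (w.norm_coe_le_norm p) (norm_nonneg _)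
      (Real.exp_pos _).le
  have hXcont : ∀ w, Continuous (fun p => c p + gdJ a b (uof w) p) := by
    intro w
    have h2 : Continuous (fun p : ℝ × ℝ => gdJ a b (uof w) p) := by
      simp only [gdJ]
      exact gd_cont_J _ (huof_cont w) _ _ ((gdClamp_continuous a).comp continuous_fst)
        ((gdClamp_continuous b).comp continuous_snd)
    exact hc.add h2
  have hPcont : ∀ w, Continuous (fun p => d₁ p + gdI2 b (uof w) p) := by
    intro w
    have h2 : Continuous (fun p : ℝ × ℝ => gdI2 b (uof w) p) := by
      simp only [gdI2]
      exact gd_cont_I2 _ (huof_cont w) _ _ continuous_fst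
        ((gdClamp_continuous b).comp continuous_snd)
    exact hd₁.add h2
  have hQcont : ∀ w, Continuous (fun p => d₂ p + gdI1 a (uof w) p) := by
    intro w
    have h2 : Continuous (fun p : ℝ × ℝ => gdI1 a (uof w) p) := by
      simp only [gdI1]
      exact gd_cont_I1 _ (huof_cont w) _ _ ((gdClamp_continuous a).comp continuous_fst)
        continuous_snd
    exact hd₂.add h2
  set Sfun : BoundedContinuousFunction (ℝ × ℝ) E → ℝ × ℝ → E := fun w p =>
    (e p)⁻¹ • Φ p (c p + gdJ a b (uof w) p) (d₁ p + gdI2 b (uof w) p) (d₂ p + gdI1 a (uof w) p)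
    with hSfundef
  have hScont : ∀ w, Continuous (Sfun w) := by
    intro w
    apply (he_cont.inv₀ (fun p => (he_pos p).ne')).smul
    exact hΦc.comp (continuous_id.prodMk ((hXcont w).prodMk ((hPcont w).prodMk (hQcont w))))
  have hΦbound : ∀ (p : ℝ × ℝ) (X P Q : E), ‖Φ p X P Q‖ ≤ C0 + L' * (‖X‖ + ‖P‖ + ‖Q‖) := by
    intro p X P Q
    calc ‖Φ p X P Q‖ = ‖(Φ p X P Q - Φ p 0 0 0) + Φ p 0 0 0‖ := by rw [sub_add_cancel]
      _ ≤ ‖Φ p X P Q - Φ p 0 0 0‖ + ‖Φ p 0 0 0‖ := norm_add_le _ _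
      _ ≤ L' * (‖X - 0‖ + ‖P - 0‖ + ‖Q - 0‖) + C0 := add_le_add (hΦl p X P Q 0 0 0) (hΦ0 p)
      _ = C0 + L' * (‖X‖ + ‖P‖ + ‖Q‖) := by rw [sub_zero, sub_zero, sub_zero]; ring
  set Emax := Real.exp (lam * (a + b)) with hEmaxdef
  have hEmax0 : 0 < Emax := Real.exp_pos _
  have hSbound : ∀ w p, ‖Sfun w p‖ ≤ C0 + L' * ((Cc + Emax * ‖w‖ * b * a) +
      (Cc + Emax * ‖w‖ * b) + (Cc + Emax * ‖w‖ * a)) := by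
    intro w p
    have hM0 : 0 ≤ Emax * ‖w‖ := mul_nonneg hEmax0.le (norm_nonneg _)
    have hJb : ‖gdJ a b (uof w) p‖ ≤ Emax * ‖w‖ * b * a := by
      simp only [gdJ]
      apply gd_norm_le_const (mul_nonneg hM0 hb.le) (gdClamp_mem ha.le p.1)
      intro σ
      exact gd_norm_le_const hM0 (gdClamp_mem hb.le p.2) (fun τ => huof_bd w (σ, τ))
    have hI2b : ‖gdI2 b (uof w) p‖ ≤ Emax * ‖w‖ * b := by
      simp only [gdI2]
      exact gd_norm_le_const hM0 (gdClamp_mem hb.le p.2) (fun τ => huof_bd w (p.1, τ))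
    have hI1b : ‖gdI1 a (uof w) p‖ ≤ Emax * ‖w‖ * a := by
      simp only [gdI1]
      exact gd_norm_le_const hM0 (gdClamp_mem ha.le p.1) (fun σ => huof_bd w (σ, p.2))
    have hX : ‖c p + gdJ a b (uof w) p‖ ≤ Cc + Emax * ‖w‖ * b * a :=
      (norm_add_le _ _).trans (add_le_add (hcb p) hJb)
    have hP : ‖d₁ p + gdI2 b (uof w) p‖ ≤ Cc + Emax * ‖w‖ * b :=
      (norm_add_le _ _).trans (add_le_add (hd₁b p) hI2b)
    have hQ : ‖d₂ p + gdI1 a (uof w) p‖ ≤ Cc + Emax * ‖w‖ * a :=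
      (norm_add_le _ _).trans (add_le_add (hd₂b p) hI1b)
    have hC00 : 0 ≤ C0 := le_trans (norm_nonneg _) (hΦ0 (0, 0))
    have h1 : ‖Sfun w p‖ ≤ ‖Φ p (c p + gdJ a b (uof w) p) (d₁ p + gdI2 b (uof w) p)
        (d₂ p + gdI1 a (uof w) p)‖ := by
      rw [hSfundef]
      simp only [norm_smul, Real.norm_eq_abs, abs_of_pos (inv_pos.2 (he_pos p))]
      have : (e p)⁻¹ ≤ 1 := inv_le_one_of_one_le₀ (he_ge1 p)
      nlinarith [norm_nonneg (Φ p (c p + gdJ a b (uof w) p) (d₁ p + gdI2 b (uof w) p)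
        (d₂ p + gdI1 a (uof w) p))]
    refine h1.trans ((hΦbound _ _ _ _).trans ?_)
    have := norm_nonneg (c p + gdJ a b (uof w) p)
    gcongr <;> assumption
  set S : BoundedContinuousFunction (ℝ × ℝ) E → BoundedContinuousFunction (ℝ × ℝ) E :=
    fun w => BoundedContinuousFunction.ofNormedAddCommGroup (Sfun w) (hScont w) _ (hSbound w)
    with hSdef
  have hcontr : ∀ w₁ w₂, dist (S w₁) (S w₂) ≤ 2⁻¹ * dist w₁ w₂ := by
    intro w₁ w₂
    set D := dist w₁ w₂ with hDdef
    have hD0 : 0 ≤ D := dist_nonneg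
    rw [BoundedContinuousFunction.dist_le (by positivity)]
    intro p
    have hΔbd : ∀ q : ℝ × ℝ, ‖(uof w₁ - uof w₂) q‖ ≤ D * e q := by
      intro q
      have : (uof w₁ - uof w₂) q = e q • (w₁ q - w₂ q) := by
        simp only [Pi.sub_apply, huofdef, smul_sub]
      rw [this, norm_smul, Real.norm_eq_abs, abs_of_pos (he_pos q), mul_comm]
      apply mul_le_mul_of_nonneg_right _ (he_pos q).le
      rw [← dist_eq_norm]
      exact BoundedContinuousFunction.dist_coe_le_dist q
    have hΔcont : Continuous (uof w₁ - uof w₂) := (huof_cont w₁).sub (huof_cont w₂)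
    have hsa := gdClamp_mem ha.le p.1
    have htb := gdClamp_mem hb.le p.2
    have hep : e p = Real.exp (lam * gdClamp a p.1) * Real.exp (lam * gdClamp b p.2) := by
      simp only [hedef]
      rw [mul_add, Real.exp_add]
    -- bound for gdI2
    have hI2 : ‖gdI2 b (uof w₁ - uof w₂) p‖ ≤ D * e p / lam := by
      simp only [gdI2]
      have hgc : Continuous fun τ => (uof w₁ - uof w₂) (p.1, τ) :=
        hΔcont.comp (continuous_const.prodMk continuous_id)
      have hbound : ∀ τ ∈ Icc (0:ℝ) (gdClamp b p.2), ‖(uof w₁ - uof w₂) (p.1, τ)‖ ≤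
          (D * Real.exp (lam * gdClamp a p.1)) * Real.exp (lam * τ) := by
        intro τ hτ
        refine (hΔbd (p.1, τ)).trans (le_of_eq ?_)
        have hτb : gdClamp b τ = τ := gdClamp_eq ⟨hτ.1, hτ.2.trans htb.2⟩
        rw [hedef]
        simp only
        rw [hτb, mul_add, Real.exp_add]
        ring
      have := gd_key_bound hgc htb.1 (by positivity) hlampos hbound
      refine this.trans (le_of_eq ?_)
      rw [hep]; ring
    have hI1 : ‖gdI1 a (uof w₁ - uof w₂) p‖ ≤ D * e p / lam := by
      simp only [gdI1]
      have hgc : Continuous fun σ => (uof w₁ - uof w₂) (σ, p.2) :=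
        hΔcont.comp (continuous_id.prodMk continuous_const)
      have hbound : ∀ σ ∈ Icc (0:ℝ) (gdClamp a p.1), ‖(uof w₁ - uof w₂) (σ, p.2)‖ ≤
          (D * Real.exp (lam * gdClamp b p.2)) * Real.exp (lam * σ) := by
        intro σ hσ
        refine (hΔbd (σ, p.2)).trans (le_of_eq ?_)
        have hσa : gdClamp a σ = σ := gdClamp_eq ⟨hσ.1, hσ.2.trans hsa.2⟩
        rw [hedef]
        simp only
        rw [hσa, mul_add, Real.exp_add]
        ring
      have := gd_key_bound hgc hsa.1 (by positivity) hlampos hbound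
      refine this.trans (le_of_eq ?_)
      rw [hep]; ring
    have hJ : ‖gdJ a b (uof w₁ - uof w₂) p‖ ≤ D * e p / lam / lam := by
      simp only [gdJ]
      have hgout : Continuous fun σ => ∫ τ in (0:ℝ)..(gdClamp b p.2), (uof w₁ - uof w₂) (σ, τ) :=
        gd_cont_inner _ hΔcont _
      have hbout : ∀ σ ∈ Icc (0:ℝ) (gdClamp a p.1),
          ‖∫ τ in (0:ℝ)..(gdClamp b p.2), (uof w₁ - uof w₂) (σ, τ)‖ ≤
          (D * Real.exp (lam * gdClamp b p.2) / lam) * Real.exp (lam * σ) := by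
        intro σ hσ
        have hσa : gdClamp a σ = σ := gdClamp_eq ⟨hσ.1, hσ.2.trans hsa.2⟩
        have hgc : Continuous fun τ => (uof w₁ - uof w₂) (σ, τ) :=
          hΔcont.comp (continuous_const.prodMk continuous_id)
        have hbin : ∀ τ ∈ Icc (0:ℝ) (gdClamp b p.2), ‖(uof w₁ - uof w₂) (σ, τ)‖ ≤
            (D * Real.exp (lam * σ)) * Real.exp (lam * τ) := by
          intro τ hτ
          refine (hΔbd (σ, τ)).trans (le_of_eq ?_)
          have hτb : gdClamp b τ = τ := gdClamp_eq ⟨hτ.1, hτ.2.trans htb.2⟩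
          rw [hedef]
          simp only
          rw [hτb, hσa, mul_add, Real.exp_add]
          ring
        have := gd_key_bound hgc htb.1 (by positivity) hlampos hbin
        refine this.trans (le_of_eq ?_)
        ring
      have := gd_key_bound hgout hsa.1 (by positivity) hlampos hbout
      refine this.trans (le_of_eq ?_)
      rw [hep]; ring
    -- now combine
    have hXsub : (c p + gdJ a b (uof w₁) p) - (c p + gdJ a b (uof w₂) p)
        = gdJ a b (uof w₁ - uof w₂) p := by
      rw [add_sub_add_left_eq_sub]
      exact gdJ_sub a b _ _ (huof_cont w₁) (huof_cont w₂) p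
    have hPsub : (d₁ p + gdI2 b (uof w₁) p) - (d₁ p + gdI2 b (uof w₂) p)
        = gdI2 b (uof w₁ - uof w₂) p := by
      rw [add_sub_add_left_eq_sub]
      exact gdI2_sub b _ _ (huof_cont w₁) (huof_cont w₂) p
    have hQsub : (d₂ p + gdI1 a (uof w₁) p) - (d₂ p + gdI1 a (uof w₂) p)
        = gdI1 a (uof w₁ - uof w₂) p := by
      rw [add_sub_add_left_eq_sub]
      exact gdI1_sub a _ _ (huof_cont w₁) (huof_cont w₂) p
    have hmain : dist (S w₁ p) (S w₂ p)
        ≤ (e p)⁻¹ * (L' * (D * e p / lam / lam + D * e p / lam + D * e p / lam)) := by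
      rw [dist_eq_norm]
      have hcoe : ∀ w q, S w q = Sfun w q := fun w q => rfl
      rw [hcoe, hcoe, hSfundef]
      simp only [← smul_sub]
      rw [norm_smul, Real.norm_eq_abs, abs_of_pos (inv_pos.2 (he_pos p))]
      apply mul_le_mul_of_nonneg_left _ (inv_pos.2 (he_pos p)).le
      refine (hΦl p _ _ _ _ _ _).trans ?_
      rw [hXsub, hPsub, hQsub]
      have h3 : ‖gdJ a b (uof w₁ - uof w₂) p‖ + ‖gdI2 b (uof w₁ - uof w₂) p‖
          + ‖gdI1 a (uof w₁ - uof w₂) p‖ ≤ D * e p / lam / lam + D * e p / lam + D * e p / lam :=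
        add_le_add (add_le_add hJ hI2) hI1
      exact mul_le_mul_of_nonneg_left h3 hL'.le
    refine hmain.trans ?_
    rw [gd_heq (he_pos p) hlampos]
    exact mul_le_mul_of_nonneg_right (gd_arith hL' hlam1 hlam6) hD0
  haveI : Nonempty (BoundedContinuousFunction (ℝ × ℝ) E) := ⟨0⟩
  have hK : (2⁻¹ : NNReal) < 1 := by
    rw [← NNReal.coe_lt_coe]
    norm_num
  have hCW : ContractingWith 2⁻¹ S := by
    refine ⟨hK, ?_⟩
    apply LipschitzWith.of_dist_le_mul
    intro w₁ w₂
    have : ((2⁻¹ : NNReal) : ℝ) = 2⁻¹ := by norm_num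
    rw [this]
    exact hcontr w₁ w₂
  set wstar := hCW.fixedPoint S with hwdef
  have hfix : S wstar = wstar := hCW.fixedPoint_isFixedPt
  refine ⟨uof wstar, huof_cont wstar, ?_⟩
  intro p
  have h0 : Sfun wstar p = wstar p := by
    conv_rhs => rw [← hfix]
    rfl
  have : uof wstar p = e p • Sfun wstar p := by
    rw [h0]
  rw [this, hSfundef]
  simp only
  rw [smul_inv_smul₀ (he_pos p).ne']

end GDExists

section GDMain

open MeasureTheory Set intervalIntegral

set_option maxHeartbeats 2000000

/-- Well-posedness (existence and uniqueness) of the Goursat–Darboux problem,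
in its two-dimensional Volterra integral form, on the curvilinear domain `G` bounded by the
coordinate axes and the graph of a continuous non-increasing function `ϑ₂ : [0,a] → [0,b]`. -/
theorem goursat_darboux_wellposed
    (n : ℕ) (a b L : ℝ) (ha : 0 < a) (hb : 0 < b)
    (ϑ₂ : ℝ → ℝ)
    (hϑcont : ContinuousOn ϑ₂ (Icc 0 a))
    (hϑanti : AntitoneOn ϑ₂ (Icc 0 a))
    (hϑmaps : ∀ s ∈ Icc (0:ℝ) a, ϑ₂ s ∈ Icc (0:ℝ) b)
    (G : Set (ℝ × ℝ))
    (hG : G = {p : ℝ × ℝ | 0 ≤ p.1 ∧ p.1 ≤ a ∧ 0 ≤ p.2 ∧ p.2 ≤ ϑ₂ p.1})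
    (f : ℝ × ℝ → EuclideanSpace ℝ (Fin n) → EuclideanSpace ℝ (Fin n) →
        EuclideanSpace ℝ (Fin n) → EuclideanSpace ℝ (Fin n))
    (hfcont : ContinuousOn
      (fun q : (ℝ × ℝ) × EuclideanSpace ℝ (Fin n) × EuclideanSpace ℝ (Fin n) ×
          EuclideanSpace ℝ (Fin n) => f q.1 q.2.1 q.2.2.1 q.2.2.2)
      (G ×ˢ (univ : Set (EuclideanSpace ℝ (Fin n) × EuclideanSpace ℝ (Fin n) ×
          EuclideanSpace ℝ (Fin n)))))
    (hfLip : ∀ p ∈ G, ∀ x₁' p₁ q₁ x₂' p₂ q₂ : EuclideanSpace ℝ (Fin n),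
      ‖f p x₁' p₁ q₁ - f p x₂' p₂ q₂‖ ≤ L * (‖x₁' - x₂'‖ + ‖p₁ - p₂‖ + ‖q₁ - q₂‖))
    (x₁ x₂ : ℝ → EuclideanSpace ℝ (Fin n))
    (hx₁ : ContDiffOn ℝ 1 x₁ (Icc 0 a))
    (hx₂ : ContDiffOn ℝ 1 x₂ (Icc 0 b))
    (x₀ : EuclideanSpace ℝ (Fin n))
    (hconsist : x₁ 0 = x₀ ∧ x₂ 0 = x₀) :
    ∃ x : ℝ × ℝ → EuclideanSpace ℝ (Fin n),
      (ContinuousOn x G ∧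
        ∃ xs xt : ℝ × ℝ → EuclideanSpace ℝ (Fin n),
          ContinuousOn xs G ∧ ContinuousOn xt G ∧
          (∀ p ∈ G, HasDerivWithinAt (fun σ => x (σ, p.2)) (xs p)
            {σ : ℝ | (σ, p.2) ∈ G} p.1) ∧
          (∀ p ∈ G, HasDerivWithinAt (fun τ => x (p.1, τ)) (xt p)
            {τ : ℝ | (p.1, τ) ∈ G} p.2) ∧
          (∀ p ∈ G, x p = x₁ p.1 + x₂ p.2 - x₀ +
            ∫ σ in (0:ℝ)..p.1, ∫ τ in (0:ℝ)..p.2,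
              f (σ, τ) (x (σ, τ)) (xs (σ, τ)) (xt (σ, τ)))) ∧
      ∀ y : ℝ × ℝ → EuclideanSpace ℝ (Fin n),
        (ContinuousOn y G ∧
          ∃ ys yt : ℝ × ℝ → EuclideanSpace ℝ (Fin n),
            ContinuousOn ys G ∧ ContinuousOn yt G ∧
            (∀ p ∈ G, HasDerivWithinAt (fun σ => y (σ, p.2)) (ys p)
              {σ : ℝ | (σ, p.2) ∈ G} p.1) ∧
            (∀ p ∈ G, HasDerivWithinAt (fun τ => y (p.1, τ)) (yt p)
              {τ : ℝ | (p.1, τ) ∈ G} p.2) ∧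
            (∀ p ∈ G, y p = x₁ p.1 + x₂ p.2 - x₀ +
              ∫ σ in (0:ℝ)..p.1, ∫ τ in (0:ℝ)..p.2,
                f (σ, τ) (y (σ, τ)) (ys (σ, τ)) (yt (σ, τ)))) →
        Set.EqOn x y G := by
  classical
  -- geometry of G
  have hGsub : ∀ p ∈ G, p.1 ∈ Icc (0:ℝ) a ∧ p.2 ∈ Icc (0:ℝ) b ∧ p.2 ≤ ϑ₂ p.1 := by
    intro p hp; rw [hG] at hp
    obtain ⟨h1, h2, h3, h4⟩ := hp
    exact ⟨⟨h1, h2⟩, ⟨h3, h4.trans (hϑmaps p.1 ⟨h1, h2⟩).2⟩, h4⟩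
  have hdown : ∀ p ∈ G, ∀ σ τ : ℝ, σ ∈ Icc 0 p.1 → τ ∈ Icc 0 p.2 → (σ, τ) ∈ G := by
    intro p hp σ τ hσ hτ
    rw [hG] at hp ⊢
    obtain ⟨h1, h2, h3, h4⟩ := hp
    exact ⟨hσ.1, hσ.2.trans h2, hτ.1, hτ.2.trans (h4.trans
      (hϑanti ⟨hσ.1, hσ.2.trans h2⟩ ⟨h1, h2⟩ hσ.2))⟩
  -- retraction onto G
  set θ : ℝ → ℝ := fun s => ϑ₂ (gdClamp a s) with hθdef
  have hθcont : Continuous θ :=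
    hϑcont.comp_continuous (gdClamp_continuous a) (fun s => gdClamp_mem ha.le s)
  have hθnonneg : ∀ s, 0 ≤ θ s := fun s => (hϑmaps _ (gdClamp_mem ha.le s)).1
  set r : ℝ × ℝ → ℝ × ℝ := fun p => (gdClamp a p.1, min (gdClamp b p.2) (θ p.1)) with hrdef
  have hrcont : Continuous r := ((gdClamp_continuous a).comp continuous_fst).prodMk
    (((gdClamp_continuous b).comp continuous_snd).min (hθcont.comp continuous_fst))
  have hrmem : ∀ p, r p ∈ G := by
    intro p
    rw [hG]
    refine ⟨(gdClamp_mem ha.le p.1).1, (gdClamp_mem ha.le p.1).2,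
      le_min ((gdClamp_mem hb.le p.2).1) (hθnonneg p.1), min_le_right _ _⟩
  have hrid : ∀ p ∈ G, r p = p := by
    intro p hp
    obtain ⟨h1, h2, h3⟩ := hGsub p hp
    have hθeq : θ p.1 = ϑ₂ p.1 := by rw [hθdef]; simp only; rw [gdClamp_eq h1]
    rw [hrdef]
    simp only
    rw [gdClamp_eq h1, gdClamp_eq h2, hθeq, min_eq_left h3]
  -- Lipschitz constant
  set L' : ℝ := |L| + 1 with hL'def
  have hL'pos : 0 < L' := by positivity
  set Φ : ℝ × ℝ → EuclideanSpace ℝ (Fin n) → EuclideanSpace ℝ (Fin n) →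
      EuclideanSpace ℝ (Fin n) → EuclideanSpace ℝ (Fin n) := fun p => f (r p) with hΦdef
  have hΦc : Continuous fun q : (ℝ × ℝ) × EuclideanSpace ℝ (Fin n) × EuclideanSpace ℝ (Fin n) ×
      EuclideanSpace ℝ (Fin n) => Φ q.1 q.2.1 q.2.2.1 q.2.2.2 := by
    have hmap : Continuous fun q : (ℝ × ℝ) × EuclideanSpace ℝ (Fin n) × EuclideanSpace ℝ (Fin n) ×
        EuclideanSpace ℝ (Fin n) => ((r q.1, q.2) : (ℝ × ℝ) × EuclideanSpace ℝ (Fin n) ×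
        EuclideanSpace ℝ (Fin n) × EuclideanSpace ℝ (Fin n)) :=
      (hrcont.comp continuous_fst).prodMk continuous_snd
    exact hfcont.comp_continuous hmap (fun q => mk_mem_prod (hrmem q.1) (mem_univ _))
  have hΦl : ∀ (p : ℝ × ℝ) (u₁ v₁ w₁ u₂ v₂ w₂ : EuclideanSpace ℝ (Fin n)),
      ‖Φ p u₁ v₁ w₁ - Φ p u₂ v₂ w₂‖ ≤ L' * (‖u₁ - u₂‖ + ‖v₁ - v₂‖ + ‖w₁ - w₂‖) := by
    intro p u₁ v₁ w₁ u₂ v₂ w₂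
    refine (hfLip (r p) (hrmem p) u₁ v₁ w₁ u₂ v₂ w₂).trans ?_
    apply mul_le_mul_of_nonneg_right _ (by positivity)
    rw [hL'def]
    have := le_abs_self L
    linarith
  -- compactness of G and bound for f at 0
  have hGsub' : G ⊆ Icc 0 a ×ˢ Icc 0 b := by
    intro p hp
    exact mk_mem_prod (hGsub p hp).1 (hGsub p hp).2.1
  have hGclosed : IsClosed G := by
    have hGeq : G = (Icc 0 a ×ˢ Icc 0 b) ∩ {p : ℝ × ℝ | p.2 - θ p.1 ≤ 0} := by
      ext p
      rw [hG]
      constructor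
      · rintro ⟨h1, h2, h3, h4⟩
        have hθeq : θ p.1 = ϑ₂ p.1 := by rw [hθdef]; simp only; rw [gdClamp_eq ⟨h1, h2⟩]
        refine ⟨mk_mem_prod ⟨h1, h2⟩ ⟨h3, h4.trans (hϑmaps p.1 ⟨h1, h2⟩).2⟩, ?_⟩
        simp only [mem_setOf_eq, hθeq]
        linarith
      · rintro ⟨hm, h5⟩
        obtain ⟨⟨h1, h2⟩, ⟨h3, _⟩⟩ := mem_prod.1 hm
        have hθeq : θ p.1 = ϑ₂ p.1 := by rw [hθdef]; simp only; rw [gdClamp_eq ⟨h1, h2⟩]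
        simp only [mem_setOf_eq, hθeq] at h5
        exact ⟨h1, h2, h3, by linarith⟩
    rw [hGeq]
    exact (isClosed_Icc.prod isClosed_Icc).inter
      (isClosed_le (continuous_snd.sub (hθcont.comp continuous_fst)) continuous_const)
  have hGcompact : IsCompact G :=
    (isCompact_Icc.prod isCompact_Icc).of_isClosed_subset hGclosed hGsub'
  have hψcont : ContinuousOn (fun q : ℝ × ℝ => f q 0 0 0) G := by
    have hmap : ContinuousOn (fun q : ℝ × ℝ => ((q, ((0 : EuclideanSpace ℝ (Fin n)),
        ((0 : EuclideanSpace ℝ (Fin n)), (0 : EuclideanSpace ℝ (Fin n))))) :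
        (ℝ × ℝ) × EuclideanSpace ℝ (Fin n) × EuclideanSpace ℝ (Fin n) ×
        EuclideanSpace ℝ (Fin n))) G := (continuous_id.prodMk continuous_const).continuousOn
    exact hfcont.comp hmap (fun q hq => mk_mem_prod hq (mem_univ _))
  obtain ⟨C0, hC0⟩ := hGcompact.exists_bound_of_continuousOn hψcont
  have hΦ0 : ∀ p, ‖Φ p 0 0 0‖ ≤ C0 := fun p => hC0 (r p) (hrmem p)
  -- data functions and their bounds
  set D₁ : ℝ → EuclideanSpace ℝ (Fin n) := derivWithin x₁ (Icc 0 a) with hD₁def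
  set D₂ : ℝ → EuclideanSpace ℝ (Fin n) := derivWithin x₂ (Icc 0 b) with hD₂def
  have hD₁cont : ContinuousOn D₁ (Icc 0 a) :=
    hx₁.continuousOn_derivWithin (uniqueDiffOn_Icc ha) le_rfl
  have hD₂cont : ContinuousOn D₂ (Icc 0 b) :=
    hx₂.continuousOn_derivWithin (uniqueDiffOn_Icc hb) le_rfl
  set cf : ℝ × ℝ → EuclideanSpace ℝ (Fin n) :=
    fun p => x₁ (gdClamp a p.1) + x₂ (gdClamp b p.2) - x₀ with hcfdef
  have hcfcont : Continuous cf :=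
    ((hx₁.continuousOn.comp_continuous ((gdClamp_continuous a).comp continuous_fst)
        (fun p => gdClamp_mem ha.le p.1)).add
      (hx₂.continuousOn.comp_continuous ((gdClamp_continuous b).comp continuous_snd)
        (fun p => gdClamp_mem hb.le p.2))).sub continuous_const
  set df₁ : ℝ × ℝ → EuclideanSpace ℝ (Fin n) := fun p => D₁ (gdClamp a p.1) with hdf₁def
  set df₂ : ℝ × ℝ → EuclideanSpace ℝ (Fin n) := fun p => D₂ (gdClamp b p.2) with hdf₂def
  have hdf₁cont : Continuous df₁ := hD₁cont.comp_continuous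
    ((gdClamp_continuous a).comp continuous_fst) (fun p => gdClamp_mem ha.le p.1)
  have hdf₂cont : Continuous df₂ := hD₂cont.comp_continuous
    ((gdClamp_continuous b).comp continuous_snd) (fun p => gdClamp_mem hb.le p.2)
  obtain ⟨C1, hC1⟩ := isCompact_Icc.exists_bound_of_continuousOn hx₁.continuousOn
  obtain ⟨C2, hC2⟩ := isCompact_Icc.exists_bound_of_continuousOn hx₂.continuousOn
  obtain ⟨C3, hC3⟩ := isCompact_Icc.exists_bound_of_continuousOn hD₁cont
  obtain ⟨C4, hC4⟩ := isCompact_Icc.exists_bound_of_continuousOn hD₂cont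
  have hC10 : 0 ≤ C1 := le_trans (norm_nonneg _) (hC1 0 (left_mem_Icc.2 ha.le))
  have hC20 : 0 ≤ C2 := le_trans (norm_nonneg _) (hC2 0 (left_mem_Icc.2 hb.le))
  have hC30 : 0 ≤ C3 := le_trans (norm_nonneg _) (hC3 0 (left_mem_Icc.2 ha.le))
  have hC40 : 0 ≤ C4 := le_trans (norm_nonneg _) (hC4 0 (left_mem_Icc.2 hb.le))
  set Cc : ℝ := C1 + C2 + ‖x₀‖ + C3 + C4 with hCcdef
  have hccb : ∀ p, ‖cf p‖ ≤ Cc := by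
    intro p
    have h1 := hC1 _ (gdClamp_mem ha.le p.1)
    have h2 := hC2 _ (gdClamp_mem hb.le p.2)
    calc ‖cf p‖ ≤ ‖x₁ (gdClamp a p.1) + x₂ (gdClamp b p.2)‖ + ‖x₀‖ := norm_sub_le _ _
      _ ≤ ‖x₁ (gdClamp a p.1)‖ + ‖x₂ (gdClamp b p.2)‖ + ‖x₀‖ := by
          have := norm_add_le (x₁ (gdClamp a p.1)) (x₂ (gdClamp b p.2)); linarith
      _ ≤ Cc := by rw [hCcdef]; linarith
  have hd1b : ∀ p, ‖df₁ p‖ ≤ Cc := by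
    intro p
    have h3 := hC3 _ (gdClamp_mem ha.le p.1)
    have := norm_nonneg x₀
    rw [hCcdef]
    calc ‖df₁ p‖ = ‖D₁ (gdClamp a p.1)‖ := rfl
      _ ≤ C3 := h3
      _ ≤ C1 + C2 + ‖x₀‖ + C3 + C4 := by linarith
  have hd2b : ∀ p, ‖df₂ p‖ ≤ Cc := by
    intro p
    have h4 := hC4 _ (gdClamp_mem hb.le p.2)
    have := norm_nonneg x₀
    rw [hCcdef]
    calc ‖df₂ p‖ = ‖D₂ (gdClamp b p.2)‖ := rfl
      _ ≤ C4 := h4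
      _ ≤ C1 + C2 + ‖x₀‖ + C3 + C4 := by linarith
  -- solve the fixed point problem
  obtain ⟨u, hucont, hueq⟩ := gd_volterra_exists a b ha hb L' hL'pos Φ hΦc hΦl C0 hΦ0
    cf df₁ df₂ hcfcont hdf₁cont hdf₂cont Cc hccb hd1b hd2b
  -- the solution and its partial derivatives
  set x : ℝ × ℝ → EuclideanSpace ℝ (Fin n) := fun p => cf p + gdJ a b u p with hxdef
  set xs : ℝ × ℝ → EuclideanSpace ℝ (Fin n) := fun p => df₁ p + gdI2 b u p with hxsdef
  set xt : ℝ × ℝ → EuclideanSpace ℝ (Fin n) := fun p => df₂ p + gdI1 a u p with hxtdef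
  have hxcont : Continuous x := by
    apply hcfcont.add
    have h2 : Continuous (fun p : ℝ × ℝ => gdJ a b u p) := by
      simp only [gdJ]
      exact gd_cont_J _ hucont _ _ ((gdClamp_continuous a).comp continuous_fst)
        ((gdClamp_continuous b).comp continuous_snd)
    exact h2
  have hxscont : Continuous xs := by
    apply hdf₁cont.add
    have h2 : Continuous (fun p : ℝ × ℝ => gdI2 b u p) := by
      simp only [gdI2]
      exact gd_cont_I2 _ hucont _ _ continuous_fst ((gdClamp_continuous b).comp continuous_snd)
    exact h2
  have hxtcont : Continuous xt := by
    apply hdf₂cont.add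
    have h2 : Continuous (fun p : ℝ × ℝ => gdI1 a u p) := by
      simp only [gdI1]
      exact gd_cont_I1 _ hucont _ _ ((gdClamp_continuous a).comp continuous_fst) continuous_snd
    exact h2
  have hclampG : ∀ p ∈ G, gdClamp a p.1 = p.1 ∧ gdClamp b p.2 = p.2 := fun p hp =>
    ⟨gdClamp_eq (hGsub p hp).1, gdClamp_eq (hGsub p hp).2.1⟩
  have hueqG : ∀ p ∈ G, u p = f p (x p) (xs p) (xt p) := by
    intro p hp
    rw [hueq p]
    show Φ p (x p) (xs p) (xt p) = f p (x p) (xs p) (xt p)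
    rw [hΦdef]
    simp only
    rw [hrid p hp]
  -- the s-derivative
  have hderiv_s : ∀ p ∈ G, HasDerivWithinAt (fun σ => x (σ, p.2)) (xs p)
      {σ : ℝ | (σ, p.2) ∈ G} p.1 := by
    intro p hp
    obtain ⟨hp1, hp2, hp3⟩ := hGsub p hp
    set Hfun : ℝ → EuclideanSpace ℝ (Fin n) :=
      fun σ' => ∫ τ in (0:ℝ)..(gdClamp b p.2), u (σ', τ) with hHdef
    have hHcont : Continuous Hfun := gd_cont_inner u hucont _
    set ψ : ℝ → EuclideanSpace ℝ (Fin n) :=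
      fun σ => x₁ σ + x₂ (gdClamp b p.2) - x₀ + ∫ σ' in (0:ℝ)..σ, Hfun σ' with hψdef
    have hsubZ : {σ : ℝ | (σ, p.2) ∈ G} ⊆ Icc 0 a := by
      intro σ hσ
      rw [hG] at hσ
      exact ⟨hσ.1, hσ.2.1⟩
    have hψeq : ∀ σ ∈ {σ : ℝ | (σ, p.2) ∈ G}, (fun σ => x (σ, p.2)) σ = ψ σ := by
      intro σ hσ
      have hσa : gdClamp a σ = σ := gdClamp_eq (hsubZ hσ)
      show x (σ, p.2) = ψ σ
      rw [hxdef, hψdef, hcfdef]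
      simp only [gdJ]
      rw [hσa]
    have hZp : p.1 ∈ {σ : ℝ | (σ, p.2) ∈ G} := by
      show (p.1, p.2) ∈ G
      simpa using hp
    have hd1 : HasDerivWithinAt x₁ (D₁ p.1) (Icc 0 a) p.1 :=
      ((hx₁.differentiableOn one_ne_zero) p.1 hp1).hasDerivWithinAt
    have hψd : HasDerivWithinAt ψ (D₁ p.1 + Hfun p.1) (Icc 0 a) p.1 := by
      have hA : HasDerivWithinAt (fun σ => x₁ σ + x₂ (gdClamp b p.2) - x₀) (D₁ p.1)
          (Icc 0 a) p.1 := (hd1.add_const _).sub_const _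
      exact hA.add (gd_ftc Hfun hHcont p.1).hasDerivWithinAt
    have hval : xs p = D₁ p.1 + Hfun p.1 := by
      rw [hxsdef, hdf₁def]
      simp only [gdI2]
      rw [gdClamp_eq hp1]
    rw [hval]
    exact (hψd.mono hsubZ).congr hψeq (hψeq p.1 hZp)
  -- the t-derivative
  have hderiv_t : ∀ p ∈ G, HasDerivWithinAt (fun τ => x (p.1, τ)) (xt p)
      {τ : ℝ | (p.1, τ) ∈ G} p.2 := by
    intro p hp
    obtain ⟨hp1, hp2, hp3⟩ := hGsub p hp
    set Wfun : ℝ → EuclideanSpace ℝ (Fin n) :=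
      fun τ' => ∫ σ in (0:ℝ)..(gdClamp a p.1), u (σ, τ') with hWdef
    have hWcont : Continuous Wfun := by
      have := gd_cont_inner (fun q : ℝ × ℝ => u (q.2, q.1))
        (hucont.comp (continuous_snd.prodMk continuous_fst)) (gdClamp a p.1)
      exact this
    set ψ : ℝ → EuclideanSpace ℝ (Fin n) :=
      fun τ => x₁ (gdClamp a p.1) + x₂ τ - x₀ + ∫ τ' in (0:ℝ)..τ, Wfun τ' with hψdef
    have hsubZ : {τ : ℝ | (p.1, τ) ∈ G} ⊆ Icc 0 b := by
      intro τ hτ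
      have := hGsub (p.1, τ) hτ
      exact this.2.1
    have hψeq : ∀ τ ∈ {τ : ℝ | (p.1, τ) ∈ G}, (fun τ => x (p.1, τ)) τ = ψ τ := by
      intro τ hτ
      have hτb : gdClamp b τ = τ := gdClamp_eq (hsubZ hτ)
      show x (p.1, τ) = ψ τ
      rw [hxdef, hψdef, hcfdef]
      simp only [gdJ]
      rw [hτb]
      congr 1
      exact gd_swap u hucont (gdClamp_mem ha.le p.1).1 (hsubZ hτ).1
    have hZp : p.2 ∈ {τ : ℝ | (p.1, τ) ∈ G} := by
      show (p.1, p.2) ∈ G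
      simpa using hp
    have hd2 : HasDerivWithinAt x₂ (D₂ p.2) (Icc 0 b) p.2 :=
      ((hx₂.differentiableOn one_ne_zero) p.2 hp2).hasDerivWithinAt
    have hψd : HasDerivWithinAt ψ (D₂ p.2 + Wfun p.2) (Icc 0 b) p.2 := by
      have hA : HasDerivWithinAt (fun τ => x₁ (gdClamp a p.1) + x₂ τ - x₀) (D₂ p.2)
          (Icc 0 b) p.2 := ((hd2.const_add _).sub_const _)
      exact hA.add (gd_ftc Wfun hWcont p.2).hasDerivWithinAt
    have hval : xt p = D₂ p.2 + Wfun p.2 := by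
      rw [hxtdef, hdf₂def]
      simp only [gdI1]
      rw [gdClamp_eq hp2]
    rw [hval]
    exact (hψd.mono hsubZ).congr hψeq (hψeq p.2 hZp)
  -- the integral equation
  have hinteq : ∀ p ∈ G, x p = x₁ p.1 + x₂ p.2 - x₀ +
      ∫ σ in (0:ℝ)..p.1, ∫ τ in (0:ℝ)..p.2,
        f (σ, τ) (x (σ, τ)) (xs (σ, τ)) (xt (σ, τ)) := by
    intro p hp
    obtain ⟨hp1, hp2, _⟩ := hGsub p hp
    rw [hxdef, hcfdef]
    simp only [gdJ]
    rw [gdClamp_eq hp1, gdClamp_eq hp2]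
    congr 1
    apply intervalIntegral.integral_congr
    intro σ hσ
    rw [uIcc_of_le hp1.1] at hσ
    apply intervalIntegral.integral_congr
    intro τ hτ
    rw [uIcc_of_le hp2.1] at hτ
    exact hueqG (σ, τ) (hdown p hp σ τ hσ hτ)
  refine ⟨x, ⟨hxcont.continuousOn, xs, xt, hxscont.continuousOn, hxtcont.continuousOn,
    hderiv_s, hderiv_t, hinteq⟩, ?_⟩
  rintro y ⟨hycont, ys, yt, hysc, hytc, hysd, hytd, hyeq⟩
  intro p hp
  obtain ⟨hp1, hp2, hp3⟩ := hGsub p hp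
  by_cases ht0 : p.2 = 0
  · rw [hinteq p hp, hyeq p hp, ht0]
    simp
  by_cases hs0 : p.1 = 0
  · rw [hinteq p hp, hyeq p hp, hs0]
    simp
  have hs : 0 < p.1 := lt_of_le_of_ne hp1.1 (Ne.symm hs0)
  have ht : 0 < p.2 := lt_of_le_of_ne hp2.1 (Ne.symm ht0)
  -- clamped retraction onto the rectangle R = [0,p.1] × [0,p.2]
  set ρ : ℝ × ℝ → ℝ × ℝ := fun q => (gdClamp p.1 q.1, gdClamp p.2 q.2) with hρdef
  have hρcont : Continuous ρ := ((gdClamp_continuous _).comp continuous_fst).prodMk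
    ((gdClamp_continuous _).comp continuous_snd)
  have hRsubG : ∀ q : ℝ × ℝ, q.1 ∈ Icc 0 p.1 → q.2 ∈ Icc 0 p.2 → q ∈ G := by
    intro q h1 h2
    have := hdown p hp q.1 q.2 h1 h2
    simpa using this
  have hρmem : ∀ q, ρ q ∈ G := fun q =>
    hRsubG (ρ q) (gdClamp_mem hs.le q.1) (gdClamp_mem ht.le q.2)
  have hρid : ∀ q : ℝ × ℝ, q.1 ∈ Icc 0 p.1 → q.2 ∈ Icc 0 p.2 → ρ q = q := by
    intro q h1 h2
    rw [hρdef]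
    simp only
    rw [gdClamp_eq h1, gdClamp_eq h2]
  set W : ℝ × ℝ → EuclideanSpace ℝ (Fin n) :=
    fun q => f (ρ q) (y (ρ q)) (ys (ρ q)) (yt (ρ q)) with hWdef
  set V : ℝ × ℝ → EuclideanSpace ℝ (Fin n) := fun q => u (ρ q) with hVdef
  have hWcont : Continuous W := by
    have hwfun : ContinuousOn (fun q : ℝ × ℝ => f q (y q) (ys q) (yt q)) G := by
      have hmap : ContinuousOn (fun q : ℝ × ℝ => ((q, (y q, (ys q, yt q))) :
          (ℝ × ℝ) × EuclideanSpace ℝ (Fin n) × EuclideanSpace ℝ (Fin n) ×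
          EuclideanSpace ℝ (Fin n))) G :=
        continuousOn_id.prodMk (hycont.prodMk (hysc.prodMk hytc))
      exact hfcont.comp hmap (fun q hq => mk_mem_prod hq (mem_univ _))
    exact hwfun.comp_continuous hρcont hρmem
  have hVcont : Continuous V := hucont.comp hρcont
  have hWid : ∀ σ τ : ℝ, σ ∈ Icc 0 p.1 → τ ∈ Icc 0 p.2 →
      W (σ, τ) = f (σ, τ) (y (σ, τ)) (ys (σ, τ)) (yt (σ, τ)) := by
    intro σ τ h1 h2
    rw [hWdef]
    simp only
    rw [hρid (σ, τ) h1 h2]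
  have hVid : ∀ σ τ : ℝ, σ ∈ Icc 0 p.1 → τ ∈ Icc 0 p.2 → V (σ, τ) = u (σ, τ) := by
    intro σ τ h1 h2
    rw [hVdef]
    simp only
    rw [hρid (σ, τ) h1 h2]
  -- Step 1: integral representations on the rectangle
  have hyR : ∀ q : ℝ × ℝ, q.1 ∈ Icc 0 p.1 → q.2 ∈ Icc 0 p.2 →
      y q = x₁ q.1 + x₂ q.2 - x₀ + ∫ σ in (0:ℝ)..q.1, ∫ τ in (0:ℝ)..q.2, W (σ, τ) := by
    intro q h1 h2
    rw [hyeq q (hRsubG q h1 h2)]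
    congr 1
    apply intervalIntegral.integral_congr
    intro σ hσ
    rw [uIcc_of_le h1.1] at hσ
    apply intervalIntegral.integral_congr
    intro τ hτ
    rw [uIcc_of_le h2.1] at hτ
    exact (hWid σ τ ⟨hσ.1, hσ.2.trans h1.2⟩ ⟨hτ.1, hτ.2.trans h2.2⟩).symm
  have hxR : ∀ q : ℝ × ℝ, q.1 ∈ Icc 0 p.1 → q.2 ∈ Icc 0 p.2 →
      x q = x₁ q.1 + x₂ q.2 - x₀ + ∫ σ in (0:ℝ)..q.1, ∫ τ in (0:ℝ)..q.2, V (σ, τ) := by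
    intro q h1 h2
    rw [hinteq q (hRsubG q h1 h2)]
    congr 1
    apply intervalIntegral.integral_congr
    intro σ hσ
    rw [uIcc_of_le h1.1] at hσ
    apply intervalIntegral.integral_congr
    intro τ hτ
    rw [uIcc_of_le h2.1] at hτ
    have hmem1 : σ ∈ Icc 0 p.1 := ⟨hσ.1, hσ.2.trans h1.2⟩
    have hmem2 : τ ∈ Icc 0 p.2 := ⟨hτ.1, hτ.2.trans h2.2⟩
    exact ((hueqG (σ, τ) (hRsubG (σ, τ) hmem1 hmem2)).symm).trans
      (hVid σ τ hmem1 hmem2).symm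
  -- Step 2: identification of the partial derivatives on the rectangle
  have hysR : ∀ q : ℝ × ℝ, q.1 ∈ Icc 0 p.1 → q.2 ∈ Icc 0 p.2 →
      ys q = D₁ q.1 + ∫ τ in (0:ℝ)..q.2, W (q.1, τ) := by
    intro q h1 h2
    set Hf : ℝ → EuclideanSpace ℝ (Fin n) := fun σ' => ∫ τ in (0:ℝ)..q.2, W (σ', τ) with hHfdef
    have hHf : Continuous Hf := gd_cont_inner W hWcont _
    set ψ : ℝ → EuclideanSpace ℝ (Fin n) :=
      fun σ => x₁ σ + x₂ q.2 - x₀ + ∫ σ' in (0:ℝ)..σ, Hf σ' with hψdef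
    have hIccZ : Icc 0 p.1 ⊆ {σ : ℝ | (σ, q.2) ∈ G} := fun σ hσ => hRsubG (σ, q.2) hσ h2
    have hψy : ∀ σ ∈ Icc (0:ℝ) p.1, ψ σ = (fun σ => y (σ, q.2)) σ := by
      intro σ hσ
      show ψ σ = y (σ, q.2)
      rw [hyR (σ, q.2) hσ h2]
    have hsub : Icc (0:ℝ) p.1 ⊆ Icc 0 a := Icc_subset_Icc le_rfl hp1.2
    have hq1a : q.1 ∈ Icc 0 a := hsub h1
    have hd1 : HasDerivWithinAt x₁ (D₁ q.1) (Icc 0 a) q.1 :=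
      ((hx₁.differentiableOn one_ne_zero) q.1 hq1a).hasDerivWithinAt
    have hψd : HasDerivWithinAt ψ (D₁ q.1 + Hf q.1) (Icc 0 p.1) q.1 := by
      have hA : HasDerivWithinAt (fun σ => x₁ σ + x₂ q.2 - x₀) (D₁ q.1) (Icc 0 p.1) q.1 :=
        (((hd1.add_const _).sub_const _)).mono hsub
      exact hA.add (gd_ftc Hf hHf q.1).hasDerivWithinAt
    have hyd : HasDerivWithinAt (fun σ => y (σ, q.2)) (ys q) (Icc 0 p.1) q.1 :=
      (hysd q (hRsubG q h1 h2)).mono hIccZ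
    have hψd' : HasDerivWithinAt ψ (ys q) (Icc 0 p.1) q.1 :=
      hyd.congr hψy (hψy q.1 h1)
    have hUD : UniqueDiffWithinAt ℝ (Icc (0:ℝ) p.1) q.1 := (uniqueDiffOn_Icc hs) q.1 h1
    exact (hψd'.derivWithin hUD).symm.trans (hψd.derivWithin hUD)
  have hytR : ∀ q : ℝ × ℝ, q.1 ∈ Icc 0 p.1 → q.2 ∈ Icc 0 p.2 →
      yt q = D₂ q.2 + ∫ σ in (0:ℝ)..q.1, W (σ, q.2) := by
    intro q h1 h2
    set Wf : ℝ → EuclideanSpace ℝ (Fin n) := fun τ' => ∫ σ in (0:ℝ)..q.1, W (σ, τ') with hWfdef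
    have hWf : Continuous Wf := gd_cont_inner (fun q' : ℝ × ℝ => W (q'.2, q'.1))
      (hWcont.comp (continuous_snd.prodMk continuous_fst)) _
    set ψ : ℝ → EuclideanSpace ℝ (Fin n) :=
      fun τ => x₁ q.1 + x₂ τ - x₀ + ∫ τ' in (0:ℝ)..τ, Wf τ' with hψdef
    have hIccZ : Icc 0 p.2 ⊆ {τ : ℝ | (q.1, τ) ∈ G} := fun τ hτ => hRsubG (q.1, τ) h1 hτ
    have hψy : ∀ τ ∈ Icc (0:ℝ) p.2, ψ τ = (fun τ => y (q.1, τ)) τ := by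
      intro τ hτ
      show ψ τ = y (q.1, τ)
      rw [hyR (q.1, τ) h1 hτ, hψdef]
      simp only
      congr 1
      exact (gd_swap W hWcont h1.1 hτ.1).symm
    have hsub : Icc (0:ℝ) p.2 ⊆ Icc 0 b := Icc_subset_Icc le_rfl hp2.2
    have hq2b : q.2 ∈ Icc 0 b := hsub h2
    have hd2 : HasDerivWithinAt x₂ (D₂ q.2) (Icc 0 b) q.2 :=
      ((hx₂.differentiableOn one_ne_zero) q.2 hq2b).hasDerivWithinAt
    have hψd : HasDerivWithinAt ψ (D₂ q.2 + Wf q.2) (Icc 0 p.2) q.2 := by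
      have hA : HasDerivWithinAt (fun τ => x₁ q.1 + x₂ τ - x₀) (D₂ q.2) (Icc 0 p.2) q.2 :=
        (((hd2.const_add _).sub_const _)).mono hsub
      exact hA.add (gd_ftc Wf hWf q.2).hasDerivWithinAt
    have hyd : HasDerivWithinAt (fun τ => y (q.1, τ)) (yt q) (Icc 0 p.2) q.2 :=
      (hytd q (hRsubG q h1 h2)).mono hIccZ
    have hψd' : HasDerivWithinAt ψ (yt q) (Icc 0 p.2) q.2 :=
      hyd.congr hψy (hψy q.2 h2)
    have hUD : UniqueDiffWithinAt ℝ (Icc (0:ℝ) p.2) q.2 := (uniqueDiffOn_Icc ht) q.2 h2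
    exact (hψd'.derivWithin hUD).symm.trans (hψd.derivWithin hUD)
  have hxsR : ∀ q : ℝ × ℝ, q.1 ∈ Icc 0 p.1 → q.2 ∈ Icc 0 p.2 →
      xs q = D₁ q.1 + ∫ τ in (0:ℝ)..q.2, V (q.1, τ) := by
    intro q h1 h2
    obtain ⟨hq1, hq2⟩ := hclampG q (hRsubG q h1 h2)
    rw [hxsdef, hdf₁def]
    simp only [gdI2]
    rw [hq1, hq2]
    congr 1
    apply intervalIntegral.integral_congr
    intro τ hτ
    rw [uIcc_of_le h2.1] at hτ
    exact (hVid q.1 τ h1 ⟨hτ.1, hτ.2.trans h2.2⟩).symm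
  have hxtR : ∀ q : ℝ × ℝ, q.1 ∈ Icc 0 p.1 → q.2 ∈ Icc 0 p.2 →
      xt q = D₂ q.2 + ∫ σ in (0:ℝ)..q.1, V (σ, q.2) := by
    intro q h1 h2
    obtain ⟨hq1, hq2⟩ := hclampG q (hRsubG q h1 h2)
    rw [hxtdef, hdf₂def]
    simp only [gdI1]
    rw [hq1, hq2]
    congr 1
    apply intervalIntegral.integral_congr
    intro σ hσ
    rw [uIcc_of_le h1.1] at hσ
    exact (hVid σ q.2 ⟨hσ.1, hσ.2.trans h1.2⟩ h2).symm
  -- Step 3: Gronwall estimate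
  set lam : ℝ := max (6 * L') 1 with hlamdef
  have hlam1 : (1:ℝ) ≤ lam := le_max_right _ _
  have hlam6 : 6 * L' ≤ lam := le_max_left _ _
  have hlampos : 0 < lam := lt_of_lt_of_le one_pos hlam1
  set Δ : ℝ × ℝ → EuclideanSpace ℝ (Fin n) := fun q => W q - V q with hΔdef
  have hΔcont : Continuous Δ := hWcont.sub hVcont
  have hyx : ∀ q : ℝ × ℝ, q.1 ∈ Icc 0 p.1 → q.2 ∈ Icc 0 p.2 →
      y q - x q = ∫ σ in (0:ℝ)..q.1, ∫ τ in (0:ℝ)..q.2, Δ (σ, τ) := by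
    intro q h1 h2
    rw [hyR q h1 h2, hxR q h1 h2, add_sub_add_left_eq_sub]
    exact gd_double_sub W V hWcont hVcont q.1 q.2
  have hysxs : ∀ q : ℝ × ℝ, q.1 ∈ Icc 0 p.1 → q.2 ∈ Icc 0 p.2 →
      ys q - xs q = ∫ τ in (0:ℝ)..q.2, Δ (q.1, τ) := by
    intro q h1 h2
    rw [hysR q h1 h2, hxsR q h1 h2, add_sub_add_left_eq_sub]
    exact gd_single_sub (fun τ => W (q.1, τ)) (fun τ => V (q.1, τ))
      (hWcont.comp (continuous_const.prodMk continuous_id))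
      (hVcont.comp (continuous_const.prodMk continuous_id)) q.2
  have hytxt : ∀ q : ℝ × ℝ, q.1 ∈ Icc 0 p.1 → q.2 ∈ Icc 0 p.2 →
      yt q - xt q = ∫ σ in (0:ℝ)..q.1, Δ (σ, q.2) := by
    intro q h1 h2
    rw [hytR q h1 h2, hxtR q h1 h2, add_sub_add_left_eq_sub]
    exact gd_single_sub (fun σ => W (σ, q.2)) (fun σ => V (σ, q.2))
      (hWcont.comp (continuous_id.prodMk continuous_const))
      (hVcont.comp (continuous_id.prodMk continuous_const)) q.1
  set gw : ℝ × ℝ → ℝ := fun q => Real.exp (-(lam * (q.1 + q.2))) * ‖Δ q‖ with hgwdef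
  have hgwcont : Continuous gw :=
    (Real.continuous_exp.comp ((continuous_const.mul
      (continuous_fst.add continuous_snd)).neg)).mul hΔcont.norm
  set Rect : Set (ℝ × ℝ) := Icc 0 p.1 ×ˢ Icc 0 p.2 with hRectdef
  have hRcomp : IsCompact Rect := isCompact_Icc.prod isCompact_Icc
  have hRne : Rect.Nonempty :=
    ⟨(0, 0), mk_mem_prod (left_mem_Icc.2 hs.le) (left_mem_Icc.2 ht.le)⟩
  obtain ⟨q0, hq0R, hq0max⟩ := hRcomp.exists_isMaxOn hRne hgwcont.continuousOn
  set M := gw q0 with hMdef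
  have hM0 : 0 ≤ M := by
    rw [hMdef, hgwdef]
    positivity
  have hq01 : q0.1 ∈ Icc (0:ℝ) p.1 := (mem_prod.1 hq0R).1
  have hq02 : q0.2 ∈ Icc (0:ℝ) p.2 := (mem_prod.1 hq0R).2
  have hgle : ∀ q : ℝ × ℝ, q.1 ∈ Icc 0 p.1 → q.2 ∈ Icc 0 p.2 →
      ‖Δ q‖ ≤ M * Real.exp (lam * (q.1 + q.2)) := by
    intro q h1 h2
    have hmem : q ∈ Rect := mk_mem_prod h1 h2
    have h := hq0max hmem
    have hepos := Real.exp_pos (lam * (q.1 + q.2))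
    have hkey : ‖Δ q‖ = gw q * Real.exp (lam * (q.1 + q.2)) := by
      rw [hgwdef]
      simp only
      rw [mul_comm (Real.exp (-(lam * (q.1 + q.2)))) _, mul_assoc, ← Real.exp_add]
      simp
    rw [hkey]
    exact mul_le_mul_of_nonneg_right h hepos.le
  have hq0G : q0 ∈ G := hRsubG q0 hq01 hq02
  have hb1 : ‖y q0 - x q0‖ ≤
      M * Real.exp (lam * q0.2) / lam * Real.exp (lam * q0.1) / lam := by
    rw [hyx q0 hq01 hq02]
    have hout : Continuous fun σ => ∫ τ in (0:ℝ)..q0.2, Δ (σ, τ) := gd_cont_inner Δ hΔcont _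
    apply gd_key_bound hout hq01.1 (by positivity) hlampos
    intro σ hσ
    have hgc : Continuous fun τ => Δ (σ, τ) :=
      hΔcont.comp (continuous_const.prodMk continuous_id)
    have hin := gd_key_bound hgc hq02.1 (C := M * Real.exp (lam * σ)) (by positivity) hlampos ?_
    · refine hin.trans (le_of_eq ?_)
      ring
    · intro τ hτ
      refine (hgle (σ, τ) ⟨hσ.1, hσ.2.trans hq01.2⟩ ⟨hτ.1, hτ.2.trans hq02.2⟩).trans
        (le_of_eq ?_)
      show M * Real.exp (lam * (σ + τ)) = M * Real.exp (lam * σ) * Real.exp (lam * τ)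
      rw [mul_add, Real.exp_add]
      ring
  have hb2 : ‖ys q0 - xs q0‖ ≤
      M * Real.exp (lam * q0.1) * Real.exp (lam * q0.2) / lam := by
    rw [hysxs q0 hq01 hq02]
    have hgc : Continuous fun τ => Δ (q0.1, τ) :=
      hΔcont.comp (continuous_const.prodMk continuous_id)
    have := gd_key_bound hgc hq02.1 (C := M * Real.exp (lam * q0.1)) (by positivity) hlampos ?_
    · refine this.trans (le_of_eq ?_)
      ring
    · intro τ hτ
      refine (hgle (q0.1, τ) hq01 ⟨hτ.1, hτ.2.trans hq02.2⟩).trans (le_of_eq ?_)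
      show M * Real.exp (lam * (q0.1 + τ)) = M * Real.exp (lam * q0.1) * Real.exp (lam * τ)
      rw [mul_add, Real.exp_add]
      ring
  have hb3 : ‖yt q0 - xt q0‖ ≤
      M * Real.exp (lam * q0.2) * Real.exp (lam * q0.1) / lam := by
    rw [hytxt q0 hq01 hq02]
    have hgc : Continuous fun σ => Δ (σ, q0.2) :=
      hΔcont.comp (continuous_id.prodMk continuous_const)
    have := gd_key_bound hgc hq01.1 (C := M * Real.exp (lam * q0.2)) (by positivity) hlampos ?_
    · refine this.trans (le_of_eq ?_)
      ring
    · intro σ hσ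
      refine (hgle (σ, q0.2) ⟨hσ.1, hσ.2.trans hq01.2⟩ hq02).trans (le_of_eq ?_)
      show M * Real.exp (lam * (σ + q0.2)) = M * Real.exp (lam * q0.2) * Real.exp (lam * σ)
      rw [mul_add, Real.exp_add]
      ring
  have hMle : M ≤ 2⁻¹ * M := by
    have hWV : Δ q0 = f q0 (y q0) (ys q0) (yt q0) - f q0 (x q0) (xs q0) (xt q0) := by
      rw [hΔdef]
      simp only
      have h1 := hWid q0.1 q0.2 hq01 hq02
      have h2 := hVid q0.1 q0.2 hq01 hq02
      have h3 := hueqG q0 hq0G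
      simp only [Prod.mk.eta] at h1 h2
      rw [h1, h2, h3]
    have hlipest : ‖Δ q0‖ ≤ L' * (‖y q0 - x q0‖ + ‖ys q0 - xs q0‖ + ‖yt q0 - xt q0‖) := by
      rw [hWV]
      refine (hfLip q0 hq0G _ _ _ _ _ _).trans ?_
      apply mul_le_mul_of_nonneg_right _ (by positivity)
      rw [hL'def]
      have := le_abs_self L
      linarith
    set E0 := Real.exp (lam * (q0.1 + q0.2)) with hE0def
    have hE0pos : 0 < E0 := Real.exp_pos _
    have hE0eq : E0 = Real.exp (lam * q0.1) * Real.exp (lam * q0.2) := by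
      rw [hE0def, mul_add, Real.exp_add]
    have hsum : ‖y q0 - x q0‖ + ‖ys q0 - xs q0‖ + ‖yt q0 - xt q0‖ ≤
        M * E0 / lam / lam + M * E0 / lam + M * E0 / lam := by
      have e1 : M * Real.exp (lam * q0.2) / lam * Real.exp (lam * q0.1) / lam
          = M * E0 / lam / lam := by rw [hE0eq]; ring
      have e2 : M * Real.exp (lam * q0.1) * Real.exp (lam * q0.2) / lam = M * E0 / lam := by
        rw [hE0eq]; ring
      have e3 : M * Real.exp (lam * q0.2) * Real.exp (lam * q0.1) / lam = M * E0 / lam := by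
        rw [hE0eq]; ring
      exact add_le_add (add_le_add (e1 ▸ hb1) (e2 ▸ hb2)) (e3 ▸ hb3)
    have hMeq : M = E0⁻¹ * ‖Δ q0‖ := by
      rw [hMdef, hgwdef]
      simp only
      rw [Real.exp_neg, hE0def]
    conv_lhs => rw [hMeq]
    calc E0⁻¹ * ‖Δ q0‖
        ≤ E0⁻¹ * (L' * (M * E0 / lam / lam + M * E0 / lam + M * E0 / lam)) := by
          apply mul_le_mul_of_nonneg_left _ (inv_pos.2 hE0pos).le
          exact hlipest.trans (mul_le_mul_of_nonneg_left hsum hL'pos.le)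
      _ = L' * (1 / (lam * lam) + 2 / lam) * M := gd_heq hE0pos hlampos
      _ ≤ 2⁻¹ * M := mul_le_mul_of_nonneg_right (gd_arith hL'pos hlam1 hlam6) hM0
  have hMzero : M ≤ 0 := by linarith
  have hΔzero : ∀ q : ℝ × ℝ, q.1 ∈ Icc 0 p.1 → q.2 ∈ Icc 0 p.2 → Δ q = 0 := by
    intro q h1 h2
    have hexp := Real.exp_pos (lam * (q.1 + q.2))
    have hle0 : M * Real.exp (lam * (q.1 + q.2)) ≤ 0 :=
      mul_nonpos_iff.2 (Or.inr ⟨hMzero, hexp.le⟩)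
    exact norm_le_zero_iff.1 ((hgle q h1 h2).trans hle0)
  have hfin := hyx p (right_mem_Icc.2 hs.le) (right_mem_Icc.2 ht.le)
  have hzero : ∫ σ in (0:ℝ)..p.1, ∫ τ in (0:ℝ)..p.2, Δ (σ, τ) = 0 := by
    have houter : ∀ σ ∈ uIcc (0:ℝ) p.1,
        (∫ τ in (0:ℝ)..p.2, Δ (σ, τ)) = (fun _ : ℝ => (0 : EuclideanSpace ℝ (Fin n))) σ := by
      intro σ hσ
      rw [uIcc_of_le hs.le] at hσ
      have hinner : ∀ τ ∈ uIcc (0:ℝ) p.2,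
          Δ (σ, τ) = (fun _ : ℝ => (0 : EuclideanSpace ℝ (Fin n))) τ := by
        intro τ hτ
        rw [uIcc_of_le ht.le] at hτ
        exact hΔzero (σ, τ) hσ hτ
      rw [intervalIntegral.integral_congr hinner, intervalIntegral.integral_zero]
    rw [intervalIntegral.integral_congr houter, intervalIntegral.integral_zero]
  rw [hzero] at hfin
  exact (sub_eq_zero.1 hfin).symm

end GDMain
end

section
/- Let G ⊆ ℝ² be a bounded open set, let U := ∏_{j=1}^{m} [u̲ʲ, ūʲ] ⊂ ℝᵐ be a compact box, and let F : cl(G) × U → ℝ be continuous. Let u* : G → U be a measurable function which is continuous at a point (s₀,t₀) ∈ G. Suppose that for every continuous function v : G → ℝᵐ vanishing outside a compact subset of G and such that u*(p) + v(p) ∈ U for all p ∈ G, one has ∬_G [F(p, u*(p)+v(p)) − F(p, u*(p))] dA(p) ≥ 0. Then F((s₀,t₀), u*(s₀,t₀)) ≤ F((s₀,t₀), u₁) for every u₁ ∈ U. -/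
open Set MeasureTheory
open scoped Topology

set_option maxHeartbeats 1000000

/-- Core needle-variation argument for a globally continuous integrand `Fc`, a bound `B`,
and a target control value `u₁` that is strictly inside the box in every
non-degenerate coordinate. -/
lemma needle_core
    (m : ℕ) (G : Set (ℝ × ℝ)) (hGopen : IsOpen G) (hGbdd : Bornology.IsBounded G)
    (lo hi : Fin m → ℝ)
    (U : Set (EuclideanSpace ℝ (Fin m)))
    (hU : U = {u : EuclideanSpace ℝ (Fin m) | ∀ j, u j ∈ Icc (lo j) (hi j)})
    (Fc : (ℝ × ℝ) × EuclideanSpace ℝ (Fin m) → ℝ) (hFc : Continuous Fc)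
    (B : ℝ) (hBpos : 0 < B)
    (hB : ∀ p ∈ G, ∀ u ∈ U, |Fc (p, u)| ≤ B)
    (ustar : ℝ × ℝ → EuclideanSpace ℝ (Fin m))
    (hmeas : Measurable ustar)
    (hval : ∀ p ∈ G, ustar p ∈ U)
    (p₀ : ℝ × ℝ) (hp₀ : p₀ ∈ G)
    (hcont : ContinuousAt ustar p₀)
    (hopt : ∀ v : ℝ × ℝ → EuclideanSpace ℝ (Fin m),
      Continuous v → HasCompactSupport v → tsupport v ⊆ G →
      (∀ p ∈ G, ustar p + v p ∈ U) →
      0 ≤ ∫ p in G, (Fc (p, ustar p + v p) - Fc (p, ustar p)))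
    (u₁ : EuclideanSpace ℝ (Fin m)) (hu₁ : u₁ ∈ U)
    (hstrict : ∀ j, lo j < hi j → u₁ j ∈ Ioo (lo j) (hi j)) :
    Fc (p₀, ustar p₀) ≤ Fc (p₀, u₁) := by
  by_contra hlt
  push_neg at hlt
  set η := Fc (p₀, ustar p₀) - Fc (p₀, u₁) with hη
  have hηpos : 0 < η := by simp only [hη]; linarith
  set d := u₁ - ustar p₀ with hd
  have hpt : ustar p₀ + d = u₁ := by simp [hd]
  -- the coordinate margins
  set ε : Fin m → ℝ := fun j =>
    if lo j < hi j then min (hi j - u₁ j) (u₁ j - lo j) else 1 with hε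
  have hεpos : ∀ j, 0 < ε j := by
    intro j
    simp only [hε]
    split_ifs with h
    · have := hstrict j h
      exact lt_min (by linarith [this.2]) (by linarith [this.1])
    · norm_num
  -- continuity event for the integrand
  have hψ : ContinuousAt (fun p => Fc (p, ustar p + d) - Fc (p, ustar p)) p₀ := by
    exact (hFc.continuousAt.comp (continuousAt_id.prodMk (hcont.add continuousAt_const))).sub
      (hFc.continuousAt.comp (continuousAt_id.prodMk hcont))
  have hev1 : ∀ᶠ p in 𝓝 p₀, Fc (p, ustar p + d) - Fc (p, ustar p) < -η / 2 := by
    have hmem : Iio (-η / 2) ∈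
        𝓝 ((fun p => Fc (p, ustar p + d) - Fc (p, ustar p)) p₀) := by
      apply Iio_mem_nhds
      simp only [hpt]
      linarith
    exact hψ.eventually_mem hmem
  -- coordinate events
  have hev2 : ∀ᶠ p in 𝓝 p₀, ∀ j, |ustar p j - ustar p₀ j| < ε j := by
    rw [Filter.eventually_all]
    intro j
    have hj : ContinuousAt (fun p => ustar p j) p₀ :=
      ((EuclideanSpace.proj (𝕜 := ℝ) j).continuous.continuousAt).comp hcont
    have habs : ContinuousAt (fun p => |ustar p j - ustar p₀ j|) p₀ :=
      (hj.sub continuousAt_const).abs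
    have hmem : Iio (ε j) ∈ 𝓝 ((fun p => |ustar p j - ustar p₀ j|) p₀) := by
      apply Iio_mem_nhds
      simp [hεpos j]
    exact habs.eventually_mem hmem
  have hevG : ∀ᶠ p in 𝓝 p₀, p ∈ G := hGopen.eventually_mem hp₀
  obtain ⟨δ, hδpos, hδ⟩ := Metric.eventually_nhds_iff.mp ((hev1.and hev2).and hevG)
  -- radii
  set r : ℝ := δ / 2 with hr
  have hrpos : 0 < r := by positivity
  set ρ : ℝ := min (δ / 4) (η * r / (24 * B)) with hρ
  have hρpos : 0 < ρ := lt_min (by positivity) (by positivity)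
  set r' : ℝ := r + ρ with hr'
  have hr'δ : r' < δ := by
    have := min_le_left (δ / 4) (η * r / (24 * B))
    simp only [hr', hr]
    have : ρ ≤ δ / 4 := min_le_left _ _
    linarith
  have hρr : ρ ≤ r := by
    have : ρ ≤ δ / 4 := min_le_left _ _
    simp only [hr]; linarith
  have hρη : ρ ≤ η * r / (24 * B) := min_le_right _ _
  have hrr' : r < r' := by simp only [hr']; linarith
  -- bump function
  have hdisj : Disjoint ((Metric.ball p₀ r')ᶜ) (Metric.closedBall p₀ r) :=
    Set.disjoint_left.mpr fun x hx hx2 =>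
      hx (Metric.closedBall_subset_ball hrr' hx2)
  obtain ⟨φ, hφ0, hφ1, hφ01⟩ := exists_continuous_zero_one_of_isClosed
    (isClosed_compl_iff.mpr Metric.isOpen_ball) Metric.isClosed_closedBall hdisj
  set v : ℝ × ℝ → EuclideanSpace ℝ (Fin m) := fun p => φ p • d with hv
  have hφzero : ∀ p, p ∉ Metric.ball p₀ r' → v p = 0 := by
    intro p hp
    have : φ p = 0 := hφ0 hp
    simp [hv, this]
  have hvcont : Continuous v := φ.continuous.smul continuous_const
  have hcbG : ∀ p, dist p p₀ ≤ r' → p ∈ G := by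
    intro p hp
    exact (hδ (lt_of_le_of_lt hp hr'δ)).2
  have hsupp : Function.support v ⊆ Metric.ball p₀ r' := by
    intro p hp
    by_contra hpc
    exact hp (hφzero p hpc)
  have htsupp : tsupport v ⊆ Metric.closedBall p₀ r' :=
    (closure_mono hsupp).trans Metric.closure_ball_subset_closedBall
  have hvsupp : HasCompactSupport v :=
    HasCompactSupport.of_support_subset_isCompact (isCompact_closedBall p₀ r')
      (hsupp.trans Metric.ball_subset_closedBall)
  have htsuppG : tsupport v ⊆ G := fun p hp => hcbG p (Metric.mem_closedBall.mp (htsupp hp))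
  -- admissibility
  have hadm : ∀ p ∈ G, ustar p + v p ∈ U := by
    intro p hpG
    by_cases hpb : dist p p₀ < δ
    · obtain ⟨⟨-, hco⟩, -⟩ := hδ hpb
      rw [hU]
      intro j
      have hφp := hφ01 p
      have ht0 : (0:ℝ) ≤ φ p := hφp.1
      have ht1 : φ p ≤ 1 := hφp.2
      have key := hco j
      have hpj : (ustar p + v p) j = ustar p j + φ p * (u₁ j - ustar p₀ j) := by
        simp [hv, hd, PiLp.add_apply, PiLp.smul_apply, PiLp.sub_apply, smul_eq_mul]
      have ha : ustar p j ∈ Icc (lo j) (hi j) := by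
        have := hval p hpG; rw [hU] at this; exact this j
      have ha₀ : ustar p₀ j ∈ Icc (lo j) (hi j) := by
        have := hval p₀ hp₀; rw [hU] at this; exact this j
      have hb : u₁ j ∈ Icc (lo j) (hi j) := by
        rw [hU] at hu₁; exact hu₁ j
      rw [hpj]
      rcases lt_or_ge (lo j) (hi j) with hlh | hlh
      · have hεj : ε j = min (hi j - u₁ j) (u₁ j - lo j) := if_pos hlh
        rw [hεj] at key
        have h1 : ustar p j - ustar p₀ j < hi j - u₁ j :=
          lt_of_le_of_lt (le_abs_self _) (lt_of_lt_of_le key (min_le_left _ _))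
        have h2 : -(u₁ j - lo j) < ustar p j - ustar p₀ j := by
          have := lt_of_lt_of_le key (min_le_right _ _)
          have := abs_lt.mp this
          linarith [this.1]
        constructor
        · nlinarith [mul_nonneg (by linarith : (0:ℝ) ≤ 1 - φ p)
              (by linarith [ha.1] : (0:ℝ) ≤ ustar p j - lo j),
            mul_nonneg ht0
              (by linarith : (0:ℝ) ≤ (ustar p j - ustar p₀ j) + (u₁ j - lo j))]
        · nlinarith [mul_nonneg (by linarith : (0:ℝ) ≤ 1 - φ p)
              (by linarith [ha.2] : (0:ℝ) ≤ hi j - ustar p j),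
            mul_nonneg ht0
              (by linarith : (0:ℝ) ≤ (hi j - u₁ j) - (ustar p j - ustar p₀ j))]
      · have hzero : u₁ j - ustar p₀ j = 0 := by
          have h1 := hb.1; have h2 := hb.2
          have h3 := ha₀.1; have h4 := ha₀.2
          linarith
        rw [hzero, mul_zero, add_zero]
        exact ha
    · have hp' : p ∉ Metric.ball p₀ r' := fun h =>
        hpb (lt_trans (Metric.mem_ball.mp h) hr'δ)
      rw [hφzero p hp', add_zero]
      exact hval p hpG
  -- the optimality inequality
  have hI := hopt v hvcont hvsupp htsuppG hadm
  -- integrand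
  set h : ℝ × ℝ → ℝ := fun p => Fc (p, ustar p + v p) - Fc (p, ustar p) with hh
  have hhmeas : Measurable h := by
    apply Measurable.sub
    · exact hFc.measurable.comp (measurable_id.prodMk (hmeas.add hvcont.measurable))
    · exact hFc.measurable.comp (measurable_id.prodMk hmeas)
  have hbound : ∀ p ∈ G, ‖h p‖ ≤ 2 * B := by
    intro p hpG
    have h1 := hB p hpG _ (hadm p hpG)
    have h2 := hB p hpG _ (hval p hpG)
    rw [Real.norm_eq_abs, abs_le]
    have h1' := abs_le.mp h1
    have h2' := abs_le.mp h2
    simp only [hh]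
    constructor
    · linarith [h1'.1, h2'.2]
    · linarith [h1'.2, h2'.1]
  have hGvol : volume G ≠ ⊤ := hGbdd.measure_lt_top.ne
  have hint : IntegrableOn h G := by
    apply Measure.integrableOn_of_bounded hGvol hhmeas.aestronglyMeasurable
    exact (ae_restrict_iff' hGopen.measurableSet).mpr (ae_of_all _ hbound)
  -- split the integral
  set W : Set (ℝ × ℝ) := Metric.ball p₀ r' with hW
  set cb : Set (ℝ × ℝ) := Metric.closedBall p₀ r with hcb
  have hWG : W ⊆ G := fun p hp => hcbG p (le_of_lt (Metric.mem_ball.mp hp))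
  have hcbW : cb ⊆ W := Metric.closedBall_subset_ball hrr'
  have hcbG' : cb ⊆ G := hcbW.trans hWG
  have hWm : MeasurableSet W := Metric.isOpen_ball.measurableSet
  have hcbm : MeasurableSet cb := Metric.isClosed_closedBall.measurableSet
  have hsplit1 : ∫ p in G, h p = ∫ p in W, h p := by
    have heq := integral_inter_add_diff (μ := volume) (f := h) (s := G) hWm hint
    have hGW : G ∩ W = W := inter_eq_self_of_subset_right hWG
    have hzero : ∫ p in G \ W, h p = 0 := by
      have heq : EqOn h (fun _ => (0:ℝ)) (G \ W) := by
        intro p hp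
        have hv0 : v p = 0 := hφzero p hp.2
        simp [hh, hv0]
      rw [setIntegral_congr_fun (hGopen.measurableSet.diff hWm) heq, integral_zero]
    rw [hGW] at heq
    linarith
  have hsplit2 : ∫ p in W, h p = (∫ p in cb, h p) + ∫ p in W \ cb, h p := by
    have heq := integral_inter_add_diff (μ := volume) (f := h) (s := W) hcbm
      (hint.mono_set hWG)
    rw [inter_eq_self_of_subset_right hcbW] at heq
    exact heq.symm
  -- bound on the closed ball
  have hIcb : ∫ p in cb, h p ≤ (-η / 2) * (volume cb).toReal := by
    have hmono : ∫ p in cb, h p ≤ ∫ p in cb, (-η / 2) := by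
      apply setIntegral_mono_on (hint.mono_set hcbG')
        (integrableOn_const Metric.isBounded_closedBall.measure_lt_top.ne) hcbm
      intro p hp
      have hd1 : dist p p₀ < δ := lt_of_le_of_lt (Metric.mem_closedBall.mp hp) (by linarith)
      obtain ⟨⟨hlt', -⟩, -⟩ := hδ hd1
      have hφp : φ p = 1 := hφ1 hp
      have : v p = d := by simp [hv, hφp]
      simp only [hh, this]
      linarith
    rw [setIntegral_const] at hmono
    rw [smul_eq_mul, measureReal_def] at hmono
    linarith [hmono]
  -- bound on the annulus
  have hannvol : volume (W \ cb) < ⊤ :=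
    lt_of_le_of_lt (measure_mono diff_subset) Metric.isBounded_ball.measure_lt_top
  have hIann : ∫ p in W \ cb, h p ≤ (2 * B) * (volume (W \ cb)).toReal := by
    have hnorm := norm_setIntegral_le_of_norm_le_const (μ := volume)
      (s := W \ cb) (f := h) hannvol
      (fun x hx => hbound x (hWG hx.1))
    calc ∫ p in W \ cb, h p ≤ ‖∫ p in W \ cb, h p‖ := le_abs_self _
      _ ≤ (2 * B) * (volume (W \ cb)).toReal := hnorm
  -- volume computations
  have hvol_cb : (volume cb).toReal = 2 * r * (2 * r) := by
    have h1 : volume cb = ENNReal.ofReal (2 * r) * ENNReal.ofReal (2 * r) := by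
      rw [hcb, ← (closedBall_prod_same p₀.1 p₀.2 r :
        _ = Metric.closedBall p₀ r), Measure.volume_eq_prod, Measure.prod_prod,
        Real.volume_closedBall, Real.volume_closedBall]
    rw [h1, ENNReal.toReal_mul, ENNReal.toReal_ofReal (by linarith)]
  have hvol_W : (volume W).toReal = 2 * r' * (2 * r') := by
    have h1 : volume W = ENNReal.ofReal (2 * r') * ENNReal.ofReal (2 * r') := by
      rw [hW, ← (ball_prod_same p₀.1 p₀.2 r' :
        _ = Metric.ball p₀ r'), Measure.volume_eq_prod, Measure.prod_prod,
        Real.volume_ball, Real.volume_ball]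
    rw [h1, ENNReal.toReal_mul, ENNReal.toReal_ofReal (by linarith)]
  have hvol_ann : (volume (W \ cb)).toReal = 2 * r' * (2 * r') - 2 * r * (2 * r) := by
    rw [measure_diff hcbW hcbm.nullMeasurableSet
      Metric.isBounded_closedBall.measure_lt_top.ne,
      ENNReal.toReal_sub_of_le (measure_mono hcbW) Metric.isBounded_ball.measure_lt_top.ne,
      hvol_cb, hvol_W]
  -- final contradiction
  have hann_bd : 2 * r' * (2 * r') - 2 * r * (2 * r) ≤ 12 * r * ρ := by
    have : ρ * ρ ≤ ρ * r := mul_le_mul_of_nonneg_left hρr hρpos.le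
    simp only [hr']
    nlinarith
  have hρ24 : ρ * (24 * B) ≤ η * r := by
    have h24 : (0:ℝ) < 24 * B := by positivity
    exact (le_div_iff₀ h24).mp hρη
  have hann_bd2 : (2 * B) * (volume (W \ cb)).toReal ≤ η * r * r := by
    rw [hvol_ann]
    have h1 : (2 * B) * (2 * r' * (2 * r') - 2 * r * (2 * r)) ≤ (2 * B) * (12 * r * ρ) :=
      mul_le_mul_of_nonneg_left hann_bd (by positivity)
    have h2 : (2 * B) * (12 * r * ρ) ≤ η * r * r := by nlinarith
    linarith
  have hfinal : ∫ p in G, h p ≤ -(η * r * r) := by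
    rw [hsplit1, hsplit2]
    have := hIcb
    rw [hvol_cb] at this
    nlinarith [hIann, hann_bd2]
  have : (0:ℝ) < η * r * r := by positivity
  simp only [hh] at hfinal
  linarith [hI, hfinal]

/-- The extremum (needle-variation) principle: if the increment of the cost
functional is nonnegative under every admissible localized continuous variation of the
control, then at every point of continuity of the control the integrand is pointwise
minimized over the control box `U`. -/
theorem needle_variation_extremum_principle
    (m : ℕ) (G : Set (ℝ × ℝ)) (hGopen : IsOpen G) (hGbdd : Bornology.IsBounded G)
    (lo hi : Fin m → ℝ)
    (U : Set (EuclideanSpace ℝ (Fin m)))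
    (hU : U = {u : EuclideanSpace ℝ (Fin m) | ∀ j, u j ∈ Icc (lo j) (hi j)})
    (F : ℝ × ℝ → EuclideanSpace ℝ (Fin m) → ℝ)
    (hF : ContinuousOn (fun q : (ℝ × ℝ) × EuclideanSpace ℝ (Fin m) => F q.1 q.2)
      (closure G ×ˢ U))
    (ustar : ℝ × ℝ → EuclideanSpace ℝ (Fin m))
    (hmeas : Measurable ustar)
    (hval : ∀ p ∈ G, ustar p ∈ U)
    (p₀ : ℝ × ℝ) (hp₀ : p₀ ∈ G)
    (hcont : ContinuousAt ustar p₀)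
    (hopt : ∀ v : ℝ × ℝ → EuclideanSpace ℝ (Fin m),
      Continuous v → HasCompactSupport v → tsupport v ⊆ G →
      (∀ p ∈ G, ustar p + v p ∈ U) →
      0 ≤ ∫ p in G, (F p (ustar p + v p) - F p (ustar p))) :
    ∀ u₁ ∈ U, F p₀ (ustar p₀) ≤ F p₀ u₁ := by
  classical
  -- `U` is compact
  have hUeq : U = (⇑(EuclideanSpace.equiv (Fin m) ℝ)) ⁻¹'
      (univ.pi fun j => Icc (lo j) (hi j)) := by
    rw [hU]; ext u
    simp only [mem_setOf_eq, mem_preimage, Set.mem_pi, mem_univ, true_implies]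
    exact Iff.rfl
  have hUcompact : IsCompact U := by
    rw [hUeq]
    exact (EuclideanSpace.equiv (Fin m) ℝ).toHomeomorph.isCompact_preimage.mpr
      (isCompact_univ_pi fun j => isCompact_Icc)
  have hKc : IsCompact (closure G ×ˢ U) := hGbdd.isCompact_closure.prod hUcompact
  have hKclosed : IsClosed (closure G ×ˢ U) := hKc.isClosed
  -- Tietze extension of `F` from the compact set to the whole space
  set f0 : C((closure G ×ˢ U : Set ((ℝ × ℝ) × EuclideanSpace ℝ (Fin m))), ℝ) :=
    ⟨(closure G ×ˢ U).restrict (fun q => F q.1 q.2), hF.restrict⟩ with hf0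
  obtain ⟨g, hg⟩ := f0.exists_restrict_eq hKclosed
  have hgK : ∀ q ∈ closure G ×ˢ U, g q = F q.1 q.2 := by
    intro q hq
    have := DFunLike.congr_fun hg (⟨q, hq⟩ : (closure G ×ˢ U : Set _))
    simp [hf0] at this; exact this
  -- bound
  obtain ⟨M, hM⟩ := hKc.exists_bound_of_continuousOn g.continuous.continuousOn
  set B : ℝ := |M| + 1 with hBdef
  have hBpos : (0:ℝ) < B := by positivity
  have hB : ∀ p ∈ G, ∀ u ∈ U, |g (p, u)| ≤ B := by
    intro p hp u hu
    have := hM (p, u) ⟨subset_closure hp, hu⟩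
    rw [Real.norm_eq_abs] at this
    calc |g (p, u)| ≤ M := this
      _ ≤ |M| := le_abs_self M
      _ ≤ B := by simp [hBdef]
  -- transfer the optimality hypothesis to `g`
  have hopt' : ∀ v : ℝ × ℝ → EuclideanSpace ℝ (Fin m),
      Continuous v → HasCompactSupport v → tsupport v ⊆ G →
      (∀ p ∈ G, ustar p + v p ∈ U) →
      0 ≤ ∫ p in G, (g (p, ustar p + v p) - g (p, ustar p)) := by
    intro v hv1 hv2 hv3 hv4
    have heqon : EqOn (fun p => g (p, ustar p + v p) - g (p, ustar p))
        (fun p => F p (ustar p + v p) - F p (ustar p)) G := by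
      intro p hp
      have h1 := hgK (p, ustar p + v p) ⟨subset_closure hp, hv4 p hp⟩
      have h2 := hgK (p, ustar p) ⟨subset_closure hp, hval p hp⟩
      simp only [h1, h2]
    rw [setIntegral_congr_fun hGopen.measurableSet heqon]
    exact hopt v hv1 hv2 hv3 hv4
  intro u₁ hu₁
  -- midpoint vector
  set z : EuclideanSpace ℝ (Fin m) := WithLp.toLp 2 (fun j => (lo j + hi j) / 2) with hz
  have hlohi : ∀ j, lo j ≤ hi j := by
    intro j
    have := hval p₀ hp₀
    rw [hU] at this
    have h := this j
    exact le_trans h.1 h.2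
  -- approximate `u₁` by strictly interior points
  have hmain : ∀ t ∈ Ioc (0:ℝ) 1, g (p₀, ustar p₀) ≤ g (p₀, u₁ + t • (z - u₁)) := by
    intro t ht
    have hco : ∀ j, (u₁ + t • (z - u₁)) j = u₁ j + t * ((lo j + hi j) / 2 - u₁ j) := by
      intro j
      simp [hz, PiLp.add_apply, PiLp.smul_apply, PiLp.sub_apply, smul_eq_mul]
    have hu₁j : ∀ j, u₁ j ∈ Icc (lo j) (hi j) := by rw [hU] at hu₁; exact hu₁
    have hmem : u₁ + t • (z - u₁) ∈ U := by
      rw [hU]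
      intro j
      rw [hco j]
      rcases lt_or_ge (lo j) (hi j) with hlh | hlh
      · constructor
        · nlinarith [(hu₁j j).1, (hu₁j j).2, ht.1, ht.2]
        · nlinarith [(hu₁j j).1, (hu₁j j).2, ht.1, ht.2]
      · have h0 : (lo j + hi j) / 2 - u₁ j = 0 := by
          have h1 := (hu₁j j).1; have h2 := (hu₁j j).2
          exact le_antisymm (by linarith) (by linarith)
        rw [h0, mul_zero, add_zero]
        exact hu₁j j
    have hstrict : ∀ j, lo j < hi j → (u₁ + t • (z - u₁)) j ∈ Ioo (lo j) (hi j) := by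
      intro j hlh
      rw [hco j]
      constructor
      · nlinarith [(hu₁j j).1, (hu₁j j).2, ht.1, ht.2]
      · nlinarith [(hu₁j j).1, (hu₁j j).2, ht.1, ht.2]
    exact needle_core m G hGopen hGbdd lo hi U hU (⇑g) g.continuous B hBpos hB
      ustar hmeas hval p₀ hp₀ hcont hopt' _ hmem hstrict
  -- pass to the limit t → 0⁺
  have hT : Filter.Tendsto (fun t : ℝ => g (p₀, u₁ + t • (z - u₁))) (𝓝[>] (0:ℝ))
      (𝓝 (g (p₀, u₁))) := by
    have hc : Continuous fun t : ℝ => g (p₀, u₁ + t • (z - u₁)) :=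
      g.continuous.comp (continuous_const.prodMk
        (continuous_const.add (continuous_id.smul continuous_const)))
    simpa using (hc.tendsto 0).mono_left (nhdsWithin_le_nhds : 𝓝[>] (0:ℝ) ≤ 𝓝 0)
  have hlim : g (p₀, ustar p₀) ≤ g (p₀, u₁) := by
    refine ge_of_tendsto hT ?_
    filter_upwards [Ioc_mem_nhdsGT (zero_lt_one)] with t ht
    exact hmain t ht
  have e1 : g (p₀, ustar p₀) = F p₀ (ustar p₀) :=
    hgK (p₀, ustar p₀) ⟨subset_closure hp₀, hval p₀ hp₀⟩
  have e2 : g (p₀, u₁) = F p₀ u₁ := hgK (p₀, u₁) ⟨subset_closure hp₀, hu₁⟩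
  rw [e1, e2] at hlim
  exact hlim
end

section
/- Let a, b > 0 and let ϑ₂ : [0,a] → [0,b] be a C¹ strictly decreasing bijection onto [0,b] with inverse ϑ₁ : [0,b] → [0,a]. Let φ = φ(s,t,σ,τ) be continuous on ([0,a]×[0,b])², with continuous partial derivative ∂φ/∂s. Define F(s,t) := ∫_s^{ϑ₁(t)} ∫_t^{ϑ₂(σ)} φ(s,t,σ,τ) dτ dσ. Then for every (s,t) with 0 < s < a, 0 < t < ϑ₂(s), the partial derivative ∂F/∂s exists and ∂F/∂s (s,t) = − ∫_t^{ϑ₂(s)} φ(s,t,s,τ) dτ + ∫_s^{ϑ₁(t)} ∫_t^{ϑ₂(σ)} (∂φ/∂s)(s,t,σ,τ) dτ dσ. -/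
open Set MeasureTheory intervalIntegral

open Filter Topology Metric Asymptotics

set_option maxHeartbeats 1000000 in
theorem coreDeriv (a c s : ℝ) (hsIoo : s ∈ Ioo 0 a) (hcI : c ∈ Icc 0 a)
    (g gs : ℝ → ℝ → ℝ)
    (hgc : Continuous fun p : ℝ × ℝ => g p.1 p.2)
    (hgsc : Continuous fun p : ℝ × ℝ => gs p.1 p.2)
    (hD : ∀ σ ∈ Icc (0:ℝ) a, ∀ x ∈ Ioo (0:ℝ) a, HasDerivAt (fun x' => g x' σ) (gs x σ) x) :
    HasDerivAt (fun x => ∫ σ in x..c, g x σ) ((∫ σ in s..c, gs s σ) - g s s) s := by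
  obtain ⟨hs0, hsa⟩ := hsIoo
  have hsI : s ∈ Icc (0:ℝ) a := ⟨hs0.le, hsa.le⟩
  have hgx : ∀ x, Continuous (g x) := fun x =>
    hgc.comp (continuous_const.prodMk continuous_id)
  have hgsx : ∀ x, Continuous (gs x) := fun x =>
    hgsc.comp (continuous_const.prodMk continuous_id)
  obtain ⟨C, hC⟩ := (isCompact_Icc.prod isCompact_Icc :
      IsCompact (Icc (0:ℝ) a ×ˢ Icc (0:ℝ) a)).exists_bound_of_continuousOn hgsc.continuousOn
  have hCnn : 0 ≤ C := le_trans (norm_nonneg _) (hC (s, s) ⟨hsI, hsI⟩)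
  obtain ⟨ε, hεpos, hball⟩ : ∃ ε > 0, ball s ε ⊆ Ioo 0 a :=
    Metric.isOpen_iff.1 isOpen_Ioo s ⟨hs0, hsa⟩
  have hIsc : uIoc s c ⊆ Icc (0:ℝ) a := uIoc_subset_uIcc.trans (uIcc_subset_Icc hsI hcI)
  have hH : HasDerivAt (fun x => ∫ σ in s..c, g x σ) (∫ σ in s..c, gs s σ) s := by
    refine (intervalIntegral.hasDerivAt_integral_of_dominated_loc_of_deriv_le
      (F := fun x σ => g x σ) (F' := fun x σ => gs x σ) (bound := fun _ => C)
      (μ := volume) (a := s) (b := c) (x₀ := s) (ball_mem_nhds s hεpos) ?_ ?_ ?_ ?_ ?_ ?_).2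
    · exact Eventually.of_forall fun x => (hgx x).aestronglyMeasurable
    · exact (hgx s).intervalIntegrable _ _
    · exact (hgsx s).aestronglyMeasurable
    · exact ae_of_all _ fun σ hσ x hx =>
        hC (x, σ) ⟨Ioo_subset_Icc_self (hball hx), hIsc hσ⟩
    · exact intervalIntegrable_const
    · exact ae_of_all _ fun σ hσ x hx => hD σ (hIsc hσ) x (hball hx)
  have hK₁ : HasDerivAt (fun x => ∫ σ in s..x, g s σ) (g s s) s :=
    intervalIntegral.integral_hasDerivAt_right ((hgx s).intervalIntegrable _ _)
      ((hgx s).stronglyMeasurableAtFilter _ _) (hgx s).continuousAt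
  have hRm0 : (∫ σ in s..s, (g s σ - g s σ)) = 0 := by simp
  have hRbound : ∀ x ∈ ball s ε,
      ‖∫ σ in s..x, (g x σ - g s σ)‖ ≤ C * |x - s| * |x - s| := by
    intro x hx
    have huIcc : uIcc s x ⊆ Ioo (0:ℝ) a := by
      intro u hu
      rcases hu with ⟨h1, h2⟩
      have hxI : x ∈ Ioo (0:ℝ) a := hball hx
      exact ⟨lt_of_lt_of_le (lt_min hs0 hxI.1) h1, lt_of_le_of_lt h2 (max_lt hsa hxI.2)⟩
    refine (intervalIntegral.norm_integral_le_of_norm_le_const (C := C * |x - s|) fun σ hσ => ?_).trans_eq ?_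
    · have hσI : σ ∈ Icc (0:ℝ) a :=
        Ioo_subset_Icc_self (huIcc (uIoc_subset_uIcc hσ))
      have hftc : ∫ u in s..x, gs u σ = g x σ - g s σ :=
        intervalIntegral.integral_eq_sub_of_hasDerivAt
          (fun u hu => hD σ hσI u (huIcc hu))
          ((hgsc.comp (continuous_id.prodMk continuous_const)).intervalIntegrable _ _)
      rw [← hftc]
      exact intervalIntegral.norm_integral_le_of_norm_le_const fun u hu =>
        hC (u, σ) ⟨Ioo_subset_Icc_self (huIcc (uIoc_subset_uIcc hu)), hσI⟩
    · ring
  have hR : HasDerivAt (fun x => ∫ σ in s..x, (g x σ - g s σ)) 0 s := by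
    rw [hasDerivAt_iff_isLittleO]
    simp only [hRm0, smul_zero, sub_zero]
    rw [isLittleO_iff]
    intro δ hδ
    have hδ' : 0 < min ε (δ / (C + 1)) := lt_min hεpos (div_pos hδ (by linarith))
    filter_upwards [Metric.ball_mem_nhds s hδ'] with x hx
    have hx1 : x ∈ ball s ε := ball_subset_ball (min_le_left _ _) hx
    have hx2 : |x - s| < δ / (C + 1) := by
      have := mem_ball_iff_norm.1 (ball_subset_ball (min_le_right _ _) hx)
      simpa [Real.norm_eq_abs] using this
    calc ‖∫ σ in s..x, (g x σ - g s σ)‖ ≤ C * |x - s| * |x - s| := hRbound x hx1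
      _ ≤ δ * ‖x - s‖ := by
          rw [Real.norm_eq_abs]
          have h1 : C * |x - s| ≤ δ := by
            have h0 : C * |x - s| ≤ C * (δ / (C + 1)) :=
              mul_le_mul_of_nonneg_left hx2.le hCnn
            have h2 : C * (δ / (C + 1)) ≤ δ := by
              rw [mul_div_assoc']
              rw [div_le_iff₀ (by linarith : (0:ℝ) < C + 1)]
              nlinarith
            linarith
          exact mul_le_mul_of_nonneg_right h1 (abs_nonneg _)
  have hKsplit : ∀ x, (∫ σ in s..x, g x σ)
      = (∫ σ in s..x, g s σ) + ∫ σ in s..x, (g x σ - g s σ) := by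
    intro x
    rw [intervalIntegral.integral_sub ((hgx x).intervalIntegrable _ _)
      ((hgx s).intervalIntegrable _ _)]
    ring
  have hK : HasDerivAt (fun x => ∫ σ in s..x, g x σ) (g s s) s := by
    have h := hK₁.add hR
    rw [add_zero] at h
    exact h.congr_of_eventuallyEq (Eventually.of_forall hKsplit)
  have hsplit : ∀ x, (∫ σ in x..c, g x σ) = (∫ σ in s..c, g x σ) - ∫ σ in s..x, g x σ := by
    intro x
    rw [eq_sub_iff_add_eq, add_comm]
    exact intervalIntegral.integral_add_adjacent_intervals
      ((hgx x).intervalIntegrable _ _) ((hgx x).intervalIntegrable _ _)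
  exact (hH.sub hK).congr_of_eventuallyEq (Eventually.of_forall hsplit)

theorem myExtend {X : Type*} [TopologicalSpace X] [NormalSpace X] {s : Set X}
    (hs : IsClosed s) {f : X → ℝ} (hf : ContinuousOn f s) :
    ∃ g : X → ℝ, Continuous g ∧ ∀ x ∈ s, g x = f x := by
  obtain ⟨g, hg⟩ := ContinuousMap.exists_restrict_eq hs ⟨s.restrict f, hf.restrict⟩
  exact ⟨g, g.continuous, fun x hx => congrFun (congrArg ContinuousMap.toFun hg) ⟨x, hx⟩⟩

set_option maxHeartbeats 1000000 in
/-- The differentiation formula (A.6) in `s` for the parameter-dependent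
double integral `F(s,t) = ∫_s^{ϑ₁(t)} ∫_t^{ϑ₂(σ)} φ(s,t,σ,τ) dτ dσ` over the curvilinear
region `E(s,t)` cut off by the decreasing curve `τ = ϑ₂(σ)`. -/
theorem deriv_double_integral_moving_corner
    (a b : ℝ) (ha : 0 < a) (hb : 0 < b)
    (ϑ₂ ϑ₁ : ℝ → ℝ)
    (hϑC1 : ContDiffOn ℝ 1 ϑ₂ (Icc 0 a))
    (hϑanti : StrictAntiOn ϑ₂ (Icc 0 a))
    (hϑimg : ϑ₂ '' Icc 0 a = Icc 0 b)
    (hinv₁ : ∀ s ∈ Icc (0:ℝ) a, ϑ₁ (ϑ₂ s) = s)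
    (hinv₂ : ∀ t ∈ Icc (0:ℝ) b, ϑ₂ (ϑ₁ t) = t)
    (hϑ₁maps : ∀ t ∈ Icc (0:ℝ) b, ϑ₁ t ∈ Icc (0:ℝ) a)
    (φ φs : ℝ → ℝ → ℝ → ℝ → ℝ)
    (hφ : ContinuousOn (fun q : (ℝ × ℝ) × ℝ × ℝ => φ q.1.1 q.1.2 q.2.1 q.2.2)
      ((Icc 0 a ×ˢ Icc 0 b) ×ˢ (Icc 0 a ×ˢ Icc 0 b)))
    (hφs : ContinuousOn (fun q : (ℝ × ℝ) × ℝ × ℝ => φs q.1.1 q.1.2 q.2.1 q.2.2)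
      ((Icc 0 a ×ˢ Icc 0 b) ×ˢ (Icc 0 a ×ˢ Icc 0 b)))
    (hφderiv : ∀ s ∈ Icc (0:ℝ) a, ∀ t ∈ Icc (0:ℝ) b, ∀ σ ∈ Icc (0:ℝ) a, ∀ τ ∈ Icc (0:ℝ) b,
      HasDerivWithinAt (fun s' => φ s' t σ τ) (φs s t σ τ) (Icc 0 a) s) :
    ∀ s t : ℝ, 0 < s → s < a → 0 < t → t < ϑ₂ s →
      HasDerivAt (fun s' => ∫ σ in s'..ϑ₁ t, ∫ τ in t..ϑ₂ σ, φ s' t σ τ)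
        (-(∫ τ in t..ϑ₂ s, φ s t s τ) +
          ∫ σ in s..ϑ₁ t, ∫ τ in t..ϑ₂ σ, φs s t σ τ) s := by
  intro s t hs0 hsa ht0 htϑ
  have hsI : s ∈ Icc (0:ℝ) a := ⟨hs0.le, hsa.le⟩
  have hmaps : ∀ σ ∈ Icc (0:ℝ) a, ϑ₂ σ ∈ Icc (0:ℝ) b := fun σ hσ => by
    rw [← hϑimg]; exact mem_image_of_mem _ hσ
  have htI : t ∈ Icc (0:ℝ) b := ⟨ht0.le, htϑ.le.trans (hmaps s hsI).2⟩
  have hcI : ϑ₁ t ∈ Icc (0:ℝ) a := hϑ₁maps t htI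
  have hRclosed : IsClosed ((Icc (0:ℝ) a ×ˢ Icc (0:ℝ) b) ×ˢ (Icc (0:ℝ) a ×ˢ Icc (0:ℝ) b)) :=
    ((isClosed_Icc.prod isClosed_Icc).prod (isClosed_Icc.prod isClosed_Icc))
  have hRcompact : IsCompact ((Icc (0:ℝ) a ×ˢ Icc (0:ℝ) b) ×ˢ (Icc (0:ℝ) a ×ˢ Icc (0:ℝ) b)) :=
    ((isCompact_Icc.prod isCompact_Icc).prod (isCompact_Icc.prod isCompact_Icc))
  obtain ⟨Θ, hΘc, hΘeq⟩ := myExtend isClosed_Icc hϑC1.continuousOn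
  obtain ⟨Φ, hΦc, hΦeq⟩ := myExtend hRclosed hφ
  obtain ⟨Φs, hΦsc, hΦseq⟩ := myExtend hRclosed hφs
  have hmemR : ∀ x ∈ Icc (0:ℝ) a, ∀ σ ∈ Icc (0:ℝ) a, ∀ τ ∈ Icc (0:ℝ) b,
      ((x, t), (σ, τ)) ∈ (Icc (0:ℝ) a ×ˢ Icc (0:ℝ) b) ×ˢ (Icc (0:ℝ) a ×ˢ Icc (0:ℝ) b) :=
    fun x hx σ hσ τ hτ => ⟨⟨hx, htI⟩, hσ, hτ⟩
  -- joint continuity of the extended inner integrals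
  have hgc : Continuous fun p : ℝ × ℝ => ∫ τ in t..Θ p.2, Φ ((p.1, t), (p.2, τ)) := by
    apply intervalIntegral.continuous_parametric_intervalIntegral_of_continuous
      (f := fun (p : ℝ × ℝ) τ => Φ ((p.1, t), (p.2, τ))) ?_ (hΘc.comp continuous_snd)
    exact hΦc.comp (((continuous_fst.fst).prodMk continuous_const).prodMk
      ((continuous_fst.snd).prodMk continuous_snd))
  have hgsc : Continuous fun p : ℝ × ℝ => ∫ τ in t..Θ p.2, Φs ((p.1, t), (p.2, τ)) := by
    apply intervalIntegral.continuous_parametric_intervalIntegral_of_continuous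
      (f := fun (p : ℝ × ℝ) τ => Φs ((p.1, t), (p.2, τ))) ?_ (hΘc.comp continuous_snd)
    exact hΦsc.comp (((continuous_fst.fst).prodMk continuous_const).prodMk
      ((continuous_fst.snd).prodMk continuous_snd))
  obtain ⟨C₀, hC₀⟩ := hRcompact.exists_bound_of_continuousOn hΦsc.continuousOn
  have hτsub : ∀ σ ∈ Icc (0:ℝ) a, uIcc t (Θ σ) ⊆ Icc (0:ℝ) b := fun σ hσ => by
    rw [hΘeq σ hσ]; exact uIcc_subset_Icc htI (hmaps σ hσ)
  -- derivative of the inner integral in the parameter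
  have hD : ∀ σ ∈ Icc (0:ℝ) a, ∀ x ∈ Ioo (0:ℝ) a,
      HasDerivAt (fun x' => ∫ τ in t..Θ σ, Φ ((x', t), (σ, τ)))
        (∫ τ in t..Θ σ, Φs ((x, t), (σ, τ))) x := by
    intro σ hσ x hx
    obtain ⟨ε', hε'pos, hε'ball⟩ : ∃ ε' > 0, ball x ε' ⊆ Ioo 0 a :=
      Metric.isOpen_iff.1 isOpen_Ioo x hx
    have hIsub : uIoc t (Θ σ) ⊆ Icc (0:ℝ) b := uIoc_subset_uIcc.trans (hτsub σ hσ)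
    refine (intervalIntegral.hasDerivAt_integral_of_dominated_loc_of_deriv_le
      (F := fun x' τ => Φ ((x', t), (σ, τ))) (F' := fun x' τ => Φs ((x', t), (σ, τ)))
      (bound := fun _ => C₀) (μ := volume) (a := t) (b := Θ σ) (x₀ := x)
      (ball_mem_nhds x hε'pos) ?_ ?_ ?_ ?_ ?_ ?_).2
    · exact Eventually.of_forall fun x' => (hΦc.comp
        (continuous_const.prodMk (continuous_const.prodMk continuous_id))).aestronglyMeasurable
    · exact (hΦc.comp
        (continuous_const.prodMk (continuous_const.prodMk continuous_id))).intervalIntegrable _ _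
    · exact (hΦsc.comp
        (continuous_const.prodMk (continuous_const.prodMk continuous_id))).aestronglyMeasurable
    · exact ae_of_all _ fun τ hτ x' hx' =>
        hC₀ _ (hmemR x' (Ioo_subset_Icc_self (hε'ball hx')) σ hσ τ (hIsub hτ))
    · exact intervalIntegrable_const
    · refine ae_of_all _ fun τ hτ x' hx' => ?_
      have hx'I : x' ∈ Ioo (0:ℝ) a := hε'ball hx'
      have hτb : τ ∈ Icc (0:ℝ) b := hIsub hτ
      have hd := hφderiv x' (Ioo_subset_Icc_self hx'I) t htI σ hσ τ hτb
      have hd' : HasDerivWithinAt (fun x'' => Φ ((x'', t), (σ, τ))) (φs x' t σ τ) (Icc 0 a) x' :=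
        hd.congr (fun y hy => hΦeq _ (hmemR y hy σ hσ τ hτb))
          (hΦeq _ (hmemR x' (Ioo_subset_Icc_self hx'I) σ hσ τ hτb))
      have hfull := hd'.hasDerivAt (Icc_mem_nhds hx'I.1 hx'I.2)
      rwa [← hΦseq _ (hmemR x' (Ioo_subset_Icc_self hx'I) σ hσ τ hτb)] at hfull
  -- apply the core lemma
  have hF₀ := coreDeriv a (ϑ₁ t) s ⟨hs0, hsa⟩ hcI
    (fun x σ => ∫ τ in t..Θ σ, Φ ((x, t), (σ, τ)))
    (fun x σ => ∫ τ in t..Θ σ, Φs ((x, t), (σ, τ))) hgc hgsc hD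
  -- transfer back to φ
  have hinner : ∀ x ∈ Icc (0:ℝ) a, ∀ σ ∈ Icc (0:ℝ) a,
      (∫ τ in t..ϑ₂ σ, φ x t σ τ) = ∫ τ in t..Θ σ, Φ ((x, t), (σ, τ)) := by
    intro x hx σ hσ
    rw [hΘeq σ hσ]
    refine intervalIntegral.integral_congr fun τ hτ => ?_
    exact (hΦeq _ (hmemR x hx σ hσ τ (uIcc_subset_Icc htI (hmaps σ hσ) hτ))).symm
  have hinner_s : ∀ σ ∈ Icc (0:ℝ) a,
      (∫ τ in t..ϑ₂ σ, φs s t σ τ) = ∫ τ in t..Θ σ, Φs ((s, t), (σ, τ)) := by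
    intro σ hσ
    rw [hΘeq σ hσ]
    refine intervalIntegral.integral_congr fun τ hτ => ?_
    exact (hΦseq _ (hmemR s hsI σ hσ τ (uIcc_subset_Icc htI (hmaps σ hσ) hτ))).symm
  have hevent : (fun x => ∫ σ in x..ϑ₁ t, ∫ τ in t..ϑ₂ σ, φ x t σ τ)
      =ᶠ[𝓝 s] fun x => ∫ σ in x..ϑ₁ t, ∫ τ in t..Θ σ, Φ ((x, t), (σ, τ)) := by
    filter_upwards [Ioo_mem_nhds hs0 hsa] with x hx
    refine intervalIntegral.integral_congr fun σ hσ => ?_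
    exact hinner x (Ioo_subset_Icc_self hx) σ
      (uIcc_subset_Icc (Ioo_subset_Icc_self hx) hcI hσ)
  have final := hF₀.congr_of_eventuallyEq hevent
  have hval : -(∫ τ in t..ϑ₂ s, φ s t s τ) + (∫ σ in s..ϑ₁ t, ∫ τ in t..ϑ₂ σ, φs s t σ τ)
      = (∫ σ in s..ϑ₁ t, ∫ τ in t..Θ σ, Φs ((s, t), (σ, τ)))
        - ∫ τ in t..Θ s, Φ ((s, t), (s, τ)) := by
    rw [hinner s hsI s hsI,
      intervalIntegral.integral_congr (fun σ hσ => hinner_s σ (uIcc_subset_Icc hsI hcI hσ))]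
    ring
  rw [hval]
  exact final
end

section
/- Let a, b > 0 and let ϑ₂ : [0,a] → [0,b] be a C¹ strictly decreasing bijection onto [0,b] with inverse ϑ₁ : [0,b] → [0,a]. Let φ = φ(s,t,σ,τ) be continuous on ([0,a]×[0,b])², twice continuously differentiable in (s,t) with continuous ∂φ/∂s, ∂φ/∂t, ∂²φ/∂s∂t. Define F(s,t) := ∫_s^{ϑ₁(t)} ∫_t^{ϑ₂(σ)} φ(s,t,σ,τ) dτ dσ. Then for every (s,t) with 0 < s < a, 0 < t < ϑ₂(s), the mixed second derivative of F exists and ∂²F/∂s∂t (s,t) = φ(s,t,s,t) − ∫_s^{ϑ₁(t)} (∂φ/∂s)(s,t,σ,t) dσ − ∫_t^{ϑ₂(s)} (∂φ/∂t)(s,t,s,τ) dτ + ∫_s^{ϑ₁(t)} ∫_t^{ϑ₂(σ)} (∂²φ/∂s∂t)(s,t,σ,τ) dτ dσ. -/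
open Set MeasureTheory intervalIntegral Function

/-- Clamp a real number into `[0, a]`. -/
def myClamp (a x : ℝ) : ℝ := max 0 (min a x)

lemma myClamp_mem {a : ℝ} (ha : 0 ≤ a) (x : ℝ) : myClamp a x ∈ Icc 0 a :=
  ⟨le_max_left _ _, max_le ha (min_le_left _ _)⟩

lemma myClamp_eq {a x : ℝ} (hx : x ∈ Icc 0 a) : myClamp a x = x := by
  unfold myClamp
  rw [min_eq_right hx.2, max_eq_right hx.1]

lemma myClamp_cont (a : ℝ) : Continuous (myClamp a) := by
  unfold myClamp; fun_prop

/-- The clamped extension of a four-variable function. -/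
def psi (a b : ℝ) (F : ℝ → ℝ → ℝ → ℝ → ℝ) (s t σ τ : ℝ) : ℝ :=
  F (myClamp a s) (myClamp b t) (myClamp a σ) (myClamp b τ)

lemma psi_eq_of_mem {a b : ℝ} (F : ℝ → ℝ → ℝ → ℝ → ℝ) {s t σ τ : ℝ}
    (hs : s ∈ Icc 0 a) (ht : t ∈ Icc 0 b) (hσ : σ ∈ Icc 0 a) (hτ : τ ∈ Icc 0 b) :
    psi a b F s t σ τ = F s t σ τ := by
  unfold psi
  rw [myClamp_eq hs, myClamp_eq ht, myClamp_eq hσ, myClamp_eq hτ]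

lemma psi_cont {a b : ℝ} (ha : 0 ≤ a) (hb : 0 ≤ b) {F : ℝ → ℝ → ℝ → ℝ → ℝ}
    (hF : ContinuousOn (fun q : (ℝ × ℝ) × ℝ × ℝ => F q.1.1 q.1.2 q.2.1 q.2.2)
      ((Icc 0 a ×ˢ Icc 0 b) ×ˢ (Icc 0 a ×ˢ Icc 0 b))) :
    Continuous (fun q : (ℝ × ℝ) × ℝ × ℝ => psi a b F q.1.1 q.1.2 q.2.1 q.2.2) := by
  have : Continuous (fun q : (ℝ × ℝ) × ℝ × ℝ =>
      ((myClamp a q.1.1, myClamp b q.1.2), (myClamp a q.2.1, myClamp b q.2.2))) := by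
    refine Continuous.prodMk (Continuous.prodMk ?_ ?_) (Continuous.prodMk ?_ ?_) <;>
      exact (myClamp_cont _).comp (by fun_prop)
  exact hF.comp_continuous this
    (fun q => ⟨⟨myClamp_mem ha _, myClamp_mem hb _⟩, myClamp_mem ha _, myClamp_mem hb _⟩)

lemma cont4 {F : ℝ → ℝ → ℝ → ℝ → ℝ}
    (hF : Continuous (fun q : (ℝ × ℝ) × ℝ × ℝ => F q.1.1 q.1.2 q.2.1 q.2.2))
    {X : Type*} [TopologicalSpace X] {m₁ m₂ m₃ m₄ : X → ℝ}
    (h₁ : Continuous m₁) (h₂ : Continuous m₂) (h₃ : Continuous m₃) (h₄ : Continuous m₄) :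
    Continuous fun x => F (m₁ x) (m₂ x) (m₃ x) (m₄ x) :=
  hF.comp ((h₁.prodMk h₂).prodMk (h₃.prodMk h₄))

lemma ball_subset_Ioo {lo hi c : ℝ} (hc : c ∈ Ioo lo hi) :
    0 < min (c - lo) (hi - c) ∧ Metric.ball c (min (c - lo) (hi - c)) ⊆ Ioo lo hi := by
  refine ⟨lt_min (by linarith [hc.1]) (by linarith [hc.2]), fun y hy => ?_⟩
  rw [Metric.mem_ball, Real.dist_eq] at hy
  have h1 := abs_lt.1 hy
  exact ⟨by linarith [h1.1, min_le_left (c - lo) (hi - c)],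
    by linarith [h1.2, min_le_right (c - lo) (hi - c)]⟩

/-- Derivative of the clamped extension in the first variable. -/
lemma psi_d1 {a b : ℝ} {F Fs : ℝ → ℝ → ℝ → ℝ → ℝ}
    (hds : ∀ s ∈ Icc (0:ℝ) a, ∀ t ∈ Icc (0:ℝ) b, ∀ σ ∈ Icc (0:ℝ) a, ∀ τ ∈ Icc (0:ℝ) b,
      HasDerivWithinAt (fun s' => F s' t σ τ) (Fs s t σ τ) (Icc 0 a) s)
    (ha : 0 ≤ a) (hb : 0 ≤ b) {x : ℝ} (hx : x ∈ Ioo 0 a) (t σ τ : ℝ) :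
    HasDerivAt (fun y => psi a b F y t σ τ) (psi a b Fs x t σ τ) x := by
  have h := (hds x (Ioo_subset_Icc_self hx) _ (myClamp_mem hb t) _ (myClamp_mem ha σ)
    _ (myClamp_mem hb τ)).hasDerivAt (Icc_mem_nhds hx.1 hx.2)
  have hval : psi a b Fs x t σ τ
      = Fs x (myClamp b t) (myClamp a σ) (myClamp b τ) := by
    unfold psi; rw [myClamp_eq (Ioo_subset_Icc_self hx)]
  rw [hval]
  apply h.congr_of_eventuallyEq
  filter_upwards [Icc_mem_nhds hx.1 hx.2] with y hy
  unfold psi; rw [myClamp_eq hy]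

/-- Derivative of the clamped extension in the second variable. -/
lemma psi_d2 {a b : ℝ} {F Ft : ℝ → ℝ → ℝ → ℝ → ℝ}
    (hdt : ∀ s ∈ Icc (0:ℝ) a, ∀ t ∈ Icc (0:ℝ) b, ∀ σ ∈ Icc (0:ℝ) a, ∀ τ ∈ Icc (0:ℝ) b,
      HasDerivWithinAt (fun t' => F s t' σ τ) (Ft s t σ τ) (Icc 0 b) t)
    (ha : 0 ≤ a) (hb : 0 ≤ b) {x : ℝ} (hx : x ∈ Ioo 0 b) (s σ τ : ℝ) :
    HasDerivAt (fun y => psi a b F s y σ τ) (psi a b Ft s x σ τ) x := by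
  have h := (hdt _ (myClamp_mem ha s) x (Ioo_subset_Icc_self hx) _ (myClamp_mem ha σ)
    _ (myClamp_mem hb τ)).hasDerivAt (Icc_mem_nhds hx.1 hx.2)
  have hval : psi a b Ft s x σ τ
      = Ft (myClamp a s) x (myClamp a σ) (myClamp b τ) := by
    unfold psi; rw [myClamp_eq (Ioo_subset_Icc_self hx)]
  rw [hval]
  apply h.congr_of_eventuallyEq
  filter_upwards [Icc_mem_nhds hx.1 hx.2] with y hy
  unfold psi; rw [myClamp_eq hy]



/-- Differentiation under the interval integral with fixed limits. -/
lemma my_param_deriv {f f' : ℝ → ℝ → ℝ} (hf : Continuous (uncurry f))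
    (hf' : Continuous (uncurry f')) {x ε : ℝ} (c d : ℝ) (hε : 0 < ε)
    (hder : ∀ x' ∈ Metric.ball x ε, ∀ σ : ℝ, HasDerivAt (fun y => f y σ) (f' x' σ) x') :
    HasDerivAt (fun y => ∫ σ in c..d, f y σ) (∫ σ in c..d, f' x σ) x := by
  obtain ⟨M, hM⟩ : ∃ M, ∀ p ∈ Metric.closedBall x (ε/2) ×ˢ uIcc c d, ‖uncurry f' p‖ ≤ M :=
    ((isCompact_closedBall x (ε/2)).prod isCompact_uIcc).exists_bound_of_continuousOn
      hf'.continuousOn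
  refine (intervalIntegral.hasDerivAt_integral_of_dominated_loc_of_deriv_le (F := f)
      (F' := f') (bound := fun _ => M) (Metric.ball_mem_nhds x (half_pos hε))
      (Filter.Eventually.of_forall fun x' => (hf.uncurry_left x').aestronglyMeasurable)
      ((hf.uncurry_left x).intervalIntegrable c d)
      (hf'.uncurry_left x).aestronglyMeasurable
      (Filter.Eventually.of_forall fun σ hσ x' hx' => ?_)
      (intervalIntegrable_const)
      (Filter.Eventually.of_forall fun σ _ x' hx' =>
        hder x' (Metric.ball_subset_ball (by linarith) hx') σ)).2
  exact hM (x', σ) ⟨Metric.ball_subset_closedBall hx', uIoc_subset_uIcc hσ⟩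

/-- Derivative of `y ↦ ∫_y^c g(y,σ) dσ` at `x`: equals `∫_x^c ∂₁g(x,σ) dσ - g(x,x)`. -/
lemma my_corner_deriv {g g' : ℝ → ℝ → ℝ} (hg : Continuous (uncurry g))
    (hg' : Continuous (uncurry g')) {x ε : ℝ} (c : ℝ) (hε : 0 < ε)
    (hder : ∀ x' ∈ Metric.ball x ε, ∀ σ : ℝ, HasDerivAt (fun y => g y σ) (g' x' σ) x') :
    HasDerivAt (fun y => ∫ σ in y..c, g y σ) ((∫ σ in x..c, g' x σ) - g x x) x := by
  have hint : ∀ y u v : ℝ, IntervalIntegrable (g y) MeasureTheory.volume u v :=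
    fun y u v => (hg.uncurry_left y).intervalIntegrable u v
  have h1 : HasDerivAt (fun y => ∫ σ in x..c, g y σ) (∫ σ in x..c, g' x σ) x :=
    my_param_deriv hg hg' x c hε hder
  have hW : HasDerivAt (fun y => ∫ σ in x..y, g y σ) (g x x) x := by
    rw [hasDerivAt_iff_isLittleO]
    rw [Asymptotics.isLittleO_iff]
    intro C hC
    obtain ⟨δ, hδ, hδ'⟩ := Metric.continuousAt_iff.1 (hg.continuousAt (x := (x, x)))
      C hC
    filter_upwards [Metric.ball_mem_nhds x hδ] with y hy
    have h0 : (∫ σ in x..x, g x σ) = 0 := intervalIntegral.integral_same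
    rw [h0]
    have hconst : (∫ σ in x..y, g x x) = (y - x) • g x x := by
      simp [intervalIntegral.integral_const]
    rw [sub_zero, ← hconst, ← intervalIntegral.integral_sub (hint y x y)
      intervalIntegrable_const]
    have hb : ∀ σ ∈ uIoc x y, ‖g y σ - g x x‖ ≤ C := by
      intro σ hσ
      have hσ' : σ ∈ uIcc x y := uIoc_subset_uIcc hσ
      have h1 : |σ - x| ≤ |y - x| := by
        have := abs_sub_left_of_mem_uIcc hσ'
        simpa using this
      have hd : dist (y, σ) (x, x) < δ := by
        rw [Prod.dist_eq]
        simp only [Real.dist_eq]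
        exact max_lt (by simpa [Real.dist_eq] using hy)
          (lt_of_le_of_lt h1 (by simpa [Real.dist_eq] using hy))
      exact le_of_lt (by simpa [Real.dist_eq, dist_eq_norm] using hδ' hd)
    calc ‖∫ σ in x..y, (g y σ - g x x)‖ ≤ C * |y - x| :=
          intervalIntegral.norm_integral_le_of_norm_le_const hb
      _ = C * ‖y - x‖ := by rw [Real.norm_eq_abs]
  have heq : (fun y => ∫ σ in y..c, g y σ)
      = fun y => (∫ σ in x..c, g y σ) - ∫ σ in x..y, g y σ := by
    funext y
    rw [eq_sub_iff_add_eq, add_comm, intervalIntegral.integral_add_adjacent_intervals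
      (hint y x y) (hint y y c)]
  rw [heq]
  exact h1.sub hW



/-- Joint continuity of a parametric interval integral with both limits varying. -/
lemma my_param_cont {X : Type*} [TopologicalSpace X] {f : X → ℝ → ℝ}
    (hf : Continuous (uncurry f)) {u v : X → ℝ} (hu : Continuous u) (hv : Continuous v) :
    Continuous fun x => ∫ τ in u x..v x, f x τ := by
  have h0 : (fun x => ∫ τ in u x..v x, f x τ)
      = fun x => (∫ τ in (0:ℝ)..v x, f x τ) - ∫ τ in (0:ℝ)..u x, f x τ := by
    funext x
    rw [intervalIntegral.integral_interval_sub_left ((hf.uncurry_left x).intervalIntegrable _ _)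
      ((hf.uncurry_left x).intervalIntegrable _ _)]
  rw [h0]
  exact (continuous_parametric_intervalIntegral_of_continuous hf hv).sub
    (continuous_parametric_intervalIntegral_of_continuous hf hu)

/-- Continuity of the inverse of a continuous bijection between compact intervals. -/
lemma my_inv_cont {a b : ℝ} (ϑ₂ ϑ₁ : ℝ → ℝ)
    (hc : ContinuousOn ϑ₂ (Icc 0 a))
    (hϑimg : ϑ₂ '' Icc 0 a = Icc 0 b)
    (hinv₁ : ∀ s ∈ Icc (0:ℝ) a, ϑ₁ (ϑ₂ s) = s)
    (hinv₂ : ∀ t ∈ Icc (0:ℝ) b, ϑ₂ (ϑ₁ t) = t)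
    (hϑ₁maps : ∀ t ∈ Icc (0:ℝ) b, ϑ₁ t ∈ Icc (0:ℝ) a) :
    ContinuousOn ϑ₁ (Icc 0 b) := by
  have hmem : ∀ x : Icc (0:ℝ) a, ϑ₂ ↑x ∈ Icc 0 b := by
    intro x; rw [← hϑimg]; exact mem_image_of_mem _ x.2
  let e : Icc (0:ℝ) a ≃ Icc (0:ℝ) b :=
    { toFun := fun x => ⟨ϑ₂ x, hmem x⟩
      invFun := fun y => ⟨ϑ₁ y, hϑ₁maps _ y.2⟩
      left_inv := fun x => Subtype.ext (hinv₁ _ x.2)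
      right_inv := fun y => Subtype.ext (hinv₂ _ y.2) }
  have he : Continuous e := by
    apply Continuous.subtype_mk
    exact hc.restrict
  have h2 : Continuous (Continuous.homeoOfEquivCompactToT2 (f := e) he).symm :=
    (Continuous.homeoOfEquivCompactToT2 (f := e) he).symm.continuous
  rw [continuousOn_iff_continuous_restrict]
  have : (Icc 0 b).domRestrict ϑ₁ = Subtype.val ∘ (Continuous.homeoOfEquivCompactToT2
      (f := e) he).symm := rfl
  rw [this]
  exact continuous_subtype_val.comp h2

/-- The mixed second-order differentiation formula (A.8) for the
parameter-dependent double integral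
`F(s,t) = ∫_s^{ϑ₁(t)} ∫_t^{ϑ₂(σ)} φ(s,t,σ,τ) dτ dσ`. -/
theorem mixed_deriv_double_integral_moving_corner
    (a b : ℝ) (ha : 0 < a) (hb : 0 < b)
    (ϑ₂ ϑ₁ : ℝ → ℝ)
    (hϑC1 : ContDiffOn ℝ 1 ϑ₂ (Icc 0 a))
    (hϑanti : StrictAntiOn ϑ₂ (Icc 0 a))
    (hϑimg : ϑ₂ '' Icc 0 a = Icc 0 b)
    (hinv₁ : ∀ s ∈ Icc (0:ℝ) a, ϑ₁ (ϑ₂ s) = s)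
    (hinv₂ : ∀ t ∈ Icc (0:ℝ) b, ϑ₂ (ϑ₁ t) = t)
    (hϑ₁maps : ∀ t ∈ Icc (0:ℝ) b, ϑ₁ t ∈ Icc (0:ℝ) a)
    (φ φs φt φst : ℝ → ℝ → ℝ → ℝ → ℝ)
    (hφ : ContinuousOn (fun q : (ℝ × ℝ) × ℝ × ℝ => φ q.1.1 q.1.2 q.2.1 q.2.2)
      ((Icc 0 a ×ˢ Icc 0 b) ×ˢ (Icc 0 a ×ˢ Icc 0 b)))
    (hφs : ContinuousOn (fun q : (ℝ × ℝ) × ℝ × ℝ => φs q.1.1 q.1.2 q.2.1 q.2.2)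
      ((Icc 0 a ×ˢ Icc 0 b) ×ˢ (Icc 0 a ×ˢ Icc 0 b)))
    (hφt : ContinuousOn (fun q : (ℝ × ℝ) × ℝ × ℝ => φt q.1.1 q.1.2 q.2.1 q.2.2)
      ((Icc 0 a ×ˢ Icc 0 b) ×ˢ (Icc 0 a ×ˢ Icc 0 b)))
    (hφst : ContinuousOn (fun q : (ℝ × ℝ) × ℝ × ℝ => φst q.1.1 q.1.2 q.2.1 q.2.2)
      ((Icc 0 a ×ˢ Icc 0 b) ×ˢ (Icc 0 a ×ˢ Icc 0 b)))
    (hds : ∀ s ∈ Icc (0:ℝ) a, ∀ t ∈ Icc (0:ℝ) b, ∀ σ ∈ Icc (0:ℝ) a, ∀ τ ∈ Icc (0:ℝ) b,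
      HasDerivWithinAt (fun s' => φ s' t σ τ) (φs s t σ τ) (Icc 0 a) s)
    (hdt : ∀ s ∈ Icc (0:ℝ) a, ∀ t ∈ Icc (0:ℝ) b, ∀ σ ∈ Icc (0:ℝ) a, ∀ τ ∈ Icc (0:ℝ) b,
      HasDerivWithinAt (fun t' => φ s t' σ τ) (φt s t σ τ) (Icc 0 b) t)
    (hdst : ∀ s ∈ Icc (0:ℝ) a, ∀ t ∈ Icc (0:ℝ) b, ∀ σ ∈ Icc (0:ℝ) a, ∀ τ ∈ Icc (0:ℝ) b,
      HasDerivWithinAt (fun t' => φs s t' σ τ) (φst s t σ τ) (Icc 0 b) t) :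
    ∃ Fs : ℝ → ℝ → ℝ,
      (∀ s' ∈ Ioo (0:ℝ) a, ∀ t' ∈ Ioo (0:ℝ) (ϑ₂ s'),
        HasDerivAt (fun σ' => ∫ σ in σ'..ϑ₁ t', ∫ τ in t'..ϑ₂ σ, φ σ' t' σ τ)
          (Fs s' t') s') ∧
      (∀ s ∈ Ioo (0:ℝ) a, ∀ t ∈ Ioo (0:ℝ) (ϑ₂ s),
        HasDerivAt (fun t' => Fs s t')
          (φ s t s t - (∫ σ in s..ϑ₁ t, φs s t σ t) - (∫ τ in t..ϑ₂ s, φt s t s τ) +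
            ∫ σ in s..ϑ₁ t, ∫ τ in t..ϑ₂ σ, φst s t σ τ) t) := by
  -- basic facts
  have hϑ₂mem : ∀ x ∈ Icc (0:ℝ) a, ϑ₂ x ∈ Icc (0:ℝ) b := fun x hx =>
    hϑimg ▸ mem_image_of_mem _ hx
  have hθ₂c : Continuous (fun σ => ϑ₂ (myClamp a σ)) :=
    hϑC1.continuousOn.comp_continuous (myClamp_cont a) (myClamp_mem ha.le)
  have hϑ₁cont : ContinuousOn ϑ₁ (Icc 0 b) :=
    my_inv_cont ϑ₂ ϑ₁ hϑC1.continuousOn hϑimg hinv₁ hinv₂ hϑ₁maps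
  have hθ₁c : Continuous (fun t => ϑ₁ (myClamp b t)) :=
    hϑ₁cont.comp_continuous (myClamp_cont b) (myClamp_mem hb.le)
  have hψc := psi_cont ha.le hb.le hφ
  have hψsc := psi_cont ha.le hb.le hφs
  have hψtc := psi_cont ha.le hb.le hφt
  have hψstc := psi_cont ha.le hb.le hφst
  refine ⟨fun s t => -(∫ τ in t..ϑ₂ (myClamp a s), psi a b φ s t s τ) +
      ∫ σ in s..ϑ₁ (myClamp b t), ∫ τ in t..ϑ₂ (myClamp a σ), psi a b φs s t σ τ, ?_, ?_⟩
  · -- PART 1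
    intro s' hs' t' ht'
    have hs'I : s' ∈ Icc (0:ℝ) a := Ioo_subset_Icc_self hs'
    have hϑ₂s' : ϑ₂ s' ∈ Icc (0:ℝ) b := hϑ₂mem s' hs'I
    have ht'I : t' ∈ Icc (0:ℝ) b := ⟨ht'.1.le, ht'.2.le.trans hϑ₂s'.2⟩
    -- pointwise derivative of g in the parameter
    have hgder : ∀ x' ∈ Ioo (0:ℝ) a, ∀ σ : ℝ,
        HasDerivAt (fun y => ∫ τ in t'..ϑ₂ (myClamp a σ), psi a b φ y t' σ τ)
          (∫ τ in t'..ϑ₂ (myClamp a σ), psi a b φs x' t' σ τ) x' := by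
      intro x' hx' σ
      obtain ⟨hε', hb'⟩ := ball_subset_Ioo hx'
      exact my_param_deriv (f := fun y τ => psi a b φ y t' σ τ)
        (f' := fun y τ => psi a b φs y t' σ τ)
        (cont4 hψc continuous_fst continuous_const continuous_const continuous_snd)
        (cont4 hψsc continuous_fst continuous_const continuous_const continuous_snd)
        t' (ϑ₂ (myClamp a σ)) hε'
        (fun x'' hx'' τ => psi_d1 hds ha.le hb.le (hb' hx'') t' σ τ)
    -- joint continuity of g and g'
    have hGc : Continuous (uncurry fun (y σ : ℝ) =>
        ∫ τ in t'..ϑ₂ (myClamp a σ), psi a b φ y t' σ τ) :=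
      my_param_cont (f := fun p : ℝ × ℝ => fun τ => psi a b φ p.1 t' p.2 τ)
        (cont4 hψc (continuous_fst.comp continuous_fst) continuous_const
          (continuous_snd.comp continuous_fst) continuous_snd)
        continuous_const (hθ₂c.comp continuous_snd)
    have hG'c : Continuous (uncurry fun (y σ : ℝ) =>
        ∫ τ in t'..ϑ₂ (myClamp a σ), psi a b φs y t' σ τ) :=
      my_param_cont (f := fun p : ℝ × ℝ => fun τ => psi a b φs p.1 t' p.2 τ)
        (cont4 hψsc (continuous_fst.comp continuous_fst) continuous_const
          (continuous_snd.comp continuous_fst) continuous_snd)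
        continuous_const (hθ₂c.comp continuous_snd)
    obtain ⟨hε, hbs⟩ := ball_subset_Ioo hs'
    have hmain := my_corner_deriv
      (g := fun y σ => ∫ τ in t'..ϑ₂ (myClamp a σ), psi a b φ y t' σ τ)
      (g' := fun y σ => ∫ τ in t'..ϑ₂ (myClamp a σ), psi a b φs y t' σ τ)
      hGc hG'c (ϑ₁ (myClamp b t')) hε (fun x' hx' σ => hgder x' (hbs hx') σ)
    have hval : (∫ σ in s'..ϑ₁ (myClamp b t'), ∫ τ in t'..ϑ₂ (myClamp a σ),
          psi a b φs s' t' σ τ) - (∫ τ in t'..ϑ₂ (myClamp a s'), psi a b φ s' t' s' τ)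
        = -(∫ τ in t'..ϑ₂ (myClamp a s'), psi a b φ s' t' s' τ) +
          ∫ σ in s'..ϑ₁ (myClamp b t'), ∫ τ in t'..ϑ₂ (myClamp a σ),
            psi a b φs s' t' σ τ := by ring
    rw [hval] at hmain
    apply hmain.congr_of_eventuallyEq
    filter_upwards [Icc_mem_nhds hs'.1 hs'.2] with y hy
    rw [myClamp_eq ht'I]
    apply intervalIntegral.integral_congr
    intro σ hσ
    have hσI : σ ∈ Icc (0:ℝ) a := uIcc_subset_Icc hy (hϑ₁maps t' ht'I) hσ
    dsimp only
    rw [myClamp_eq hσI]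
    apply intervalIntegral.integral_congr
    intro τ hτ
    have hτI : τ ∈ Icc (0:ℝ) b := uIcc_subset_Icc ht'I (hϑ₂mem σ hσI) hτ
    exact (psi_eq_of_mem φ hy ht'I hσI hτI).symm
  · -- PART 2
    intro s hs t ht
    have hsI : s ∈ Icc (0:ℝ) a := Ioo_subset_Icc_self hs
    have hϑ₂s : ϑ₂ s ∈ Icc (0:ℝ) b := hϑ₂mem s hsI
    have htb : t ∈ Ioo (0:ℝ) b := ⟨ht.1, lt_of_lt_of_le ht.2 hϑ₂s.2⟩
    have htI : t ∈ Icc (0:ℝ) b := Ioo_subset_Icc_self htb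
    obtain ⟨hεt, hbt⟩ := ball_subset_Ioo htb
    -- derivative of A
    have hA : HasDerivAt (fun y => ∫ τ in y..ϑ₂ (myClamp a s), psi a b φ s y s τ)
        ((∫ τ in t..ϑ₂ (myClamp a s), psi a b φt s t s τ) - psi a b φ s t s t) t :=
      my_corner_deriv (g := fun y τ => psi a b φ s y s τ)
        (g' := fun y τ => psi a b φt s y s τ)
        (cont4 hψc continuous_const continuous_fst continuous_const continuous_snd)
        (cont4 hψtc continuous_const continuous_fst continuous_const continuous_snd)
        (ϑ₂ (myClamp a s)) hεt
        (fun y hy τ => psi_d2 hdt ha.le hb.le (hbt hy) s s τ)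
    -- pointwise derivative of G in its first argument
    have hGder : ∀ y ∈ Ioo (0:ℝ) b, ∀ σ : ℝ,
        HasDerivAt (fun z => ∫ τ in z..ϑ₂ (myClamp a σ), psi a b φs s z σ τ)
          ((∫ τ in y..ϑ₂ (myClamp a σ), psi a b φst s y σ τ) - psi a b φs s y σ y) y := by
      intro y hy σ
      obtain ⟨hε', hb'⟩ := ball_subset_Ioo hy
      exact my_corner_deriv (g := fun z τ => psi a b φs s z σ τ)
        (g' := fun z τ => psi a b φst s z σ τ)
        (cont4 hψsc continuous_const continuous_fst continuous_const continuous_snd)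
        (cont4 hψstc continuous_const continuous_fst continuous_const continuous_snd)
        (ϑ₂ (myClamp a σ)) hε'
        (fun z hz τ => psi_d2 hdst ha.le hb.le (hb' hz) s σ τ)
    -- joint continuity of G and G'
    have hGc : Continuous (uncurry fun (y σ : ℝ) =>
        ∫ τ in y..ϑ₂ (myClamp a σ), psi a b φs s y σ τ) :=
      my_param_cont (f := fun p : ℝ × ℝ => fun τ => psi a b φs s p.1 p.2 τ)
        (cont4 hψsc continuous_const (continuous_fst.comp continuous_fst)
          (continuous_snd.comp continuous_fst) continuous_snd)
        continuous_fst (hθ₂c.comp continuous_snd)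
    have hG'c : Continuous (uncurry fun (y σ : ℝ) =>
        (∫ τ in y..ϑ₂ (myClamp a σ), psi a b φst s y σ τ) - psi a b φs s y σ y) :=
      (my_param_cont (f := fun p : ℝ × ℝ => fun τ => psi a b φst s p.1 p.2 τ)
        (cont4 hψstc continuous_const (continuous_fst.comp continuous_fst)
          (continuous_snd.comp continuous_fst) continuous_snd)
        continuous_fst (hθ₂c.comp continuous_snd)).sub
        (cont4 hψsc continuous_const continuous_fst continuous_snd continuous_fst)
    -- derivative of B1
    have hB1 : HasDerivAt (fun y => ∫ σ in s..ϑ₁ (myClamp b t),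
          ∫ τ in y..ϑ₂ (myClamp a σ), psi a b φs s y σ τ)
        (∫ σ in s..ϑ₁ (myClamp b t),
          ((∫ τ in t..ϑ₂ (myClamp a σ), psi a b φst s t σ τ) - psi a b φs s t σ t)) t :=
      my_param_deriv (f := fun y σ => ∫ τ in y..ϑ₂ (myClamp a σ), psi a b φs s y σ τ)
        (f' := fun y σ => (∫ τ in y..ϑ₂ (myClamp a σ), psi a b φst s y σ τ)
          - psi a b φs s y σ y)
        hGc hG'c s (ϑ₁ (myClamp b t)) hεt (fun y hy σ => hGder y (hbt hy) σ)
    -- bound on ψs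
    obtain ⟨M, hM⟩ : ∃ M : ℝ, ∀ p ∈ (Icc 0 a ×ˢ Icc 0 b) ×ˢ (Icc 0 a ×ˢ Icc 0 b),
        ‖(fun q : (ℝ × ℝ) × ℝ × ℝ => φs q.1.1 q.1.2 q.2.1 q.2.2) p‖ ≤ M :=
      IsCompact.exists_bound_of_continuousOn
        ((isCompact_Icc.prod isCompact_Icc).prod (isCompact_Icc.prod isCompact_Icc)) hφs
    have hMψ : ∀ y σ τ : ℝ, ‖psi a b φs s y σ τ‖ ≤ M := by
      intro y σ τ
      unfold psi
      exact hM ((myClamp a s, myClamp b y), (myClamp a σ, myClamp b τ))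
        ⟨⟨myClamp_mem ha.le _, myClamp_mem hb.le _⟩, myClamp_mem ha.le _, myClamp_mem hb.le _⟩
    have hK : (0:ℝ) < M + 1 :=
      lt_of_le_of_lt (norm_nonneg _) (lt_of_le_of_lt (hMψ t s t) (by linarith))
    -- sandwich property for ϑ₂ on uIcc of inverse points
    have hsandwich : ∀ y ∈ Ioo (0:ℝ) b, ∀ σ ∈ uIoc (ϑ₁ (myClamp b t)) (ϑ₁ (myClamp b y)),
        ϑ₂ (myClamp a σ) ∈ uIcc t y := by
      intro y hy σ hσ
      have hyI : y ∈ Icc (0:ℝ) b := Ioo_subset_Icc_self hy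
      rw [myClamp_eq htI, myClamp_eq hyI] at hσ
      have hσ' : σ ∈ uIcc (ϑ₁ t) (ϑ₁ y) := uIoc_subset_uIcc hσ
      have huI : ϑ₁ t ∈ Icc (0:ℝ) a := hϑ₁maps t htI
      have hvI : ϑ₁ y ∈ Icc (0:ℝ) a := hϑ₁maps y hyI
      have hσI : σ ∈ Icc (0:ℝ) a := uIcc_subset_Icc huI hvI hσ'
      rw [myClamp_eq hσI]
      have hanti := hϑanti.antitoneOn
      have hu2 : ϑ₂ (ϑ₁ t) = t := hinv₂ t htI
      have hv2 : ϑ₂ (ϑ₁ y) = y := hinv₂ y hyI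
      rcases le_total (ϑ₁ t) (ϑ₁ y) with huv | huv
      · rw [uIcc_of_le huv] at hσ'
        refine mem_uIcc.2 (Or.inr ⟨?_, ?_⟩)
        · rw [← hv2]; exact hanti hσI hvI hσ'.2
        · rw [← hu2]; exact hanti huI hσI hσ'.1
      · rw [uIcc_of_ge huv] at hσ'
        refine mem_uIcc.2 (Or.inl ⟨?_, ?_⟩)
        · rw [← hu2]; exact hanti hσI huI hσ'.2
        · rw [← hv2]; exact hanti hvI hσI hσ'.1
    -- derivative of B2 is zero
    have hB2 : HasDerivAt (fun y => ∫ σ in ϑ₁ (myClamp b t)..ϑ₁ (myClamp b y),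
        ∫ τ in y..ϑ₂ (myClamp a σ), psi a b φs s y σ τ) 0 t := by
      rw [hasDerivAt_iff_isLittleO]
      simp only [intervalIntegral.integral_same, sub_zero, smul_zero, sub_zero]
      rw [Asymptotics.isLittleO_iff]
      intro C hC
      have hpos : 0 < C / (M + 1) := div_pos hC hK
      have hev : ∀ᶠ y in nhds t, |ϑ₁ (myClamp b y) - ϑ₁ (myClamp b t)| < C / (M + 1) := by
        have hca := hθ₁c.continuousAt (x := t)
        have := hca (Metric.ball_mem_nhds (ϑ₁ (myClamp b t)) hpos)
        filter_upwards [this] with y hy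
        simpa [Real.dist_eq] using hy
      filter_upwards [hev, Ioo_mem_nhds htb.1 htb.2] with y hy1 hy2
      have hGb : ∀ σ ∈ uIoc (ϑ₁ (myClamp b t)) (ϑ₁ (myClamp b y)),
          ‖∫ τ in y..ϑ₂ (myClamp a σ), psi a b φs s y σ τ‖ ≤ (M + 1) * |t - y| := by
        intro σ hσ
        have h1 : ‖∫ τ in y..ϑ₂ (myClamp a σ), psi a b φs s y σ τ‖
            ≤ (M + 1) * |ϑ₂ (myClamp a σ) - y| :=
          intervalIntegral.norm_integral_le_of_norm_le_const
            (fun τ _ => le_trans (hMψ y σ τ) (by linarith))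
        refine h1.trans (mul_le_mul_of_nonneg_left ?_ hK.le)
        have hmem := hsandwich y hy2 σ hσ
        rw [uIcc_comm] at hmem
        exact abs_sub_left_of_mem_uIcc hmem
      have h2 : ‖∫ σ in ϑ₁ (myClamp b t)..ϑ₁ (myClamp b y),
            ∫ τ in y..ϑ₂ (myClamp a σ), psi a b φs s y σ τ‖
          ≤ ((M + 1) * |t - y|) * |ϑ₁ (myClamp b y) - ϑ₁ (myClamp b t)| :=
        intervalIntegral.norm_integral_le_of_norm_le_const hGb
      have h3 : ((M + 1) * |t - y|) * |ϑ₁ (myClamp b y) - ϑ₁ (myClamp b t)|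
          ≤ ((M + 1) * |t - y|) * (C / (M + 1)) :=
        mul_le_mul_of_nonneg_left hy1.le (by positivity)
      have h4 : ((M + 1) * |t - y|) * (C / (M + 1)) = C * |t - y| := by
        field_simp
      rw [Real.norm_eq_abs (y - t), abs_sub_comm y t]
      calc ‖_‖ ≤ _ := h2
        _ ≤ _ := h3
        _ = C * |t - y| := h4
    -- combine
    have hsum := (hA.neg).add (hB1.add hB2)
    -- integrability for splitting the value of B1
    have hI1 : IntervalIntegrable (fun σ => ∫ τ in t..ϑ₂ (myClamp a σ),
        psi a b φst s t σ τ) MeasureTheory.volume s (ϑ₁ (myClamp b t)) :=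
      (my_param_cont (f := fun σ τ => psi a b φst s t σ τ)
        (cont4 hψstc continuous_const continuous_const continuous_fst continuous_snd)
        continuous_const hθ₂c).intervalIntegrable _ _
    have hI2 : IntervalIntegrable (fun σ => psi a b φs s t σ t)
        MeasureTheory.volume s (ϑ₁ (myClamp b t)) :=
      (cont4 hψsc continuous_const continuous_const continuous_id
        continuous_const).intervalIntegrable _ _
    have hvB : (∫ σ in s..ϑ₁ (myClamp b t),
          ((∫ τ in t..ϑ₂ (myClamp a σ), psi a b φst s t σ τ) - psi a b φs s t σ t))
        = (∫ σ in s..ϑ₁ (myClamp b t), ∫ τ in t..ϑ₂ (myClamp a σ), psi a b φst s t σ τ)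
          - ∫ σ in s..ϑ₁ (myClamp b t), psi a b φs s t σ t :=
      intervalIntegral.integral_sub hI1 hI2
    -- ψ → φ conversions
    have hc0 : psi a b φ s t s t = φ s t s t := psi_eq_of_mem φ hsI htI hsI htI
    have hc1 : (∫ τ in t..ϑ₂ (myClamp a s), psi a b φt s t s τ)
        = ∫ τ in t..ϑ₂ s, φt s t s τ := by
      rw [myClamp_eq hsI]
      exact intervalIntegral.integral_congr fun τ hτ =>
        psi_eq_of_mem φt hsI htI hsI (uIcc_subset_Icc htI hϑ₂s hτ)
    have hc2 : (∫ σ in s..ϑ₁ (myClamp b t), psi a b φs s t σ t)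
        = ∫ σ in s..ϑ₁ t, φs s t σ t := by
      rw [myClamp_eq htI]
      exact intervalIntegral.integral_congr fun σ hσ =>
        psi_eq_of_mem φs hsI htI (uIcc_subset_Icc hsI (hϑ₁maps t htI) hσ) htI
    have hc3 : (∫ σ in s..ϑ₁ (myClamp b t), ∫ τ in t..ϑ₂ (myClamp a σ),
          psi a b φst s t σ τ)
        = ∫ σ in s..ϑ₁ t, ∫ τ in t..ϑ₂ σ, φst s t σ τ := by
      rw [myClamp_eq htI]
      apply intervalIntegral.integral_congr
      intro σ hσ
      have hσI : σ ∈ Icc (0:ℝ) a := uIcc_subset_Icc hsI (hϑ₁maps t htI) hσ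
      dsimp only
      rw [myClamp_eq hσI]
      exact intervalIntegral.integral_congr fun τ hτ =>
        psi_eq_of_mem φst hsI htI hσI (uIcc_subset_Icc htI (hϑ₂mem σ hσI) hτ)
    have hval : -((∫ τ in t..ϑ₂ (myClamp a s), psi a b φt s t s τ) - psi a b φ s t s t)
        + ((∫ σ in s..ϑ₁ (myClamp b t),
          ((∫ τ in t..ϑ₂ (myClamp a σ), psi a b φst s t σ τ) - psi a b φs s t σ t)) + 0)
        = φ s t s t - (∫ σ in s..ϑ₁ t, φs s t σ t) - (∫ τ in t..ϑ₂ s, φt s t s τ) +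
          ∫ σ in s..ϑ₁ t, ∫ τ in t..ϑ₂ σ, φst s t σ τ := by
      rw [hvB, hc0, hc1, hc2, hc3]
      ring
    rw [hval] at hsum
    apply hsum.congr_of_eventuallyEq
    apply Filter.Eventually.of_forall
    intro y
    show -(∫ τ in y..ϑ₂ (myClamp a s), psi a b φ s y s τ) +
        (∫ σ in s..ϑ₁ (myClamp b y), ∫ τ in y..ϑ₂ (myClamp a σ), psi a b φs s y σ τ)
      = _
    have hadd : (∫ σ in s..ϑ₁ (myClamp b t), ∫ τ in y..ϑ₂ (myClamp a σ),
          psi a b φs s y σ τ)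
        + (∫ σ in ϑ₁ (myClamp b t)..ϑ₁ (myClamp b y), ∫ τ in y..ϑ₂ (myClamp a σ),
          psi a b φs s y σ τ)
        = ∫ σ in s..ϑ₁ (myClamp b y), ∫ τ in y..ϑ₂ (myClamp a σ), psi a b φs s y σ τ :=
      intervalIntegral.integral_add_adjacent_intervals
        ((hGc.uncurry_left y).intervalIntegrable _ _)
        ((hGc.uncurry_left y).intervalIntegrable _ _)
    rw [← hadd]
    rfl
end

section
/- Let ϑ₂ : [α,β] → ℝ be a C¹ strictly decreasing function with inverse ϑ₁ defined on [ϑ₂(β), ϑ₂(α)]. Let ψ be a real-valued C² function on the curvilinear triangle D := {(σ,τ) : α ≤ σ ≤ β, ϑ₂(β) ≤ τ ≤ ϑ₂(σ)}. Then for every (s,t) ∈ D with t ≤ ϑ₂(s): ψ(s,t) = ½ ( ψ(s,ϑ₂(s)) + ψ(ϑ₁(t),t) ) + ∫_s^{ϑ₁(t)} ∫_t^{ϑ₂(σ)} (∂²ψ/∂σ∂τ)(σ,τ) dτ dσ − ½ ∫_s^{ϑ₁(t)} [ (∂ψ/∂σ)(σ,ϑ₂(σ)) − ϑ₂'(σ)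 (∂ψ/∂τ)(σ,ϑ₂(σ)) ] dσ. -/
open Set MeasureTheory intervalIntegral Topology Filter

/-- FTC-2 for functions with a derivative within the closed interval. -/
private lemma ftc_within {f f' : ℝ → ℝ} {a b : ℝ}
    (hd : ∀ x ∈ Icc a b, HasDerivWithinAt f (f' x) (Icc a b) x)
    (hi : IntervalIntegrable f' volume a b) (hab : a ≤ b) :
    ∫ y in a..b, f' y = f b - f a := by
  refine integral_eq_sub_of_hasDeriv_right_of_le hab
    (fun x hx => (hd x hx).continuousWithinAt) (fun x hx => ?_) hi
  exact (hd x (Ioo_subset_Icc_self hx)).mono_of_mem_nhdsWithin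
    (Icc_mem_nhdsGT_of_mem ⟨hx.1.le, hx.2⟩)

/-- FTC-2, arbitrary endpoint order. -/
private lemma ftc_within' {f f' : ℝ → ℝ} {a b : ℝ}
    (hd : ∀ x ∈ uIcc a b, HasDerivWithinAt f (f' x) (uIcc a b) x)
    (hi : IntervalIntegrable f' volume a b) :
    ∫ y in a..b, f' y = f b - f a := by
  rcases le_total a b with hab | hab
  · rw [uIcc_of_le hab] at hd
    exact ftc_within hd hi hab
  · rw [uIcc_of_ge hab] at hd
    rw [intervalIntegral.integral_symm]
    rw [ftc_within hd hi.symm hab]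
    ring

/-- The Gauss–Green representation (4.18) of a C² function on the
curvilinear triangle `D` bounded by the decreasing curve `τ = ϑ₂(σ)`:
`ψ(s,t) = ½(ψ(B_s) + ψ(A_t)) + ∬_{E(s,t)} ψ_{στ} − ½ ∫_{A_t}^{B_s} ψ_{n*} dμ`. -/
theorem gauss_green_curvilinear_triangle
    (α β : ℝ) (hαβ : α ≤ β)
    (ϑ₂ ϑ₁ d₂ : ℝ → ℝ)
    (hϑanti : StrictAntiOn ϑ₂ (Icc α β))
    (hd₂ : ∀ σ ∈ Icc α β, HasDerivWithinAt ϑ₂ (d₂ σ) (Icc α β) σ)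
    (hd₂cont : ContinuousOn d₂ (Icc α β))
    (hinv₁ : ∀ σ ∈ Icc α β, ϑ₁ (ϑ₂ σ) = σ)
    (hinv₂ : ∀ τ ∈ Icc (ϑ₂ β) (ϑ₂ α), ϑ₂ (ϑ₁ τ) = τ)
    (hϑ₁maps : ∀ τ ∈ Icc (ϑ₂ β) (ϑ₂ α), ϑ₁ τ ∈ Icc α β)
    (D : Set (ℝ × ℝ))
    (hD : D = {p : ℝ × ℝ | α ≤ p.1 ∧ p.1 ≤ β ∧ ϑ₂ β ≤ p.2 ∧ p.2 ≤ ϑ₂ p.1})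
    -- `ψ` is C² on `D`, with first partials `ψσ`, `ψτ` and mixed second partial `ψστ`
    (ψ ψσ ψτ ψστ : ℝ × ℝ → ℝ)
    (hψcont : ContinuousOn ψ D) (hψσcont : ContinuousOn ψσ D)
    (hψτcont : ContinuousOn ψτ D) (hψστcont : ContinuousOn ψστ D)
    (hψσ : ∀ p ∈ D, HasDerivWithinAt (fun σ => ψ (σ, p.2)) (ψσ p)
      {σ : ℝ | (σ, p.2) ∈ D} p.1)
    (hψτ : ∀ p ∈ D, HasDerivWithinAt (fun τ => ψ (p.1, τ)) (ψτ p)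
      {τ : ℝ | (p.1, τ) ∈ D} p.2)
    (hψστ : ∀ p ∈ D, HasDerivWithinAt (fun τ => ψσ (p.1, τ)) (ψστ p)
      {τ : ℝ | (p.1, τ) ∈ D} p.2) :
    ∀ p ∈ D,
      ψ p = (ψ (p.1, ϑ₂ p.1) + ψ (ϑ₁ p.2, p.2)) / 2 +
        (∫ σ in p.1..ϑ₁ p.2, ∫ τ in p.2..ϑ₂ σ, ψστ (σ, τ)) -
        (1 / 2) * ∫ σ in p.1..ϑ₁ p.2,
          (ψσ (σ, ϑ₂ σ) - d₂ σ * ψτ (σ, ϑ₂ σ)) := by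
  have hϑcont : ContinuousOn ϑ₂ (Icc α β) := fun σ hσ => (hd₂ σ hσ).continuousWithinAt
  have hanti : AntitoneOn ϑ₂ (Icc α β) := hϑanti.antitoneOn
  have hβmem : β ∈ Icc α β := ⟨hαβ, le_rfl⟩
  have hαmem : α ∈ Icc α β := ⟨le_rfl, hαβ⟩
  have hmemD : ∀ {x y : ℝ}, α ≤ x → x ≤ β → ϑ₂ β ≤ y → y ≤ ϑ₂ x → (x, y) ∈ D := by
    intro x y h1 h2 h3 h4; rw [hD]; exact ⟨h1, h2, h3, h4⟩
  have hϑβ : ∀ {x : ℝ}, x ∈ Icc α β → ϑ₂ β ≤ ϑ₂ x := fun {x} hx => hanti hx hβmem hx.2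
  have hϑα : ∀ {x : ℝ}, x ∈ Icc α β → ϑ₂ x ≤ ϑ₂ α := fun {x} hx => hanti hαmem hx hx.1
  -- generic vertical FTC on segments of `D`
  have vFTC : ∀ (g gτ : ℝ × ℝ → ℝ), ContinuousOn gτ D →
      (∀ p ∈ D, HasDerivWithinAt (fun τ => g (p.1, τ)) (gτ p) {τ : ℝ | (p.1, τ) ∈ D} p.2) →
      ∀ x ∈ Icc α β, ∀ c ∈ Icc (ϑ₂ β) (ϑ₂ x), ∀ d ∈ Icc (ϑ₂ β) (ϑ₂ x),
      (∫ τ in c..d, gτ (x, τ)) = g (x, d) - g (x, c) := by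
    intro g gτ hgc hgd x hx c hc d hd
    have hsub : uIcc c d ⊆ Icc (ϑ₂ β) (ϑ₂ x) := by
      rw [uIcc]; exact Icc_subset_Icc (le_min hc.1 hd.1) (max_le hc.2 hd.2)
    have hmem : ∀ τ ∈ uIcc c d, (x, τ) ∈ D := fun τ hτ =>
      hmemD hx.1 hx.2 (hsub hτ).1 (hsub hτ).2
    apply ftc_within' (f := fun τ => g (x, τ)) (f' := fun τ => gτ (x, τ))
    · intro y hy
      exact (hgd (x, y) (hmem y hy)).mono fun τ hτ => hmem τ hτ
    · exact (hgc.comp ((Continuous.prodMk_right x).continuousOn)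
        fun τ hτ => hmem τ hτ).intervalIntegrable
  -- generic horizontal FTC on segments of `D`
  have hFTC : ∀ y, ϑ₂ β ≤ y → y ≤ ϑ₂ α →
      ∀ c ∈ Icc α (ϑ₁ y), ∀ d ∈ Icc α (ϑ₁ y),
      (∫ u in c..d, ψσ (u, y)) = ψ (d, y) - ψ (c, y) := by
    intro y hy1 hy2 c hc d hd
    have hϑ₁y : ϑ₁ y ∈ Icc α β := hϑ₁maps y ⟨hy1, hy2⟩
    have hsub : uIcc c d ⊆ Icc α (ϑ₁ y) := by
      rw [uIcc]; exact Icc_subset_Icc (le_min hc.1 hd.1) (max_le hc.2 hd.2)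
    have hmem : ∀ u ∈ uIcc c d, (u, y) ∈ D := by
      intro u hu
      have hu' := hsub hu
      have huαβ : u ∈ Icc α β := ⟨hu'.1, hu'.2.trans hϑ₁y.2⟩
      have : ϑ₂ (ϑ₁ y) ≤ ϑ₂ u := hanti huαβ hϑ₁y hu'.2
      rw [hinv₂ y ⟨hy1, hy2⟩] at this
      exact hmemD huαβ.1 huαβ.2 hy1 this
    apply ftc_within' (f := fun u => ψ (u, y)) (f' := fun u => ψσ (u, y))
    · intro u hu
      exact (hψσ (u, y) (hmem u hu)).mono fun v hv => hmem v hv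
    · exact (hψσcont.comp ((continuous_id.prodMk continuous_const).continuousOn)
        fun u hu => hmem u hu).intervalIntegrable
  rintro ⟨s, t⟩ hp
  rw [hD] at hp
  obtain ⟨hs1, hs2, ht1, ht2⟩ := hp
  simp only at *
  set a := ϑ₁ t with ha
  have hsmem : s ∈ Icc α β := ⟨hs1, hs2⟩
  have htmem : t ∈ Icc (ϑ₂ β) (ϑ₂ α) := ⟨ht1, ht2.trans (hϑα hsmem)⟩
  have hamem : a ∈ Icc α β := hϑ₁maps t htmem
  have hϑa : ϑ₂ a = t := hinv₂ t htmem
  have hsa : s ≤ a := by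
    refine (hϑanti.le_iff_ge hamem hsmem).mp ?_
    rw [hϑa]; exact ht2
  have hIccsub : Icc s a ⊆ Icc α β := Icc_subset_Icc hs1 hamem.2
  have hcurveD : ∀ {x : ℝ}, x ∈ Icc α β → (x, ϑ₂ x) ∈ D := fun {x} hx =>
    hmemD hx.1 hx.2 (hϑβ hx) le_rfl
  have htle : ∀ {σ : ℝ}, σ ∈ Icc s a → t ≤ ϑ₂ σ := by
    intro σ hσ
    have := hanti (hIccsub hσ) hamem hσ.2
    rwa [hϑa] at this
  -- the key boundary derivative lemma
  have hH : ∀ σ₀ ∈ Icc s a, HasDerivWithinAt (fun σ => ψ (σ, ϑ₂ σ))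
      (ψσ (σ₀, ϑ₂ σ₀) + d₂ σ₀ * ψτ (σ₀, ϑ₂ σ₀)) (Icc s a) σ₀ := by
    intro σ₀ hσ₀
    have hσ₀' : σ₀ ∈ Icc α β := hIccsub hσ₀
    have hB₀ : (σ₀, ϑ₂ σ₀) ∈ D := hcurveD hσ₀'
    rw [hasDerivWithinAt_iff_isLittleO, Asymptotics.isLittleO_iff]
    intro c hc
    set ψσ₀ : ℝ := ψσ (σ₀, ϑ₂ σ₀) with hψσ₀
    set ψτ₀ : ℝ := ψτ (σ₀, ϑ₂ σ₀) with hψτ₀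
    have hden : (0:ℝ) < 2 + |d₂ σ₀| + |ψτ₀| := by positivity
    set ε' : ℝ := min 1 (c / (2 + |d₂ σ₀| + |ψτ₀|)) with hε'
    have hε'pos : 0 < ε' := lt_min one_pos (div_pos hc hden)
    have hε'le1 : ε' ≤ 1 := min_le_left _ _
    have hε'lec : ε' * (2 + |d₂ σ₀| + |ψτ₀|) ≤ c := by
      rw [← le_div_iff₀ hden]; exact min_le_right _ _
    obtain ⟨δ₁, hδ₁pos, hδ₁⟩ := Metric.continuousWithinAt_iff.mp (hψσcont _ hB₀) ε' hε'pos
    obtain ⟨δ₂, hδ₂pos, hδ₂⟩ := Metric.continuousWithinAt_iff.mp (hψτcont _ hB₀) ε' hε'pos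
    set δ : ℝ := min δ₁ δ₂ with hδ
    have hδpos : 0 < δ := lt_min hδ₁pos hδ₂pos
    have hmono : 𝓝[Icc s a] σ₀ ≤ 𝓝[Icc α β] σ₀ := nhdsWithin_mono _ hIccsub
    have hev1 : ∀ᶠ x in 𝓝[Icc α β] σ₀, |ϑ₂ x - ϑ₂ σ₀ - (x - σ₀) * d₂ σ₀| ≤ ε' * |x - σ₀| := by
      have h1 := hasDerivWithinAt_iff_isLittleO.mp (hd₂ σ₀ hσ₀')
      have h2 := Asymptotics.isLittleO_iff.mp h1 hε'pos
      simpa [Real.norm_eq_abs, smul_eq_mul] using h2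
    have hev2 : ∀ᶠ x in 𝓝[Icc α β] σ₀, |ϑ₂ x - ϑ₂ σ₀| < δ := by
      have h1 : ContinuousWithinAt ϑ₂ (Icc α β) σ₀ := (hd₂ σ₀ hσ₀').continuousWithinAt
      have h2 := Metric.tendsto_nhds.mp h1 δ hδpos
      simpa [Real.dist_eq] using h2
    have hev3 : ∀ᶠ x in 𝓝[Icc s a] σ₀, |x - σ₀| < δ :=
      (eventually_abs_sub_lt σ₀ hδpos).filter_mono nhdsWithin_le_nhds
    have hev4 : ∀ᶠ x in 𝓝[Icc s a] σ₀, x ∈ Icc s a := eventually_mem_nhdsWithin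
    filter_upwards [hev1.filter_mono hmono, hev2.filter_mono hmono, hev3, hev4]
      with x h1 h2 h3 hxI
    have hx' : x ∈ Icc α β := hIccsub hxI
    have hLip : |ϑ₂ x - ϑ₂ σ₀| ≤ (|d₂ σ₀| + ε') * |x - σ₀| := by
      have h4 : |ϑ₂ x - ϑ₂ σ₀| ≤ |ϑ₂ x - ϑ₂ σ₀ - (x - σ₀) * d₂ σ₀| + |(x - σ₀) * d₂ σ₀| := by
        calc |ϑ₂ x - ϑ₂ σ₀| = |(ϑ₂ x - ϑ₂ σ₀ - (x - σ₀) * d₂ σ₀) + (x - σ₀) * d₂ σ₀| := by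
              ring_nf
          _ ≤ _ := abs_add_le _ _
      rw [abs_mul] at h4
      nlinarith [abs_nonneg (x - σ₀), abs_nonneg (d₂ σ₀)]
    -- two FTC decompositions depending on the side
    have key : ∃ I₁ I₂ : ℝ, ‖I₁‖ ≤ ε' * |x - σ₀| ∧ ‖I₂‖ ≤ ε' * |ϑ₂ x - ϑ₂ σ₀| ∧
        ψ (x, ϑ₂ x) - ψ (σ₀, ϑ₂ σ₀) = I₁ + (x - σ₀) * ψσ₀ + I₂ + (ϑ₂ x - ϑ₂ σ₀) * ψτ₀ := by
      rcases le_total σ₀ x with hord | hord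
      · -- horizontal at level ϑ₂ x, vertical at σ₀
        have hyx1 : ϑ₂ β ≤ ϑ₂ x := hϑβ hx'
        have hyx2 : ϑ₂ x ≤ ϑ₂ α := hϑα hx'
        have hϑ₁x : ϑ₁ (ϑ₂ x) = x := hinv₁ x hx'
        have hI1 : (∫ u in σ₀..x, ψσ (u, ϑ₂ x)) = ψ (x, ϑ₂ x) - ψ (σ₀, ϑ₂ x) := by
          refine hFTC (ϑ₂ x) hyx1 hyx2 σ₀ ⟨hσ₀'.1, ?_⟩ x ⟨hx'.1, ?_⟩
          · rw [hϑ₁x]; exact hord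
          · rw [hϑ₁x]
        have hϑord : ϑ₂ x ≤ ϑ₂ σ₀ := hanti hσ₀' hx' hord
        have hI2 : (∫ τ in (ϑ₂ σ₀)..(ϑ₂ x), ψτ (σ₀, τ)) = ψ (σ₀, ϑ₂ x) - ψ (σ₀, ϑ₂ σ₀) :=
          vFTC ψ ψτ hψτcont hψτ σ₀ hσ₀' (ϑ₂ σ₀) ⟨hϑβ hσ₀', le_rfl⟩ (ϑ₂ x) ⟨hyx1, hϑord⟩
        have hmem1 : ∀ u ∈ uIcc σ₀ x, (u, ϑ₂ x) ∈ D := by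
          intro u hu
          rw [uIcc_of_le hord] at hu
          exact hmemD (hσ₀'.1.trans hu.1) (hu.2.trans hx'.2) hyx1
            (hanti ⟨hσ₀'.1.trans hu.1, hu.2.trans hx'.2⟩ hx' hu.2)
        have hint1 : IntervalIntegrable (fun u => ψσ (u, ϑ₂ x)) volume σ₀ x :=
          (hψσcont.comp ((continuous_id.prodMk continuous_const).continuousOn)
            fun u hu => hmem1 u hu).intervalIntegrable
        have hmem2 : ∀ τ ∈ uIcc (ϑ₂ σ₀) (ϑ₂ x), (σ₀, τ) ∈ D := by
          intro τ hτ
          rw [uIcc_of_ge hϑord] at hτ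
          exact hmemD hσ₀'.1 hσ₀'.2 (hyx1.trans hτ.1) hτ.2
        have hint2 : IntervalIntegrable (fun τ => ψτ (σ₀, τ)) volume (ϑ₂ σ₀) (ϑ₂ x) :=
          (hψτcont.comp ((Continuous.prodMk_right σ₀).continuousOn)
            fun τ hτ => hmem2 τ hτ).intervalIntegrable
        refine ⟨(∫ u in σ₀..x, ψσ (u, ϑ₂ x)) - (x - σ₀) * ψσ₀,
          (∫ τ in (ϑ₂ σ₀)..(ϑ₂ x), ψτ (σ₀, τ)) - (ϑ₂ x - ϑ₂ σ₀) * ψτ₀, ?_, ?_, by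
            rw [hI1, hI2]; ring⟩
        · have heq : (∫ u in σ₀..x, ψσ (u, ϑ₂ x)) - (x - σ₀) * ψσ₀
              = ∫ u in σ₀..x, (ψσ (u, ϑ₂ x) - ψσ₀) := by
            rw [intervalIntegral.integral_sub hint1 intervalIntegrable_const,
              intervalIntegral.integral_const, smul_eq_mul]
          rw [heq]
          have := intervalIntegral.norm_integral_le_of_norm_le_const
            (f := fun u => ψσ (u, ϑ₂ x) - ψσ₀) (a := σ₀) (b := x) (C := ε') ?_
          · calc ‖∫ u in σ₀..x, (ψσ (u, ϑ₂ x) - ψσ₀)‖ ≤ ε' * |x - σ₀| := this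
              _ = ε' * |x - σ₀| := rfl
          · intro u hu
            rw [uIoc_of_le hord] at hu
            have huI : u ∈ uIcc σ₀ x := by
              rw [uIcc_of_le hord]; exact ⟨hu.1.le, hu.2⟩
            have hdist : dist (u, ϑ₂ x) (σ₀, ϑ₂ σ₀) < δ₁ := by
              rw [Prod.dist_eq]
              refine max_lt ?_ ?_
              · rw [Real.dist_eq]
                calc |u - σ₀| ≤ |x - σ₀| := by
                      rw [abs_of_nonneg (by linarith [hu.1.le] : (0:ℝ) ≤ u - σ₀),
                        abs_of_nonneg (by linarith : (0:ℝ) ≤ x - σ₀)]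
                      linarith [hu.2]
                  _ < δ := h3
                  _ ≤ δ₁ := min_le_left _ _
              · rw [Real.dist_eq]
                exact lt_of_lt_of_le h2 (min_le_left _ _)
            have := hδ₁ (hmem1 u huI) hdist
            rw [Real.dist_eq] at this
            rw [Real.norm_eq_abs]
            exact this.le
        · have heq : (∫ τ in (ϑ₂ σ₀)..(ϑ₂ x), ψτ (σ₀, τ)) - (ϑ₂ x - ϑ₂ σ₀) * ψτ₀
              = ∫ τ in (ϑ₂ σ₀)..(ϑ₂ x), (ψτ (σ₀, τ) - ψτ₀) := by
            rw [intervalIntegral.integral_sub hint2 intervalIntegrable_const,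
              intervalIntegral.integral_const, smul_eq_mul]
          rw [heq]
          have hb := intervalIntegral.norm_integral_le_of_norm_le_const
            (f := fun τ => ψτ (σ₀, τ) - ψτ₀) (a := ϑ₂ σ₀) (b := ϑ₂ x) (C := ε') ?_
          · exact hb
          · intro τ hτ
            rw [uIoc_of_ge hϑord] at hτ
            have hτI : τ ∈ uIcc (ϑ₂ σ₀) (ϑ₂ x) := by
              rw [uIcc_of_ge hϑord]; exact ⟨hτ.1.le, hτ.2⟩
            have hdist : dist (σ₀, τ) (σ₀, ϑ₂ σ₀) < δ₂ := by
              rw [Prod.dist_eq]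
              refine max_lt (by simpa using hδ₂pos) ?_
              rw [Real.dist_eq]
              calc |τ - ϑ₂ σ₀| ≤ |ϑ₂ x - ϑ₂ σ₀| := by
                    rw [abs_of_nonpos (by linarith [hτ.2] : τ - ϑ₂ σ₀ ≤ 0),
                      abs_of_nonpos (by linarith : ϑ₂ x - ϑ₂ σ₀ ≤ 0)]
                    linarith [hτ.1.le]
                _ < δ := h2
                _ ≤ δ₂ := min_le_right _ _
            have := hδ₂ (hmem2 τ hτI) hdist
            rw [Real.dist_eq] at this
            rw [Real.norm_eq_abs]
            exact this.le
      · -- x ≤ σ₀ : horizontal at level ϑ₂ σ₀, vertical at x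
        have hyx1 : ϑ₂ β ≤ ϑ₂ σ₀ := hϑβ hσ₀'
        have hyx2 : ϑ₂ σ₀ ≤ ϑ₂ α := hϑα hσ₀'
        have hϑ₁σ₀ : ϑ₁ (ϑ₂ σ₀) = σ₀ := hinv₁ σ₀ hσ₀'
        have hI1 : (∫ u in σ₀..x, ψσ (u, ϑ₂ σ₀)) = ψ (x, ϑ₂ σ₀) - ψ (σ₀, ϑ₂ σ₀) := by
          refine hFTC (ϑ₂ σ₀) hyx1 hyx2 σ₀ ⟨hσ₀'.1, ?_⟩ x ⟨hx'.1, ?_⟩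
          · rw [hϑ₁σ₀]
          · rw [hϑ₁σ₀]; exact hord
        have hϑord : ϑ₂ σ₀ ≤ ϑ₂ x := hanti hx' hσ₀' hord
        have hI2 : (∫ τ in (ϑ₂ σ₀)..(ϑ₂ x), ψτ (x, τ)) = ψ (x, ϑ₂ x) - ψ (x, ϑ₂ σ₀) :=
          vFTC ψ ψτ hψτcont hψτ x hx' (ϑ₂ σ₀) ⟨hyx1, hϑord⟩ (ϑ₂ x) ⟨hϑβ hx', le_rfl⟩
        have hmem1 : ∀ u ∈ uIcc σ₀ x, (u, ϑ₂ σ₀) ∈ D := by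
          intro u hu
          rw [uIcc_of_ge hord] at hu
          exact hmemD (hx'.1.trans hu.1) (hu.2.trans hσ₀'.2) hyx1
            (hanti ⟨hx'.1.trans hu.1, hu.2.trans hσ₀'.2⟩ hσ₀' hu.2)
        have hint1 : IntervalIntegrable (fun u => ψσ (u, ϑ₂ σ₀)) volume σ₀ x :=
          (hψσcont.comp ((continuous_id.prodMk continuous_const).continuousOn)
            fun u hu => hmem1 u hu).intervalIntegrable
        have hmem2 : ∀ τ ∈ uIcc (ϑ₂ σ₀) (ϑ₂ x), (x, τ) ∈ D := by
          intro τ hτ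
          rw [uIcc_of_le hϑord] at hτ
          exact hmemD hx'.1 hx'.2 (hyx1.trans hτ.1) hτ.2
        have hint2 : IntervalIntegrable (fun τ => ψτ (x, τ)) volume (ϑ₂ σ₀) (ϑ₂ x) :=
          (hψτcont.comp ((Continuous.prodMk_right x).continuousOn)
            fun τ hτ => hmem2 τ hτ).intervalIntegrable
        refine ⟨(∫ u in σ₀..x, ψσ (u, ϑ₂ σ₀)) - (x - σ₀) * ψσ₀,
          (∫ τ in (ϑ₂ σ₀)..(ϑ₂ x), ψτ (x, τ)) - (ϑ₂ x - ϑ₂ σ₀) * ψτ₀, ?_, ?_, by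
            rw [hI1, hI2]; ring⟩
        · have heq : (∫ u in σ₀..x, ψσ (u, ϑ₂ σ₀)) - (x - σ₀) * ψσ₀
              = ∫ u in σ₀..x, (ψσ (u, ϑ₂ σ₀) - ψσ₀) := by
            rw [intervalIntegral.integral_sub hint1 intervalIntegrable_const,
              intervalIntegral.integral_const, smul_eq_mul]
          rw [heq]
          have hb := intervalIntegral.norm_integral_le_of_norm_le_const
            (f := fun u => ψσ (u, ϑ₂ σ₀) - ψσ₀) (a := σ₀) (b := x) (C := ε') ?_
          · exact hb
          · intro u hu
            rw [uIoc_of_ge hord] at hu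
            have huI : u ∈ uIcc σ₀ x := by
              rw [uIcc_of_ge hord]; exact ⟨hu.1.le, hu.2⟩
            have hdist : dist (u, ϑ₂ σ₀) (σ₀, ϑ₂ σ₀) < δ₁ := by
              rw [Prod.dist_eq]
              refine max_lt ?_ (by simpa using hδ₁pos)
              rw [Real.dist_eq]
              calc |u - σ₀| ≤ |x - σ₀| := by
                    rw [abs_of_nonpos (by linarith [hu.2] : u - σ₀ ≤ 0),
                      abs_of_nonpos (by linarith : x - σ₀ ≤ 0)]
                    linarith [hu.1.le]
                _ < δ := h3
                _ ≤ δ₁ := min_le_left _ _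
            have := hδ₁ (hmem1 u huI) hdist
            rw [Real.dist_eq] at this
            rw [Real.norm_eq_abs]
            exact this.le
        · have heq : (∫ τ in (ϑ₂ σ₀)..(ϑ₂ x), ψτ (x, τ)) - (ϑ₂ x - ϑ₂ σ₀) * ψτ₀
              = ∫ τ in (ϑ₂ σ₀)..(ϑ₂ x), (ψτ (x, τ) - ψτ₀) := by
            rw [intervalIntegral.integral_sub hint2 intervalIntegrable_const,
              intervalIntegral.integral_const, smul_eq_mul]
          rw [heq]
          have hb := intervalIntegral.norm_integral_le_of_norm_le_const
            (f := fun τ => ψτ (x, τ) - ψτ₀) (a := ϑ₂ σ₀) (b := ϑ₂ x) (C := ε') ?_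
          · exact hb
          · intro τ hτ
            rw [uIoc_of_le hϑord] at hτ
            have hτI : τ ∈ uIcc (ϑ₂ σ₀) (ϑ₂ x) := by
              rw [uIcc_of_le hϑord]; exact ⟨hτ.1.le, hτ.2⟩
            have hdist : dist (x, τ) (σ₀, ϑ₂ σ₀) < δ₂ := by
              rw [Prod.dist_eq]
              refine max_lt ?_ ?_
              · rw [Real.dist_eq]
                exact lt_of_lt_of_le h3 (min_le_right _ _)
              · rw [Real.dist_eq]
                calc |τ - ϑ₂ σ₀| ≤ |ϑ₂ x - ϑ₂ σ₀| := by
                      rw [abs_of_nonneg (by linarith [hτ.1.le] : (0:ℝ) ≤ τ - ϑ₂ σ₀),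
                        abs_of_nonneg (by linarith : (0:ℝ) ≤ ϑ₂ x - ϑ₂ σ₀)]
                      linarith [hτ.2]
                  _ < δ := h2
                  _ ≤ δ₂ := min_le_right _ _
            have := hδ₂ (hmem2 τ hτI) hdist
            rw [Real.dist_eq] at this
            rw [Real.norm_eq_abs]
            exact this.le
    obtain ⟨I₁, I₂, hI₁, hI₂, hkey⟩ := key
    have hgoal : ψ (x, ϑ₂ x) - ψ (σ₀, ϑ₂ σ₀) - (x - σ₀) • (ψσ₀ + d₂ σ₀ * ψτ₀)
        = I₁ + I₂ + (ϑ₂ x - ϑ₂ σ₀ - (x - σ₀) * d₂ σ₀) * ψτ₀ := by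
      rw [smul_eq_mul]
      rw [sub_eq_iff_eq_add]
      rw [sub_eq_iff_eq_add] at hkey
      rw [hkey]; ring
    rw [hgoal]
    have hb3 : ‖(ϑ₂ x - ϑ₂ σ₀ - (x - σ₀) * d₂ σ₀) * ψτ₀‖ ≤ ε' * |x - σ₀| * |ψτ₀| := by
      rw [Real.norm_eq_abs, abs_mul]
      exact mul_le_mul_of_nonneg_right h1 (abs_nonneg _)
    calc ‖I₁ + I₂ + (ϑ₂ x - ϑ₂ σ₀ - (x - σ₀) * d₂ σ₀) * ψτ₀‖
        ≤ ‖I₁‖ + ‖I₂‖ + ‖(ϑ₂ x - ϑ₂ σ₀ - (x - σ₀) * d₂ σ₀) * ψτ₀‖ := norm_add₃_le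
      _ ≤ ε' * |x - σ₀| + ε' * ((|d₂ σ₀| + ε') * |x - σ₀|) + ε' * |x - σ₀| * |ψτ₀| := by
          refine add_le_add (add_le_add hI₁ (hI₂.trans ?_)) hb3
          exact mul_le_mul_of_nonneg_left hLip hε'pos.le
      _ ≤ c * ‖x - σ₀‖ := by
          rw [Real.norm_eq_abs]
          have h5 : ε' * (2 + |d₂ σ₀| + |ψτ₀|) * |x - σ₀| ≤ c * |x - σ₀| :=
            mul_le_mul_of_nonneg_right hε'lec (abs_nonneg _)
          nlinarith [abs_nonneg (x - σ₀), hε'pos.le, abs_nonneg (d₂ σ₀), abs_nonneg ψτ₀,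
            mul_le_mul_of_nonneg_right hε'le1 (mul_nonneg hε'pos.le (abs_nonneg (x - σ₀)))]
  -- continuity / integrability of the three boundary integrands
  have hcurve_cont : ContinuousOn (fun σ : ℝ => (σ, ϑ₂ σ)) (Icc s a) :=
    continuousOn_id.prodMk (hϑcont.mono hIccsub)
  have hcurve_maps : ∀ σ ∈ Icc s a, (σ, ϑ₂ σ) ∈ D := fun σ hσ => hcurveD (hIccsub hσ)
  have hUc : ContinuousOn (fun σ => ψσ (σ, ϑ₂ σ)) (Icc s a) :=
    hψσcont.comp hcurve_cont hcurve_maps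
  have hVc : ContinuousOn (fun σ => d₂ σ * ψτ (σ, ϑ₂ σ)) (Icc s a) :=
    (hd₂cont.mono hIccsub).mul (hψτcont.comp hcurve_cont hcurve_maps)
  have hWmaps : ∀ σ ∈ Icc s a, (σ, t) ∈ D := fun σ hσ =>
    hmemD (hIccsub hσ).1 (hIccsub hσ).2 ht1 (htle hσ)
  have hWc : ContinuousOn (fun σ => ψσ (σ, t)) (Icc s a) :=
    hψσcont.comp (continuousOn_id.prodMk continuousOn_const) hWmaps
  have hU : IntervalIntegrable (fun σ => ψσ (σ, ϑ₂ σ)) volume s a := by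
    apply ContinuousOn.intervalIntegrable; rwa [uIcc_of_le hsa]
  have hV : IntervalIntegrable (fun σ => d₂ σ * ψτ (σ, ϑ₂ σ)) volume s a := by
    apply ContinuousOn.intervalIntegrable; rwa [uIcc_of_le hsa]
  have hW : IntervalIntegrable (fun σ => ψσ (σ, t)) volume s a := by
    apply ContinuousOn.intervalIntegrable; rwa [uIcc_of_le hsa]
  -- boundary FTC
  have hBdry : (∫ σ in s..a, (ψσ (σ, ϑ₂ σ) + d₂ σ * ψτ (σ, ϑ₂ σ)))
      = ψ (a, t) - ψ (s, ϑ₂ s) := by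
    have := ftc_within (f := fun σ => ψ (σ, ϑ₂ σ))
      (f' := fun σ => ψσ (σ, ϑ₂ σ) + d₂ σ * ψτ (σ, ϑ₂ σ)) hH (hU.add hV) hsa
    simpa only [hϑa] using this
  -- horizontal FTC at level t
  have hHor : (∫ σ in s..a, ψσ (σ, t)) = ψ (a, t) - ψ (s, t) := by
    refine hFTC t ht1 htmem.2 s ⟨hs1, ?_⟩ a ⟨hamem.1, le_rfl⟩
    exact hsa
  -- inner FTC
  have hInner : ∀ σ ∈ uIcc s a, (∫ τ in t..ϑ₂ σ, ψστ (σ, τ)) = ψσ (σ, ϑ₂ σ) - ψσ (σ, t) := by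
    intro σ hσ
    rw [uIcc_of_le hsa] at hσ
    exact vFTC ψσ ψστ hψστcont hψστ σ (hIccsub hσ) t ⟨ht1, htle hσ⟩ (ϑ₂ σ)
      ⟨hϑβ (hIccsub hσ), le_rfl⟩
  have hX : (∫ σ in s..a, ∫ τ in t..ϑ₂ σ, ψστ (σ, τ))
      = ∫ σ in s..a, (ψσ (σ, ϑ₂ σ) - ψσ (σ, t)) :=
    intervalIntegral.integral_congr hInner
  -- final assembly
  rw [hX, intervalIntegral.integral_sub hU hW,
    intervalIntegral.integral_sub hU hV]
  rw [intervalIntegral.integral_add hU hV] at hBdry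
  linarith [hBdry, hHor]
end

section
/- Let a, b, L, ρ > 0, let D be a compact subset of [0,a]×[0,b], and for (s,t) ∈ D set E(s,t) := D ∩ ([s,a]×[t,b]). Let g : D × ℝⁿ × ℝⁿ × ℝⁿ → ℝⁿ be continuous and satisfy |g(σ,τ,Ψ₁,P₁,Q₁) − g(σ,τ,Ψ₂,P₂,Q₂)| ≤ L(|Ψ₁−Ψ₂| + |P₁−P₂| + |Q₁−Q₂|) for all arguments, where |·| is the Euclidean norm on ℝⁿ. Let ψ₀ : D → ℝⁿ be continuous, and for continuous (ψ,P,Q) : D → (ℝⁿ)³ define (𝚿(ψ,P,Q))(s,t) := ψ₀(s,t) + ∬_{E(s,t)} g(σ,τ,ψ(σ,τ),P(σ,τ),Q(σ,τ)) dA(σ,τ). Define the weighted norm ‖f‖_ρ := max_{(s,t)∈D} e^{−ρ(a−s+b−t)} |f(s,t)|. Then for all continuous triples (ψ₁,P₁,Q₁) and (ψ₂,P₂,Q₂) and all (s,t) ∈ D: e^{−ρ(a−s+b−t)} |(𝚿(ψ₁,P₁,Q₁))(s,t) − (𝚿(ψ₂,P₂,Q₂))(s,t)| ≤ L · ((1−e^{−ρa})(1−e^{−ρb})/ρ²)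 · ( ‖ψ₁−ψ₂‖_ρ + ‖P₁−P₂‖_ρ + ‖Q₁−Q₂‖_ρ ). -/
open Set MeasureTheory

lemma expint_aux (ρ s a : ℝ) (hρ : ρ ≠ 0) (h : s ≤ a) :
    ∫ x in Icc s a, Real.exp (ρ*(a-x)) = (Real.exp (ρ*(a-s)) - 1)/ρ := by
  rw [MeasureTheory.integral_Icc_eq_integral_Ioc, ← intervalIntegral.integral_of_le h]
  have h1 : ∀ x, Real.exp (ρ*(a-x)) = Real.exp (ρ*a) * Real.exp ((-ρ)*x) := by
    intro x; rw [← Real.exp_add]; ring_nf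
  simp_rw [h1]
  rw [intervalIntegral.integral_const_mul,
    intervalIntegral.integral_comp_mul_left Real.exp (neg_ne_zero.mpr hρ), integral_exp]
  field_simp
  have e : Real.exp (ρ*a) * Real.exp (-(ρ*a)) = 1 := by rw [← Real.exp_add]; simp
  have hρ' : ρ * (1/ρ) = 1 := by field_simp
  rw [smul_eq_mul]
  linear_combination (-1 : ℝ) * e +
    (-(Real.exp (ρ*a) * (Real.exp (-(ρ * a)) - Real.exp (-(ρ * s))))) * hρ'

/-- The contraction estimate (B.8), in the weighted (Bielecki) norm
`‖f‖_ρ = max_{(s,t)∈D} e^{−ρ(a−s+b−t)}|f(s,t)|`, for the double-integral operator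
`𝚿(ψ,P,Q)(s,t) = ψ₀(s,t) + ∬_{E(s,t)} g(σ,τ,ψ,P,Q) dA`. -/
theorem bielecki_estimate_double_integral_operator
    (n : ℕ) (a b L ρ : ℝ) (ha : 0 < a) (hb : 0 < b) (hL : 0 < L) (hρ : 0 < ρ)
    (D : Set (ℝ × ℝ)) (hDcompact : IsCompact D)
    (hDsub : D ⊆ Icc (0:ℝ) a ×ˢ Icc (0:ℝ) b)
    (g : ℝ × ℝ → EuclideanSpace ℝ (Fin n) → EuclideanSpace ℝ (Fin n) →
        EuclideanSpace ℝ (Fin n) → EuclideanSpace ℝ (Fin n))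
    (hgcont : ContinuousOn
      (fun q : (ℝ × ℝ) × EuclideanSpace ℝ (Fin n) × EuclideanSpace ℝ (Fin n) ×
          EuclideanSpace ℝ (Fin n) => g q.1 q.2.1 q.2.2.1 q.2.2.2)
      (D ×ˢ (univ : Set (EuclideanSpace ℝ (Fin n) × EuclideanSpace ℝ (Fin n) ×
          EuclideanSpace ℝ (Fin n)))))
    (hgLip : ∀ p ∈ D, ∀ Ψ₁ P₁ Q₁ Ψ₂ P₂ Q₂ : EuclideanSpace ℝ (Fin n),
      ‖g p Ψ₁ P₁ Q₁ - g p Ψ₂ P₂ Q₂‖ ≤ L * (‖Ψ₁ - Ψ₂‖ + ‖P₁ - P₂‖ + ‖Q₁ - Q₂‖))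
    (ψ₀ : ℝ × ℝ → EuclideanSpace ℝ (Fin n)) (hψ₀ : ContinuousOn ψ₀ D)
    -- the weighted norm ‖·‖_ρ
    (normρ : (ℝ × ℝ → EuclideanSpace ℝ (Fin n)) → ℝ)
    (hnormρ : ∀ f : ℝ × ℝ → EuclideanSpace ℝ (Fin n),
      normρ f = ⨆ q : D, Real.exp (-ρ * (a - (q : ℝ × ℝ).1 + b - (q : ℝ × ℝ).2)) * ‖f q‖)
    (ψ₁ P₁ Q₁ ψ₂ P₂ Q₂ : ℝ × ℝ → EuclideanSpace ℝ (Fin n))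
    (h₁ : ContinuousOn ψ₁ D ∧ ContinuousOn P₁ D ∧ ContinuousOn Q₁ D)
    (h₂ : ContinuousOn ψ₂ D ∧ ContinuousOn P₂ D ∧ ContinuousOn Q₂ D) :
    ∀ p ∈ D,
      Real.exp (-ρ * (a - p.1 + b - p.2)) *
        ‖(ψ₀ p + ∫ q in D ∩ Icc (p.1, p.2) (a, b), g q (ψ₁ q) (P₁ q) (Q₁ q)) -
          (ψ₀ p + ∫ q in D ∩ Icc (p.1, p.2) (a, b), g q (ψ₂ q) (P₂ q) (Q₂ q))‖ ≤
      L * ((1 - Real.exp (-ρ * a)) * (1 - Real.exp (-ρ * b)) / ρ ^ 2) *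
        (normρ (ψ₁ - ψ₂) + normρ (P₁ - P₂) + normρ (Q₁ - Q₂)) := by
  intro p hp
  obtain ⟨⟨hs0, hsa⟩, ht0, htb⟩ := hDsub hp
  -- weight function
  set w : ℝ × ℝ → ℝ := fun q => Real.exp (-ρ * (a - q.1 + b - q.2)) with hw
  have hwpos : ∀ q : ℝ × ℝ, 0 < w q := fun q => Real.exp_pos _
  -- bound on weighted norm terms
  have haux : ∀ f : ℝ × ℝ → EuclideanSpace ℝ (Fin n), ContinuousOn f D →
      ∀ q ∈ D, w q * ‖f q‖ ≤ normρ f := by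
    intro f hf q hq
    rw [hnormρ]
    have : CompactSpace D := isCompact_iff_compactSpace.mp hDcompact
    have hcont : Continuous (D.restrict (fun q => w q * ‖f q‖)) := by
      apply ContinuousOn.restrict
      exact (Continuous.continuousOn (by fun_prop)).mul hf.norm
    exact le_ciSup (isCompact_range hcont).bddAbove ⟨q, hq⟩
  have hC1 : ContinuousOn (ψ₁ - ψ₂) D := h₁.1.sub h₂.1
  have hC2 : ContinuousOn (P₁ - P₂) D := h₁.2.1.sub h₂.2.1
  have hC3 : ContinuousOn (Q₁ - Q₂) D := h₁.2.2.sub h₂.2.2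
  set S : ℝ := normρ (ψ₁ - ψ₂) + normρ (P₁ - P₂) + normρ (Q₁ - Q₂) with hS
  have hS0 : 0 ≤ S := by
    have h1 := le_trans (by positivity) (haux _ hC1 p hp)
    have h2 := le_trans (by positivity) (haux _ hC2 p hp)
    have h3 := le_trans (by positivity) (haux _ hC3 p hp)
    linarith
  -- the integration domain
  set E : Set (ℝ × ℝ) := D ∩ Icc (p.1, p.2) (a, b) with hEdef
  have hEcomp : IsCompact E := hDcompact.inter_right isClosed_Icc
  have hED : E ⊆ D := inter_subset_left
  -- continuity of integrands on D
  have hFcont : ∀ (ψ P Q : ℝ × ℝ → EuclideanSpace ℝ (Fin n)),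
      ContinuousOn ψ D → ContinuousOn P D → ContinuousOn Q D →
      ContinuousOn (fun q => g q (ψ q) (P q) (Q q)) D := by
    intro ψ P Q hψ hP hQ
    exact hgcont.comp (continuousOn_id.prodMk (hψ.prodMk (hP.prodMk hQ)))
      (fun q hq => ⟨hq, trivial⟩)
  have hF1 : ContinuousOn (fun q => g q (ψ₁ q) (P₁ q) (Q₁ q)) D :=
    hFcont _ _ _ h₁.1 h₁.2.1 h₁.2.2
  have hF2 : ContinuousOn (fun q => g q (ψ₂ q) (P₂ q) (Q₂ q)) D :=
    hFcont _ _ _ h₂.1 h₂.2.1 h₂.2.2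
  have hI1 : IntegrableOn (fun q => g q (ψ₁ q) (P₁ q) (Q₁ q)) E :=
    (hF1.mono hED).integrableOn_compact hEcomp
  have hI2 : IntegrableOn (fun q => g q (ψ₂ q) (P₂ q) (Q₂ q)) E :=
    (hF2.mono hED).integrableOn_compact hEcomp
  -- pointwise bound on the difference of integrands
  have hpt : ∀ q ∈ E,
      ‖g q (ψ₁ q) (P₁ q) (Q₁ q) - g q (ψ₂ q) (P₂ q) (Q₂ q)‖ ≤
        (L * S) * (Real.exp (ρ * (a - q.1)) * Real.exp (ρ * (b - q.2))) := by
    intro q hq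
    have hqD : q ∈ D := hED hq
    have hlip := hgLip q hqD (ψ₁ q) (P₁ q) (Q₁ q) (ψ₂ q) (P₂ q) (Q₂ q)
    have hwinv : Real.exp (ρ * (a - q.1)) * Real.exp (ρ * (b - q.2)) = (w q)⁻¹ := by
      rw [hw, ← Real.exp_add, ← Real.exp_neg]; ring_nf
    have hbound : ‖ψ₁ q - ψ₂ q‖ + ‖P₁ q - P₂ q‖ + ‖Q₁ q - Q₂ q‖ ≤ (w q)⁻¹ * S := by
      have e1 := haux _ hC1 q hqD
      have e2 := haux _ hC2 q hqD
      have e3 := haux _ hC3 q hqD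
      simp only [Pi.sub_apply] at e1 e2 e3
      rw [hS, ← sub_nonneg]
      have hwq := hwpos q
      have : (w q)⁻¹ * S - (‖ψ₁ q - ψ₂ q‖ + ‖P₁ q - P₂ q‖ + ‖Q₁ q - Q₂ q‖) =
          (w q)⁻¹ * ((normρ (ψ₁ - ψ₂) - w q * ‖ψ₁ q - ψ₂ q‖) +
            (normρ (P₁ - P₂) - w q * ‖P₁ q - P₂ q‖) +
            (normρ (Q₁ - Q₂) - w q * ‖Q₁ q - Q₂ q‖)) := by
        field_simp; ring
      rw [this]
      exact mul_nonneg (inv_nonneg.mpr hwq.le) (by linarith)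
    calc ‖g q (ψ₁ q) (P₁ q) (Q₁ q) - g q (ψ₂ q) (P₂ q) (Q₂ q)‖ ≤
        L * (‖ψ₁ q - ψ₂ q‖ + ‖P₁ q - P₂ q‖ + ‖Q₁ q - Q₂ q‖) := hlip
      _ ≤ L * ((w q)⁻¹ * S) := by
          exact mul_le_mul_of_nonneg_left hbound hL.le
      _ = (L * S) * (Real.exp (ρ * (a - q.1)) * Real.exp (ρ * (b - q.2))) := by
          rw [hwinv]; ring
  -- integrability of the exponential weight
  set u : ℝ × ℝ → ℝ := fun q => Real.exp (ρ * (a - q.1)) * Real.exp (ρ * (b - q.2)) with hu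
  have hucont : Continuous u := by fun_prop
  have huE : IntegrableOn u E := hucont.continuousOn.integrableOn_compact hEcomp
  have huIcc : IntegrableOn u (Icc (p.1, p.2) (a, b)) :=
    hucont.continuousOn.integrableOn_compact isCompact_Icc
  -- step 1: norm of integral of difference
  have step1 : ‖(∫ q in E, g q (ψ₁ q) (P₁ q) (Q₁ q)) - ∫ q in E, g q (ψ₂ q) (P₂ q) (Q₂ q)‖ ≤
      (L * S) * ∫ q in E, u q := by
    rw [← integral_sub hI1 hI2]
    calc ‖∫ q in E, (g q (ψ₁ q) (P₁ q) (Q₁ q) - g q (ψ₂ q) (P₂ q) (Q₂ q))‖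
        ≤ ∫ q in E, ‖g q (ψ₁ q) (P₁ q) (Q₁ q) - g q (ψ₂ q) (P₂ q) (Q₂ q)‖ :=
          norm_integral_le_integral_norm _
      _ ≤ ∫ q in E, (L * S) * u q := by
          apply setIntegral_mono_on ((hI1.sub hI2).norm) (huE.const_mul _)
            hEcomp.measurableSet
          exact hpt
      _ = (L * S) * ∫ q in E, u q := integral_const_mul _ _
  -- step 2: enlarge the domain of integration
  have step2 : ∫ q in E, u q ≤ ∫ q in Icc (p.1, p.2) (a, b), u q := by
    apply setIntegral_mono_set huIcc
    · filter_upwards with q using mul_nonneg (Real.exp_pos _).le (Real.exp_pos _).le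
    · exact HasSubset.Subset.eventuallyLE inter_subset_right
  -- step 3: compute the integral over the rectangle
  have step3 : ∫ q in Icc (p.1, p.2) (a, b), u q =
      ((Real.exp (ρ * (a - p.1)) - 1) / ρ) * ((Real.exp (ρ * (b - p.2)) - 1) / ρ) := by
    rw [Icc_prod_eq, hu]
    rw [Measure.volume_eq_prod, setIntegral_prod_mul
      (fun x => Real.exp (ρ * (a - x))) (fun y => Real.exp (ρ * (b - y)))]
    rw [expint_aux ρ p.1 a hρ.ne' hsa, expint_aux ρ p.2 b hρ.ne' htb]
  -- put everything together
  have hwle : w p * (((Real.exp (ρ * (a - p.1)) - 1) / ρ) *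
      ((Real.exp (ρ * (b - p.2)) - 1) / ρ)) ≤
      (1 - Real.exp (-ρ * a)) * (1 - Real.exp (-ρ * b)) / ρ ^ 2 := by
    have hwsplit : w p = Real.exp (-(ρ * (a - p.1))) * Real.exp (-(ρ * (b - p.2))) := by
      rw [hw, ← Real.exp_add]; ring_nf
    rw [hwsplit]
    have key : ∀ c x : ℝ, 0 < c → 0 ≤ x → x ≤ c →
        Real.exp (-(ρ * (c - x))) * ((Real.exp (ρ * (c - x)) - 1) / ρ) =
          (1 - Real.exp (-(ρ * (c - x)))) / ρ := by
      intro c x hc hx hxc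
      rw [mul_div_assoc', mul_sub, ← Real.exp_add, mul_one]
      ring_nf
      rw [Real.exp_zero]; ring
    have h1 : Real.exp (-(ρ * (a - p.1))) * ((Real.exp (ρ * (a - p.1)) - 1) / ρ) =
        (1 - Real.exp (-(ρ * (a - p.1)))) / ρ := key a p.1 ha hs0 hsa
    have h2 : Real.exp (-(ρ * (b - p.2))) * ((Real.exp (ρ * (b - p.2)) - 1) / ρ) =
        (1 - Real.exp (-(ρ * (b - p.2)))) / ρ := key b p.2 hb ht0 htb
    have heq : Real.exp (-(ρ * (a - p.1))) * Real.exp (-(ρ * (b - p.2))) *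
        (((Real.exp (ρ * (a - p.1)) - 1) / ρ) * ((Real.exp (ρ * (b - p.2)) - 1) / ρ)) =
        ((1 - Real.exp (-(ρ * (a - p.1)))) / ρ) * ((1 - Real.exp (-(ρ * (b - p.2)))) / ρ) := by
      rw [← h1, ← h2]; ring
    rw [heq]
    have e1 : Real.exp (-ρ * a) ≤ Real.exp (-(ρ * (a - p.1))) :=
      Real.exp_le_exp.mpr (by nlinarith)
    have e2 : Real.exp (-ρ * b) ≤ Real.exp (-(ρ * (b - p.2))) :=
      Real.exp_le_exp.mpr (by nlinarith)
    have e3 : Real.exp (-(ρ * (a - p.1))) ≤ 1 := Real.exp_le_one_iff.mpr (by nlinarith)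
    have e4 : Real.exp (-(ρ * (b - p.2))) ≤ 1 := Real.exp_le_one_iff.mpr (by nlinarith)
    rw [div_mul_div_comm, ← sq ρ]
    apply div_le_div_of_nonneg_right _ (by positivity)
    have h5 : 0 ≤ 1 - Real.exp (-ρ * a) := by
      have := Real.exp_pos (-ρ * a); linarith
    exact mul_le_mul (by linarith) (by linarith) (by linarith) h5
  rw [add_sub_add_left_eq_sub]
  calc w p * ‖(∫ q in E, g q (ψ₁ q) (P₁ q) (Q₁ q)) -
        ∫ q in E, g q (ψ₂ q) (P₂ q) (Q₂ q)‖
      ≤ w p * ((L * S) * ∫ q in E, u q) :=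
        mul_le_mul_of_nonneg_left step1 (hwpos p).le
    _ ≤ w p * ((L * S) * ∫ q in Icc (p.1, p.2) (a, b), u q) := by
        apply mul_le_mul_of_nonneg_left _ (hwpos p).le
        exact mul_le_mul_of_nonneg_left step2 (by positivity)
    _ = (L * S) * (w p * (((Real.exp (ρ * (a - p.1)) - 1) / ρ) *
          ((Real.exp (ρ * (b - p.2)) - 1) / ρ))) := by rw [step3]; ring
    _ ≤ (L * S) * ((1 - Real.exp (-ρ * a)) * (1 - Real.exp (-ρ * b)) / ρ ^ 2) :=
        mul_le_mul_of_nonneg_left hwle (by positivity)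
    _ = L * ((1 - Real.exp (-ρ * a)) * (1 - Real.exp (-ρ * b)) / ρ ^ 2) * S := by ring
end
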